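/- arXiv:1705.03335 — 9 statements merged into one kernel-verified Lean document; each statement's English description precedes it below -/
import Mathlib

section
/- Let k ≥ 3 be an integer and ε ∈ (0,1). If F ⊆ ℝ does not contain any (k,ε)-AP, then the Hausdorff dimension of F satisfies dim_H F ≤ 1 + log(1 − 1/k) / log(k·⌈1/(2ε)⌉), where ⌈x⌉ denotes the smallest integer greater than or equal to x. (Note that log(1 − 1/k) < 0, so this bound is strictly less than 1.) -/
/-- `b 0, …, b (k-1)` is a `(k, ε)`-AP: there exist `a ∈ ℝ` and `Δ > 0` such that
`|b i - (a + i Δ)| ≤ ε Δ` for every `i < k`. -/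
def IsKAP (k : ℕ) (ε : ℝ) (b : ℕ → ℝ) : Prop :=
  ∃ a Δ : ℝ, 0 < Δ ∧ ∀ i < k, |b i - (a + i * Δ)| ≤ ε * Δ

/-- A set `F ⊆ ℝ` contains a `(k, ε)`-AP if there are points `b 0, …, b (k-1)` of `F`
forming a `(k, ε)`-AP. -/
def ContainsKAP (F : Set ℝ) (k : ℕ) (ε : ℝ) : Prop :=
  ∃ b : ℕ → ℝ, (∀ i < k, b i ∈ F) ∧ IsKAP k ε b

open Classical in
/-- Key combinatorial lemma: of `kM` consecutive subintervals of length `δ`, at most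
`(k-1)M` meet a set `F` with no `(k,ε)`-AP (provided `2εM ≥ 1`). -/
lemma keyA (k M : ℕ) (hk : 3 ≤ k) (hM : 1 ≤ M) (ε : ℝ)
    (hMε : 1 ≤ 2 * ε * M) (F : Set ℝ) (hF : ¬ ContainsKAP F k ε)
    (a δ : ℝ) (hδ : 0 < δ) :
    ((Finset.range (k * M)).filter (fun j : ℕ =>
      (F ∩ Set.Icc (a + (j : ℝ) * δ) (a + ((j : ℝ) + 1) * δ)).Nonempty)).card
      ≤ (k - 1) * M := by
  set N := k * M with hN
  set G := (Finset.range N).filter (fun j : ℕ =>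
      (F ∩ Set.Icc (a + (j : ℝ) * δ) (a + ((j : ℝ) + 1) * δ)).Nonempty) with hG
  have key : ∀ r < M, ∃ i < k, r + i * M ∉ G := by
    intro r hr
    by_contra h
    push_neg at h
    apply hF
    have hsel : ∀ i < k, ∃ x, x ∈ F ∩ Set.Icc (a + ((r + i * M : ℕ) : ℝ) * δ)
        (a + (((r + i * M : ℕ) : ℝ) + 1) * δ) := by
      intro i hi
      have := h i hi
      rw [hG, Finset.mem_filter] at this
      exact this.2
    choose! b hb using hsel
    refine ⟨b, fun i hi => (hb i hi).1, a + r * δ + δ / 2, M * δ, by positivity, ?_⟩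
    intro i hi
    have h2 := (hb i hi).2
    simp only [Set.mem_Icc] at h2
    have hcast : ((r + i * M : ℕ) : ℝ) = (r : ℝ) + (i : ℝ) * (M : ℝ) := by push_cast; ring
    rw [hcast] at h2
    have hM1 : (1 : ℝ) ≤ 2 * ε * M := hMε
    rw [abs_le]
    constructor
    · nlinarith [h2.1, hδ]
    · nlinarith [h2.2, hδ]
  choose! f hf1 hf2 using key
  have hkM : M ≤ N := Nat.le_mul_of_pos_left M (by omega)
  set T := (Finset.range M).image (fun r => r + f r * M) with hT
  have hTcard : T.card = M := by
    rw [hT, Finset.card_image_of_injOn, Finset.card_range]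
    intro r hr s hs hrs
    rw [Finset.mem_coe, Finset.mem_range] at hr hs
    have h1 : (r + f r * M) % M = r := by
      rw [Nat.add_mul_mod_self_right, Nat.mod_eq_of_lt hr]
    have h2 : (s + f s * M) % M = s := by
      rw [Nat.add_mul_mod_self_right, Nat.mod_eq_of_lt hs]
    dsimp only at hrs
    rw [← h1, ← h2, hrs]
  have hdisj : Disjoint G T := by
    rw [Finset.disjoint_right]
    intro x hx
    rw [hT, Finset.mem_image] at hx
    obtain ⟨r, hr, rfl⟩ := hx
    exact hf2 r (Finset.mem_range.mp hr)
  have hsub : G ∪ T ⊆ Finset.range N := by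
    apply Finset.union_subset
    · exact Finset.filter_subset _ _
    · intro x hx
      rw [hT, Finset.mem_image] at hx
      obtain ⟨r, hr, rfl⟩ := hx
      rw [Finset.mem_range] at hr ⊢
      have h1 := hf1 r hr
      have : f r * M ≤ (k - 1) * M := Nat.mul_le_mul_right M (by omega)
      have : r + f r * M < M + (k-1) * M := by omega
      calc r + f r * M < M + (k-1)*M := this
        _ = k * M := by cases k with | zero => omega | succ k' => simp [Nat.succ_sub_one]; ring
  have := Finset.card_le_card hsub
  rw [Finset.card_union_of_disjoint hdisj, Finset.card_range, hTcard] at this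
  have hle : G.card ≤ k * M - M := by omega
  calc G.card ≤ k * M - M := hle
    _ = (k - 1) * M := by
        cases k with
        | zero => omega
        | succ k' => simp [Nat.succ_sub_one]; ring_nf; omega

open Classical in
/-- The indices of the `N^n` subintervals of `[a, a+1]` of generation `n` that meet `F`. -/
noncomputable def Gn (F : Set ℝ) (a : ℝ) (N n : ℕ) : Finset ℕ :=
  (Finset.range (N ^ n)).filter (fun j : ℕ =>
    (F ∩ Set.Icc (a + (j : ℝ) / (N : ℝ) ^ n) (a + ((j : ℝ) + 1) / (N : ℝ) ^ n)).Nonempty)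

lemma Gn_cover (F : Set ℝ) (a : ℝ) (N : ℕ) (hN : 1 ≤ N) (n : ℕ) :
    F ∩ Set.Icc a (a + 1) ⊆ ⋃ j ∈ Gn F a N n,
      Set.Icc (a + (j : ℝ) / (N : ℝ) ^ n) (a + ((j : ℝ) + 1) / (N : ℝ) ^ n) := by
  classical
  intro x hx
  obtain ⟨hxF, hxI⟩ := hx
  have hNn : (0 : ℝ) < (N : ℝ) ^ n := by positivity
  set y : ℝ := x - a with hy
  have hy0 : 0 ≤ y := by simp [hy]; linarith [hxI.1]
  have hy1 : y ≤ 1 := by simp [hy]; linarith [hxI.2]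
  set j : ℕ := min ⌊y * (N : ℝ) ^ n⌋₊ (N ^ n - 1) with hj
  have hjlt : j < N ^ n := by
    have : 1 ≤ N ^ n := Nat.one_le_pow _ _ (by omega)
    omega
  have hmem : x ∈ Set.Icc (a + (j : ℝ) / (N : ℝ) ^ n) (a + ((j : ℝ) + 1) / (N : ℝ) ^ n) := by
    constructor
    · have h1 : (j : ℝ) ≤ y * (N : ℝ) ^ n := by
        rcases le_or_gt (⌊y * (N : ℝ) ^ n⌋₊) (N ^ n - 1) with h | h
        · rw [hj, min_eq_left h]
          exact Nat.floor_le (by positivity)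
        · rw [hj, min_eq_right h.le]
          have h2 : ((N ^ n - 1 : ℕ) : ℝ) ≤ (⌊y * (N : ℝ) ^ n⌋₊ : ℝ) := by
            exact_mod_cast h.le
          calc ((N ^ n - 1 : ℕ) : ℝ) ≤ (⌊y * (N : ℝ) ^ n⌋₊ : ℝ) := h2
            _ ≤ y * (N : ℝ) ^ n := Nat.floor_le (by positivity)
      have : (j : ℝ) / (N : ℝ) ^ n ≤ y := by
        rw [div_le_iff₀ hNn]; linarith
      linarith [this]
    · have h1 : y * (N : ℝ) ^ n ≤ (j : ℝ) + 1 := by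
        rcases le_or_gt (⌊y * (N : ℝ) ^ n⌋₊) (N ^ n - 1) with h | h
        · rw [hj, min_eq_left h]
          exact (Nat.lt_floor_add_one _).le
        · rw [hj, min_eq_right h.le]
          have : ((N ^ n - 1 : ℕ) : ℝ) + 1 = ((N ^ n : ℕ) : ℝ) := by
            have : 1 ≤ N ^ n := Nat.one_le_pow _ _ (by omega)
            push_cast [this]; ring
          rw [this]
          calc y * (N : ℝ) ^ n ≤ 1 * (N : ℝ) ^ n := by nlinarith
            _ = ((N ^ n : ℕ) : ℝ) := by push_cast; ring
      have : y ≤ ((j : ℝ) + 1) / (N : ℝ) ^ n := by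
        rw [le_div_iff₀ hNn]; linarith
      linarith [this]
  have hjG : j ∈ Gn F a N n := by
    rw [Gn, Finset.mem_filter]
    exact ⟨Finset.mem_range.mpr hjlt, ⟨x, hxF, hmem⟩⟩
  exact Set.mem_biUnion hjG hmem

lemma Gn_card (k M : ℕ) (hk : 3 ≤ k) (hM : 1 ≤ M) (ε : ℝ)
    (hMε : 1 ≤ 2 * ε * M) (F : Set ℝ) (hF : ¬ ContainsKAP F k ε) (a : ℝ) (n : ℕ) :
    (Gn F a (k * M) n).card ≤ ((k - 1) * M) ^ n := by
  set N := k * M with hN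
  have hN1 : 1 ≤ N := Nat.one_le_iff_ne_zero.mpr (by positivity)
  classical
  induction n with
  | zero =>
    have h0 := Finset.card_filter_le (Finset.range (N ^ 0)) (fun j : ℕ =>
      (F ∩ Set.Icc (a + (j : ℝ) / (N : ℝ) ^ 0) (a + ((j : ℝ) + 1) / (N : ℝ) ^ 0)).Nonempty)
    rw [Gn]
    simpa using h0
  | succ n ih =>
    have hstep : Gn F a N (n + 1) ⊆ (Gn F a N n).biUnion (fun j =>
        ((Finset.range N).filter (fun t => j * N + t ∈ Gn F a N (n + 1))).image
          (fun t => j * N + t)) := by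
      intro j' hj'
      have hj'' := hj'
      rw [Gn, Finset.mem_filter, Finset.mem_range] at hj''
      obtain ⟨hlt, hne⟩ := hj''
      set j := j' / N with hjdef
      set t := j' % N with htdef
      have hjt : j * N + t = j' := by
        rw [hjdef, htdef, Nat.mul_comm]; exact Nat.div_add_mod j' N
      have htN : t < N := Nat.mod_lt _ (by omega)
      have hjlt : j < N ^ n := by
        rw [hjdef]
        exact Nat.div_lt_of_lt_mul (by rw [← pow_succ']; exact hlt)
      have hNR : (0:ℝ) < (N:ℝ) := by exact_mod_cast Nat.lt_of_lt_of_le Nat.zero_lt_one hN1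
      have hsubI : Set.Icc (a + (j' : ℝ) / (N : ℝ) ^ (n+1)) (a + ((j' : ℝ) + 1) / (N : ℝ) ^ (n+1))
          ⊆ Set.Icc (a + (j : ℝ) / (N : ℝ) ^ n) (a + ((j : ℝ) + 1) / (N : ℝ) ^ n) := by
        apply Set.Icc_subset_Icc
        · have : (j : ℝ) * (N:ℝ) ≤ (j' : ℝ) := by
            have : j * N ≤ j' := by omega
            exact_mod_cast this
          rw [add_le_add_iff_left, div_le_div_iff₀ (by positivity) (by positivity)]
          rw [pow_succ]
          nlinarith [pow_pos hNR n]
        · have : (j' : ℝ) + 1 ≤ ((j : ℝ) + 1) * (N:ℝ) := by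
            have h9 : j' + 1 ≤ (j + 1) * N := by
              have hr : (j + 1) * N = j * N + N := by ring
              omega
            have := (Nat.cast_le (α := ℝ)).mpr h9
            push_cast at this
            linarith
          rw [add_le_add_iff_left, div_le_div_iff₀ (by positivity) (by positivity)]
          rw [pow_succ]
          nlinarith [pow_pos hNR n]
      have hjG : j ∈ Gn F a N n := by
        rw [Gn, Finset.mem_filter, Finset.mem_range]
        refine ⟨hjlt, ?_⟩
        obtain ⟨x, hx1, hx2⟩ := hne
        exact ⟨x, hx1, hsubI hx2⟩
      rw [Finset.mem_biUnion]
      refine ⟨j, hjG, ?_⟩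
      rw [Finset.mem_image]
      exact ⟨t, Finset.mem_filter.mpr ⟨Finset.mem_range.mpr htN, by rw [hjt]; exact hj'⟩, hjt⟩
    calc (Gn F a N (n+1)).card ≤ _ := Finset.card_le_card hstep
      _ ≤ ∑ j ∈ Gn F a N n, (((Finset.range N).filter
            (fun t => j * N + t ∈ Gn F a N (n + 1))).image (fun t => j * N + t)).card :=
          Finset.card_biUnion_le
      _ ≤ ∑ j ∈ Gn F a N n, ((k-1) * M) := by
          apply Finset.sum_le_sum
          intro j hjG
          have hjlt : j < N ^ n := Finset.mem_range.mp (Finset.mem_filter.mp hjG).1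
          calc _ ≤ ((Finset.range N).filter
              (fun t => j * N + t ∈ Gn F a N (n + 1))).card := Finset.card_image_le
            _ ≤ ((Finset.range N).filter (fun t : ℕ =>
                (F ∩ Set.Icc ((a + (j:ℝ)/(N:ℝ)^n) + (t : ℝ) * ((N:ℝ)^(n+1))⁻¹)
                  ((a + (j:ℝ)/(N:ℝ)^n) + ((t : ℝ) + 1) * ((N:ℝ)^(n+1))⁻¹)).Nonempty)).card := by
              apply Finset.card_le_card
              intro t ht
              rw [Finset.mem_filter] at ht ⊢
              refine ⟨ht.1, ?_⟩
              have ht2 := ht.2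
              rw [Gn, Finset.mem_filter] at ht2
              obtain ⟨-, x, hx1, hx2⟩ := ht2
              have hNR : (0:ℝ) < (N:ℝ) := by
                exact_mod_cast Nat.lt_of_lt_of_le Nat.zero_lt_one hN1
              have e1 : a + ((j * N + t : ℕ) : ℝ) / (N : ℝ) ^ (n+1)
                  = (a + (j:ℝ)/(N:ℝ)^n) + (t : ℝ) * ((N:ℝ)^(n+1))⁻¹ := by
                push_cast
                field_simp
                ring
              have e2 : a + (((j * N + t : ℕ) : ℝ) + 1) / (N : ℝ) ^ (n+1)
                  = (a + (j:ℝ)/(N:ℝ)^n) + ((t : ℝ) + 1) * ((N:ℝ)^(n+1))⁻¹ := by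
                push_cast
                field_simp
                ring
              rw [e1, e2] at hx2
              exact ⟨x, hx1, hx2⟩
            _ ≤ (k-1) * M := by
              apply keyA k M hk hM ε hMε F hF
              positivity
      _ = (Gn F a N n).card * ((k-1) * M) := by rw [Finset.sum_const, smul_eq_mul]
      _ ≤ ((k-1) * M) ^ n * ((k-1)*M) := Nat.mul_le_mul_right _ ih
      _ = ((k-1) * M) ^ (n+1) := by rw [pow_succ]

open MeasureTheory in
lemma measure_piece (k M : ℕ) (hk : 3 ≤ k) (hM : 1 ≤ M) (ε : ℝ)
    (hMε : 1 ≤ 2 * ε * M) (F : Set ℝ) (hF : ¬ ContainsKAP F k ε) (a : ℝ) :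
    μH[Real.log (((k-1) * M : ℕ) : ℝ) / Real.log ((k * M : ℕ) : ℝ)]
      (F ∩ Set.Icc a (a + 1)) ≤ 1 := by
  classical
  set N : ℕ := k * M with hNdef
  set K : ℕ := (k - 1) * M with hKdef
  set d : ℝ := Real.log (K : ℝ) / Real.log (N : ℝ) with hddef
  have hN3 : 3 ≤ N := le_trans hk (Nat.le_mul_of_pos_right k (by omega))
  have hK2 : 2 ≤ K := by
    calc 2 = 2 * 1 := by ring
    _ ≤ (k - 1) * M := Nat.mul_le_mul (by omega) hM
  have hNR : (1 : ℝ) < (N : ℝ) := by exact_mod_cast (by omega : 1 < N)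
  have hKR : (1 : ℝ) < (K : ℝ) := by exact_mod_cast (by omega : 1 < K)
  have hlogN : 0 < Real.log (N : ℝ) := Real.log_pos hNR
  have hlogK : 0 < Real.log (K : ℝ) := Real.log_pos hKR
  have hd : 0 < d := div_pos hlogK hlogN
  have hNd : (N : ℝ) ^ d = (K : ℝ) := by
    rw [Real.rpow_def_of_pos (by linarith)]
    rw [hddef, mul_div_assoc', mul_comm, mul_div_assoc, div_self hlogN.ne', mul_one]
    exact Real.exp_log (by linarith)
  have hcalc : ∀ n : ℕ, (((N : ℝ) ^ n)⁻¹) ^ d = (((K : ℝ) ^ n)⁻¹) := by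
    intro n
    have h0 : (0:ℝ) ≤ (N:ℝ)⁻¹ := by positivity
    rw [← inv_pow, ← Real.rpow_natCast ((N : ℝ)⁻¹) n, ← Real.rpow_mul h0,
      mul_comm (n:ℝ) d, Real.rpow_mul h0, Real.inv_rpow (by positivity), hNd,
      Real.rpow_natCast, inv_pow]
  set t : ℕ → ℕ → Set ℝ := fun n i =>
    if i ∈ Gn F a N n then
      Set.Icc (a + (i : ℝ) / (N : ℝ) ^ n) (a + ((i : ℝ) + 1) / (N : ℝ) ^ n)
    else ∅ with ht
  have hlen : ∀ n : ℕ, ∀ i : ℕ,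
      (a + ((i : ℝ) + 1) / (N : ℝ) ^ n) - (a + (i : ℝ) / (N : ℝ) ^ n) = ((N : ℝ) ^ n)⁻¹ := by
    intro n i
    have : ((N : ℝ) ^ n) ≠ 0 := by positivity
    field_simp
    ring
  have hdiam : ∀ n i, i ∈ Gn F a N n →
      Metric.ediam (t n i) = ENNReal.ofReal (((N : ℝ) ^ n)⁻¹) := by
    intro n i hi
    rw [ht]
    dsimp only
    rw [if_pos hi, Real.ediam_Icc, hlen]
  have hbound := MeasureTheory.Measure.hausdorffMeasure_le_liminf_tsum (X := ℝ) d
    (F ∩ Set.Icc a (a + 1))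
    (l := Filter.atTop) (fun n => ENNReal.ofReal (((N : ℝ) ^ n)⁻¹))
    (by
      rw [show (0 : ENNReal) = ENNReal.ofReal 0 by simp]
      apply ENNReal.tendsto_ofReal
      exact tendsto_inv_atTop_zero.comp (tendsto_pow_atTop_atTop_of_one_lt hNR))
    t
    (by
      filter_upwards with n
      intro i
      by_cases hi : i ∈ Gn F a N n
      · rw [hdiam n i hi]
      · rw [ht]; dsimp only; rw [if_neg hi]; simp)
    (by
      filter_upwards with n
      intro x hx
      have h2 := Gn_cover F a N (by omega) n hx
      rw [Set.mem_iUnion₂] at h2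
      obtain ⟨j, hj, hxj⟩ := h2
      rw [Set.mem_iUnion]
      exact ⟨j, by rw [ht]; dsimp only; rw [if_pos hj]; exact hxj⟩)
  refine le_trans hbound ?_
  have hsum : ∀ n : ℕ, (∑' i : ℕ, Metric.ediam (t n i) ^ d) ≤ 1 := by
    intro n
    have hzero : ∀ i ∉ Gn F a N n, Metric.ediam (t n i) ^ d = 0 := by
      intro i hi
      rw [ht]; dsimp only; rw [if_neg hi, Metric.ediam_empty,
        ENNReal.zero_rpow_of_pos hd]
    rw [tsum_eq_sum hzero]
    set c : ENNReal := ENNReal.ofReal (((K : ℝ) ^ n)⁻¹) with hc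
    have hterm : ∀ i ∈ Gn F a N n, Metric.ediam (t n i) ^ d = c := by
      intro i hi
      rw [hdiam n i hi, ENNReal.ofReal_rpow_of_pos (by positivity), hcalc n]
    rw [Finset.sum_congr rfl hterm, Finset.sum_const, nsmul_eq_mul]
    have hcard : ((Gn F a N n).card : ENNReal) ≤ ((K : ENNReal)) ^ n := by
      have h1 := Gn_card k M hk hM ε hMε F hF a n
      calc ((Gn F a N n).card : ENNReal) ≤ ((K ^ n : ℕ) : ENNReal) := by
            exact_mod_cast h1
        _ = (K : ENNReal) ^ n := by push_cast; ring
    have hcval : c = ((K : ENNReal) ^ n)⁻¹ := by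
      rw [hc, ENNReal.ofReal_inv_of_pos (by positivity),
        ENNReal.ofReal_pow (by positivity), ENNReal.ofReal_natCast]
    calc (Gn F a N n).card * c ≤ (K : ENNReal) ^ n * c :=
          mul_le_mul_left hcard c
      _ = 1 := by
          rw [hcval]
          exact ENNReal.mul_inv_cancel (by positivity)
            (ENNReal.pow_ne_top (ENNReal.natCast_ne_top K))
  calc Filter.liminf (fun n => ∑' i : ℕ, Metric.ediam (t n i) ^ d) Filter.atTop
      ≤ Filter.liminf (fun _ => (1 : ENNReal)) Filter.atTop :=
        Filter.liminf_le_liminf (Filter.Eventually.of_forall hsum)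
    _ = 1 := Filter.liminf_const 1

theorem stmt_0 (k : ℕ) (hk : 3 ≤ k) (ε : ℝ) (hε : ε ∈ Set.Ioo (0 : ℝ) 1)
    (F : Set ℝ) (hF : ¬ ContainsKAP F k ε) :
    dimH F ≤ ENNReal.ofReal
      (1 + Real.log (1 - 1 / k) / Real.log (k * ⌈1 / (2 * ε)⌉₊)) := by
  classical
  obtain ⟨hε0, hε1⟩ := hε
  set M : ℕ := ⌈1 / (2 * ε)⌉₊ with hMdef
  have hM : 1 ≤ M := Nat.one_le_iff_ne_zero.mpr (Nat.ceil_pos.mpr (by positivity)).ne'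
  have hMε : 1 ≤ 2 * ε * M := by
    have h1 : 1 / (2 * ε) ≤ (M : ℝ) := Nat.le_ceil _
    have h2 : (0:ℝ) < 2 * ε := by linarith
    rw [div_le_iff₀ h2] at h1
    nlinarith
  set N : ℕ := k * M with hNdef
  set K : ℕ := (k - 1) * M with hKdef
  set d : ℝ := Real.log (K : ℝ) / Real.log (N : ℝ) with hddef
  have hN3 : 3 ≤ N := le_trans hk (Nat.le_mul_of_pos_right k (by omega))
  have hK2 : 2 ≤ K := by
    calc 2 = 2 * 1 := by ring
    _ ≤ (k - 1) * M := Nat.mul_le_mul (by omega) hM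
  have hNR : (1 : ℝ) < (N : ℝ) := by exact_mod_cast (by omega : 1 < N)
  have hKR : (1 : ℝ) < (K : ℝ) := by exact_mod_cast (by omega : 1 < K)
  have hlogN : 0 < Real.log (N : ℝ) := Real.log_pos hNR
  have hlogK : 0 < Real.log (K : ℝ) := Real.log_pos hKR
  have hd : 0 < d := div_pos hlogK hlogN
  -- each unit piece has dimension at most d
  have hpiece : ∀ a : ℝ, dimH (F ∩ Set.Icc a (a + 1)) ≤ ENNReal.ofReal d := by
    intro a
    have h1 := measure_piece k M hk hM ε hMε F hF a
    rw [← hNdef, ← hKdef, ← hddef] at h1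
    have hco : ((d.toNNReal : NNReal) : ℝ) = d := Real.coe_toNNReal d hd.le
    have h2 : MeasureTheory.Measure.hausdorffMeasure (X := ℝ) ((d.toNNReal : NNReal) : ℝ) (F ∩ Set.Icc a (a + 1)) ≠ ⊤ := by
      rw [hco]
      exact (lt_of_le_of_lt h1 ENNReal.one_lt_top).ne
    have h3 := dimH_le_of_hausdorffMeasure_ne_top h2
    refine le_trans h3 ?_
    rw [ENNReal.ofReal]
  -- F is a countable union of unit pieces
  have hcover : F ⊆ ⋃ (z : ℤ), F ∩ Set.Icc (z : ℝ) ((z : ℝ) + 1) := by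
    intro x hx
    exact Set.mem_iUnion.mpr ⟨⌊x⌋, hx, Int.floor_le x, (Int.lt_floor_add_one x).le⟩
  have hdim : dimH F ≤ ENNReal.ofReal d := by
    calc dimH F ≤ dimH (⋃ (z : ℤ), F ∩ Set.Icc (z : ℝ) ((z : ℝ) + 1)) := dimH_mono hcover
      _ = ⨆ (z : ℤ), dimH (F ∩ Set.Icc (z : ℝ) ((z : ℝ) + 1)) := dimH_iUnion _
      _ ≤ ENNReal.ofReal d := iSup_le fun z => hpiece (z : ℝ)
  -- identify d with the stated quantity
  have hkR : (3 : ℝ) ≤ (k : ℝ) := by exact_mod_cast hk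
  have h1k : (0:ℝ) < 1 - 1 / (k : ℝ) := by
    have : 1 / (k : ℝ) ≤ 1 / 3 := by
      apply one_div_le_one_div_of_le <;> linarith
    linarith
  have hKN : (K : ℝ) = (N : ℝ) * (1 - 1 / (k : ℝ)) := by
    rw [hKdef, hNdef]
    push_cast [Nat.cast_sub (by omega : 1 ≤ k)]
    have hk0 : (k : ℝ) ≠ 0 := by linarith
    field_simp
  have hdeq : d = 1 + Real.log (1 - 1 / (k : ℝ)) / Real.log ((k : ℝ) * (M : ℝ)) := by
    have hNcast : ((N : ℕ) : ℝ) = (k : ℝ) * (M : ℝ) := by rw [hNdef]; push_cast; ring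
    rw [hddef, hKN, Real.log_mul (by linarith) h1k.ne', ← hNcast, add_div,
      div_self hlogN.ne']
  rw [← hdeq]
  exact hdim
end

section
/- Let k ≥ 3 be an integer, ε ∈ (0,1), and set s = 1 + log(1 − 1/k) / log(k·⌈1/(2ε)⌉). If F ⊆ ℝ is nonempty and does not contain any (k,ε)-AP, then for every s' > s there exists a constant C > 0 such that for all 0 < r < R and all x ∈ F, the covering number satisfies N(B(x,R) ∩ F, r) ≤ C·(R/r)^{s'}, where B(x,R) denotes the closed ball (interval) of radius R centred at x. (Equivalently, the Assouad dimension of F is at most s.) -/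
/-- `coverN E r` is the smallest number of open sets of diameter at most `r`
needed to cover `E`. -/
noncomputable def coverN {X : Type*} [PseudoEMetricSpace X] (E : Set X) (r : ℝ) : ℕ :=
  sInf {n : ℕ | ∃ U : Fin n → Set X,
    (∀ i, IsOpen (U i) ∧ EMetric.diam (U i) ≤ ENNReal.ofReal r) ∧ E ⊆ ⋃ i, U i}

lemma step_lemma (k m : ℕ) (hk : 3 ≤ k) (hm : 1 ≤ m) (ε : ℝ) (hε : 0 < ε)
    (hmε : 1 ≤ 2 * ε * m) (F : Set ℝ) (hF : ¬ ContainsKAP F k ε)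
    (a δ : ℝ) (hδ : 0 < δ) :
    ∃ S : Finset ℕ, S.card ≤ m * (k - 1) ∧
      F ∩ Set.Icc a (a + (k * m : ℕ) * δ) ⊆
        ⋃ t ∈ S, Set.Icc (a + t * δ) (a + t * δ + δ) := by
  -- for each j < m, some block i is empty
  have key : ∀ j < m, ∃ i < k,
      F ∩ Set.Icc (a + (i * m + j : ℕ) * δ) (a + (i * m + j : ℕ) * δ + δ) = ∅ := by
    intro j hj
    by_contra hcon
    push_neg at hcon
    apply hF
    have hne : ∀ i < k, (F ∩ Set.Icc (a + (i * m + j : ℕ) * δ)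
        (a + (i * m + j : ℕ) * δ + δ)).Nonempty := hcon
    classical
    set b : ℕ → ℝ := fun i =>
      if h : (F ∩ Set.Icc (a + (i * m + j : ℕ) * δ)
        (a + (i * m + j : ℕ) * δ + δ)).Nonempty then h.choose else 0 with hb
    refine ⟨b, ?_, a + j * δ + δ / 2, m * δ, by positivity, ?_⟩
    · intro i hi
      have h := hne i hi
      simp only [hb, dif_pos h]
      exact h.choose_spec.1
    · intro i hi
      have h := hne i hi
      have hmem : b i ∈ Set.Icc (a + (i * m + j : ℕ) * δ)
          (a + (i * m + j : ℕ) * δ + δ) := by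
        simp only [hb, dif_pos h]
        exact h.choose_spec.2
      have hcast : ((i * m + j : ℕ) : ℝ) = i * m + j := by push_cast; ring
      rw [hcast] at hmem
      have h1 : a + j * δ + δ / 2 + i * (m * δ) = a + (i * m + j) * δ + δ / 2 := by ring
      have h2 : |b i - (a + j * δ + δ / 2 + i * (m * δ))| ≤ δ / 2 := by
        rw [h1]
        rw [abs_le]
        constructor <;> [linarith [hmem.1]; linarith [hmem.2]]
      refine h2.trans ?_
      have : δ / 2 ≤ ε * (m * δ) := by
        rw [div_le_iff₀ (by norm_num : (0:ℝ) < 2)] at *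
        nlinarith
      linarith
  -- choose empty blocks
  classical
  choose i hi hempty using key
  set E : Finset ℕ := (Finset.range m).attach.image
    (fun j => i j.1 (Finset.mem_range.mp j.2) * m + j.1) with hE
  refine ⟨Finset.range (k * m) \ E, ?_, ?_⟩
  · have hEsub : E ⊆ Finset.range (k * m) := by
      intro t ht
      rw [hE, Finset.mem_image] at ht
      obtain ⟨⟨j, hj⟩, _, rfl⟩ := ht
      rw [Finset.mem_range]
      have hj' := Finset.mem_range.mp hj
      have := hi j hj'
      calc i j hj' * m + j < i j hj' * m + m := by omega
        _ = (i j hj' + 1) * m := by ring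
        _ ≤ k * m := Nat.mul_le_mul_right m this
    have hEcard : E.card = m := by
      rw [hE]
      rw [Finset.card_image_of_injective _ ?_, Finset.card_attach, Finset.card_range]
      intro ⟨j₁, hj₁⟩ ⟨j₂, hj₂⟩ h
      simp only at h
      have hj₁' := Finset.mem_range.mp hj₁
      have hj₂' := Finset.mem_range.mp hj₂
      have e1 : (i j₁ (Finset.mem_range.mp hj₁) * m + j₁) % m = j₁ := by
        rw [add_comm, Nat.add_mul_mod_self_right, Nat.mod_eq_of_lt hj₁']
      have e2 : (i j₂ (Finset.mem_range.mp hj₂) * m + j₂) % m = j₂ := by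
        rw [add_comm, Nat.add_mul_mod_self_right, Nat.mod_eq_of_lt hj₂']
      rw [h, e2] at e1
      exact Subtype.ext e1.symm
    rw [Finset.card_sdiff_of_subset ?_, Finset.card_range, hEcard]
    · rw [mul_comm m (k - 1), Nat.sub_mul, one_mul]
    · intro t ht
      rw [hE, Finset.mem_image] at ht
      obtain ⟨⟨j, hj⟩, _, rfl⟩ := ht
      rw [Finset.mem_range]
      have hj' := Finset.mem_range.mp hj
      have := hi j hj'
      calc i j hj' * m + j < i j hj' * m + m := by omega
        _ = (i j hj' + 1) * m := by ring
        _ ≤ k * m := Nat.mul_le_mul_right m this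
  · rintro x ⟨hxF, hxI⟩
    -- find subinterval index
    have hkm : 0 < k * m := by positivity
    have hxa : 0 ≤ x - a := by linarith [hxI.1]
    set u := (x - a) / δ with hu
    have hu0 : 0 ≤ u := div_nonneg hxa hδ.le
    have hukm : u ≤ (k * m : ℕ) := by
      rw [hu, div_le_iff₀ hδ]
      linarith [hxI.2]
    set t := min ⌊u⌋₊ (k * m - 1) with ht
    have ht1 : (t : ℝ) ≤ u := by
      rcases le_or_gt ⌊u⌋₊ (k * m - 1) with h | h
      · rw [ht, min_eq_left h]
        exact Nat.floor_le hu0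
      · rw [ht, min_eq_right h.le]
        have h1 : (k * m : ℕ) ≤ ⌊u⌋₊ := by omega
        have h2 : ((k*m : ℕ) : ℝ) ≤ (⌊u⌋₊ : ℝ) := by exact_mod_cast h1
        have h4 : ((⌊u⌋₊ : ℕ) : ℝ) ≤ u := Nat.floor_le hu0
        have h3 : ((k*m - 1 : ℕ) : ℝ) = ((k*m : ℕ) : ℝ) - 1 := by
          rw [Nat.cast_sub (by omega : 1 ≤ k * m)]; norm_num
        rw [h3]
        linarith
    have ht2 : u ≤ (t : ℝ) + 1 := by
      rcases le_or_gt ⌊u⌋₊ (k * m - 1) with h | h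
      · rw [ht, min_eq_left h]
        exact (Nat.lt_floor_add_one u).le
      · rw [ht, min_eq_right h.le]
        have : ((k*m-1:ℕ):ℝ) + 1 = (k*m:ℕ) := by
          rw [Nat.cast_sub (by omega : 1 ≤ k * m)]; norm_num
        rw [this]; exact hukm
    have htlt : t < k * m := by omega
    have hxmem : x ∈ Set.Icc (a + t * δ) (a + t * δ + δ) := by
      constructor
      · have := mul_le_mul_of_nonneg_right ht1 hδ.le
        rw [hu, div_mul_cancel₀ _ hδ.ne'] at this
        linarith
      · have := mul_le_mul_of_nonneg_right ht2 hδ.le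
        rw [hu, div_mul_cancel₀ _ hδ.ne'] at this
        linarith
    have htE : t ∉ E := by
      intro htE
      rw [hE, Finset.mem_image] at htE
      obtain ⟨⟨j, hj⟩, _, heq⟩ := htE
      have hj' := Finset.mem_range.mp hj
      have := hempty j hj'
      rw [heq] at this
      exact Set.eq_empty_iff_forall_notMem.mp this x ⟨hxF, hxmem⟩
    simp only [Set.mem_iUnion]
    exact ⟨t, Finset.mem_sdiff.mpr ⟨Finset.mem_range.mpr htlt, htE⟩, hxmem⟩

lemma iter_lemma (k m : ℕ) (hk : 3 ≤ k) (hm : 1 ≤ m) (ε : ℝ) (hε : 0 < ε)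
    (hmε : 1 ≤ 2 * ε * m) (F : Set ℝ) (hF : ¬ ContainsKAP F k ε)
    (n : ℕ) : ∀ a δ : ℝ, 0 < δ →
    ∃ S : Finset ℝ, S.card ≤ (m * (k - 1)) ^ n ∧
      F ∩ Set.Icc a (a + ((k * m : ℕ) : ℝ) ^ n * δ) ⊆ ⋃ c ∈ S, Set.Icc c (c + δ) := by
  induction n with
  | zero =>
    intro a δ hδ
    refine ⟨{a}, by simp, fun x hx => ?_⟩
    rw [pow_zero, one_mul] at hx
    simp only [Set.mem_iUnion, Finset.mem_singleton]
    exact ⟨a, rfl, hx.2⟩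
  | succ n ih =>
    intro a δ hδ
    have hδ' : 0 < ((k * m : ℕ) : ℝ) ^ n * δ := by positivity
    obtain ⟨S₀, hS₀card, hS₀cov⟩ := step_lemma k m hk hm ε hε hmε F hF a
      (((k * m : ℕ) : ℝ) ^ n * δ) hδ'
    classical
    choose! f hf using fun t : ℕ => ih (a + t * (((k * m : ℕ) : ℝ) ^ n * δ)) δ hδ
    refine ⟨S₀.biUnion (fun t => f t), ?_, ?_⟩
    · calc (S₀.biUnion (fun t => f t)).card ≤ ∑ t ∈ S₀, (f t).card :=
            Finset.card_biUnion_le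
        _ ≤ ∑ _t ∈ S₀, (m * (k - 1)) ^ n := Finset.sum_le_sum (fun t _ => (hf t).1)
        _ = S₀.card * (m * (k - 1)) ^ n := by rw [Finset.sum_const, smul_eq_mul]
        _ ≤ (m * (k - 1)) * (m * (k - 1)) ^ n := by
            exact Nat.mul_le_mul_right _ hS₀card
        _ = (m * (k - 1)) ^ (n + 1) := by ring
    · intro x hx
      have hx' : x ∈ F ∩ Set.Icc a (a + ((k * m : ℕ) : ℝ) * (((k * m : ℕ) : ℝ) ^ n * δ)) := by
        refine ⟨hx.1, ?_⟩
        have : ((k * m : ℕ) : ℝ) * (((k * m : ℕ) : ℝ) ^ n * δ)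
            = ((k * m : ℕ) : ℝ) ^ (n + 1) * δ := by ring
        rw [this]
        exact hx.2
      have := hS₀cov hx'
      simp only [Set.mem_iUnion] at this
      obtain ⟨t, htS₀, hxt⟩ := this
      have hcov := (hf t).2
      have hxin : x ∈ F ∩ Set.Icc (a + t * (((k * m : ℕ) : ℝ) ^ n * δ))
          (a + t * (((k * m : ℕ) : ℝ) ^ n * δ) + ((k * m : ℕ) : ℝ) ^ n * δ) :=
        ⟨hx.1, hxt⟩
      have := hcov hxin
      simp only [Set.mem_iUnion] at this ⊢
      obtain ⟨c, hc, hxc⟩ := this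
      exact ⟨c, Finset.mem_biUnion.mpr ⟨t, htS₀, hc⟩, hxc⟩

lemma cover_le (E : Set ℝ) (S : Finset ℝ) (δ r : ℝ) (hδ : 0 < δ) (hδr : δ < r)
    (hcov : E ⊆ ⋃ c ∈ S, Set.Icc c (c + δ)) (N : ℕ) (hN : S.card ≤ N) :
    coverN E r ≤ N := by
  classical
  set l := S.toList with hl
  have hlen : l.length = S.card := Finset.length_toList S
  apply Nat.sInf_le
  refine ⟨fun i => if h : (i : ℕ) < l.length then
    Metric.ball (l.get ⟨i, h⟩ + δ / 2) (r / 2) else ∅, ?_, ?_⟩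
  · intro i
    by_cases h : (i : ℕ) < l.length
    · simp only [dif_pos h]
      refine ⟨Metric.isOpen_ball, ?_⟩
      apply EMetric.diam_le
      intro x hx y hy
      rw [Metric.mem_ball] at hx hy
      rw [edist_dist]
      apply ENNReal.ofReal_le_ofReal
      have := dist_triangle x (l.get ⟨i, h⟩ + δ / 2) y
      rw [dist_comm (l.get ⟨i, h⟩ + δ / 2) y] at this
      linarith
    · simp only [dif_neg h]
      exact ⟨isOpen_empty, by apply EMetric.diam_le; intro x hx; exact absurd hx (Set.notMem_empty x)⟩
  · intro x hx
    have := hcov hx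
    simp only [Set.mem_iUnion] at this
    obtain ⟨c, hcS, hxc⟩ := this
    have hcl : c ∈ l := Finset.mem_toList.mpr hcS
    obtain ⟨j, hj⟩ := List.mem_iff_get.mp hcl
    have hjN : (j : ℕ) < N := by omega
    rw [Set.mem_iUnion]
    refine ⟨⟨j, hjN⟩, ?_⟩
    have hlt : ((⟨(j : ℕ), hjN⟩ : Fin N) : ℕ) < l.length := j.2
    simp only [dif_pos hlt, Metric.mem_ball]
    have hget : l.get ⟨(j : ℕ), hlt⟩ = c := by
      convert hj using 2
    rw [hget, Real.dist_eq]
    rw [abs_lt]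
    constructor <;> [skip; skip]
    · have := hxc.1; linarith
    · have := hxc.2; linarith

theorem stmt_1 (k : ℕ) (hk : 3 ≤ k) (ε : ℝ) (hε : ε ∈ Set.Ioo (0 : ℝ) 1)
    (s : ℝ) (hs : s = 1 + Real.log (1 - 1 / k) / Real.log (k * ⌈1 / (2 * ε)⌉₊))
    (F : Set ℝ) (hFne : F.Nonempty) (hF : ¬ ContainsKAP F k ε) :
    ∀ s' > s, ∃ C > (0 : ℝ), ∀ r R : ℝ, 0 < r → r < R → ∀ x ∈ F,
      (coverN (Metric.closedBall x R ∩ F) r : ℝ) ≤ C * (R / r) ^ s' := by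
  obtain ⟨hε0, hε1⟩ := hε
  set m := ⌈1 / (2 * ε)⌉₊ with hmdef
  set T := k * m with hTdef
  set P := m * (k - 1) with hPdef
  have hm : 1 ≤ m := Nat.ceil_pos.mpr (by positivity)
  have hmε : 1 ≤ 2 * ε * m := by
    have h1 := Nat.le_ceil (1 / (2 * ε))
    rw [div_le_iff₀ (by positivity)] at h1
    calc (1:ℝ) ≤ (m : ℝ) * (2 * ε) := h1
      _ = 2 * ε * m := by ring
  have hT3 : 3 ≤ T := hk.trans (Nat.le_mul_of_pos_right k hm)
  have hkR : (3:ℝ) ≤ (k:ℝ) := by exact_mod_cast hk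
  have hTR : (3:ℝ) ≤ (T:ℝ) := by exact_mod_cast hT3
  have hT1 : (1:ℝ) < (T:ℝ) := by linarith
  have hTpos : (0:ℝ) < (T:ℝ) := by linarith
  have hP2 : 2 ≤ P := by
    calc 2 = 1 * 2 := by norm_num
      _ ≤ m * (k - 1) := Nat.mul_le_mul hm (by omega)
  have hPR : (2:ℝ) ≤ (P:ℝ) := by exact_mod_cast hP2
  have h1k : (0:ℝ) < 1 - 1 / k := by
    rw [sub_pos, div_lt_one (by linarith)]
    linarith
  have hTcast : ((T:ℕ):ℝ) = (k:ℝ) * (m:ℝ) := by push_cast [hTdef]; ring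
  have hlogT : 0 < Real.log (T:ℝ) := Real.log_pos hT1
  -- P = T^s
  have hPpow : ((P:ℕ):ℝ) = (T:ℝ) ^ s := by
    rw [hs, ← hTcast]
    rw [Real.rpow_add hTpos, Real.rpow_one]
    rw [Real.rpow_def_of_pos hTpos]
    rw [mul_div_cancel₀ _ (ne_of_gt hlogT)]
    rw [Real.exp_log h1k]
    have : ((P:ℕ):ℝ) = (m:ℝ) * ((k:ℝ) - 1) := by
      push_cast [hPdef, Nat.cast_sub (by omega : 1 ≤ k)]
      ring
    rw [this, hTcast]
    field_simp
  have hs0 : 0 < s := by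
    by_contra h
    push_neg at h
    have := Real.rpow_le_one_of_one_le_of_nonpos hT1.le h
    rw [← hPpow] at this
    linarith
  intro s' hs'
  refine ⟨(2 * (T:ℝ)) ^ s', Real.rpow_pos_of_pos (by linarith) s', ?_⟩
  intro r R hr hrR x hx
  have hR : 0 < R := hr.trans hrR
  have hex : ∃ n : ℕ, 2 * R < (T:ℝ) ^ n * r := by
    obtain ⟨n, hn⟩ := pow_unbounded_of_one_lt (2 * R / r) hT1
    exact ⟨n, by rw [div_lt_iff₀ hr] at hn; linarith⟩
  classical
  set n := Nat.find hex with hndef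
  have hn : 2 * R < (T:ℝ) ^ n * r := Nat.find_spec hex
  have hn1 : 1 ≤ n := by
    rcases Nat.eq_zero_or_pos n with h | h
    · exfalso
      have := hn
      rw [h, pow_zero, one_mul] at this
      linarith
    · exact h
  have hmin : ¬ (2 * R < (T:ℝ) ^ (n - 1) * r) := Nat.find_min hex (by omega)
  push_neg at hmin
  set δ := 2 * R / (T:ℝ) ^ n with hδdef
  have hTn : (0:ℝ) < (T:ℝ) ^ n := by positivity
  have hδpos : 0 < δ := by positivity
  have hδr : δ < r := by
    rw [hδdef, div_lt_iff₀ hTn]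
    linarith [hn]
  have hTnδ : (T:ℝ) ^ n * δ = 2 * R := by
    rw [hδdef, mul_div_cancel₀ _ (ne_of_gt hTn)]
  obtain ⟨S, hScard, hScov⟩ := iter_lemma k m hk hm ε hε0 hmε F hF n (x - R) δ hδpos
  have hsub : Metric.closedBall x R ∩ F ⊆
      F ∩ Set.Icc (x - R) (x - R + ((T:ℕ):ℝ) ^ n * δ) := by
    rintro y ⟨hy1, hy2⟩
    rw [Real.closedBall_eq_Icc] at hy1
    refine ⟨hy2, ?_⟩
    rw [hTnδ]
    constructor
    · linarith [hy1.1]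
    · linarith [hy1.2]
  have hcover : coverN (Metric.closedBall x R ∩ F) r ≤ P ^ n :=
    cover_le _ S δ r hδpos hδr (fun y hy => hScov (hsub hy)) (P ^ n) hScard
  -- numeric bound
  have hTn1 : (T:ℝ) ^ (n - 1) ≤ 2 * R / r := by
    rw [le_div_iff₀ hr]
    exact hmin
  have hTnb : (T:ℝ) ^ n ≤ 2 * (T:ℝ) * (R / r) := by
    have e : (T:ℝ) ^ n = (T:ℝ) ^ (n - 1) * (T:ℝ) := by
      rw [← pow_succ]
      congr 1
      omega
    rw [e]
    calc (T:ℝ) ^ (n - 1) * (T:ℝ) ≤ (2 * R / r) * (T:ℝ) :=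
          mul_le_mul_of_nonneg_right hTn1 hTpos.le
      _ = 2 * (T:ℝ) * (R / r) := by ring
  have key : ((P:ℕ):ℝ) ^ n ≤ (2 * (T:ℝ)) ^ s' * (R / r) ^ s' := by
    have e1 : ((P:ℕ):ℝ) ^ n = ((T:ℝ) ^ n) ^ s := by
      rw [hPpow, ← Real.rpow_natCast ((T:ℝ) ^ s) n, ← Real.rpow_mul hTpos.le,
        mul_comm, Real.rpow_mul hTpos.le, Real.rpow_natCast]
    rw [e1]
    have hRr1 : (1:ℝ) ≤ R / r := by
      rw [le_div_iff₀ hr]; linarith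
    calc ((T:ℝ) ^ n) ^ s ≤ (2 * (T:ℝ) * (R / r)) ^ s :=
          Real.rpow_le_rpow (by positivity) hTnb hs0.le
      _ = (2 * (T:ℝ)) ^ s * (R / r) ^ s := Real.mul_rpow (by positivity) (by positivity)
      _ ≤ (2 * (T:ℝ)) ^ s' * (R / r) ^ s' := by
          apply mul_le_mul
          · exact Real.rpow_le_rpow_of_exponent_le (by linarith) hs'.le
          · exact Real.rpow_le_rpow_of_exponent_le hRr1 hs'.le
          · positivity
          · positivity
  calc (coverN (Metric.closedBall x R ∩ F) r : ℝ) ≤ ((P ^ n : ℕ) : ℝ) := by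
        exact_mod_cast hcover
    _ = ((P:ℕ):ℝ) ^ n := by push_cast; ring
    _ ≤ (2 * (T:ℝ)) ^ s' * (R / r) ^ s' := key
end

section
/- Let k ≥ 3 be an integer and ε ∈ (0,1) be such that 1/(2ε) is a positive integer. Suppose F ⊆ ℝ does not contain any (k,ε)-AP. Then for every closed interval I of length R > 0 and every positive integer m, the set I ∩ F can be covered by at most ((k−1)/(2ε))^m closed intervals each of length (2ε/k)^m · R. In particular, N(I ∩ F, r) ≤ ((k−1)/(2ε))^m whenever r ≥ (2ε/k)^m · R. -/
open Set MeasureTheory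
open scoped ENNReal

/-- The basic "window" lemma: for every anchor `a` and gap `Δ > 0`, some window
`[a + jΔ - εΔ, a + jΔ + εΔ]` (j < k) misses `F`. -/
lemma no_window {k : ℕ} {ε : ℝ} {F : Set ℝ} (hF : ¬ ContainsKAP F k ε)
    (a Δ : ℝ) (hΔ : 0 < Δ) :
    ∃ j < k, ∀ x ∈ F, x ∉ Set.Icc (a + j * Δ - ε * Δ) (a + j * Δ + ε * Δ) := by
  by_contra h
  push_neg at h
  apply hF
  choose g hgF hgI using h
  refine ⟨fun i => if hi : i < k then g i hi else 0, fun i hi => by simp [hi, hgF], a, Δ, hΔ, ?_⟩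
  intro i hi
  simp only [hi, dif_pos]
  have h1 := (hgI i hi).1
  have h2 := (hgI i hi).2
  rw [abs_le]
  constructor <;> linarith

lemma exists_cell {u ρ δ : ℝ} {K : ℕ} (hK : 0 < K) (hδ : δ = ρ / K) (hρ : 0 < ρ)
    {e : ℝ} (he : e ∈ Set.Icc u (u + ρ)) :
    ∃ t < K, e ∈ Set.Icc (u + t * δ) (u + t * δ + δ) := by
  have hKR : (0:ℝ) < (K:ℝ) := by exact_mod_cast hK
  have hδ0 : 0 < δ := by rw [hδ]; positivity
  have hKδ : (K:ℝ) * δ = ρ := by rw [hδ]; field_simp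
  obtain ⟨he1, he2⟩ := he
  set q : ℤ := ⌊(e - u) / δ⌋ with hq
  have hq0 : 0 ≤ q := Int.floor_nonneg.2 (div_nonneg (by linarith) hδ0.le)
  have hfl : (q:ℝ) ≤ (e - u)/δ := Int.floor_le _
  have hfu : (e - u)/δ < q + 1 := Int.lt_floor_add_one _
  have h1 : (q:ℝ) * δ ≤ e - u := by
    have := (le_div_iff₀ hδ0).1 hfl; linarith
  have h2 : e - u < ((q:ℝ) + 1) * δ := by
    have := (div_lt_iff₀ hδ0).1 hfu; linarith
  have hKm : ((K - 1 : ℕ) : ℝ) = (K:ℝ) - 1 := by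
    have h1K : (1:ℕ) ≤ K := hK
    push_cast [Nat.cast_sub h1K]; ring
  by_cases hcase : q.toNat ≤ K - 1
  · have hc : ((q.toNat : ℕ) : ℝ) = (q:ℝ) := by exact_mod_cast Int.toNat_of_nonneg hq0
    exact ⟨q.toNat, by omega, by rw [hc]; constructor <;> linarith⟩
  · have hqK : (K : ℤ) ≤ q := by omega
    have hKle : (K:ℝ) ≤ (e - u)/δ := le_trans (by exact_mod_cast hqK) hfl
    have h2' : ρ ≤ e - u := by
      have := (le_div_iff₀ hδ0).1 hKle; linarith [hKδ]
    have heq : e = u + ρ := le_antisymm he2 (by linarith)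
    refine ⟨K - 1, by omega, ?_, ?_⟩ <;> rw [hKm, heq] <;> nlinarith

lemma exists_cell_Ico {Y p : ℝ} (hp : 0 < p) {K : ℕ} {y : ℝ}
    (hy : y ∈ Set.Ico Y (Y + K*p)) : ∃ j < K, y ∈ Set.Ico (Y + j*p) (Y + j*p + p) := by
  obtain ⟨hy1, hy2⟩ := hy
  set q : ℤ := ⌊(y - Y)/p⌋ with hq
  have hq0 : 0 ≤ q := Int.floor_nonneg.2 (div_nonneg (by linarith) hp.le)
  have hfl : (q:ℝ) ≤ (y - Y)/p := Int.floor_le _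
  have hfu : (y - Y)/p < q + 1 := Int.lt_floor_add_one _
  have h1 : (q:ℝ) * p ≤ y - Y := by
    have := (le_div_iff₀ hp).1 hfl; linarith
  have h2 : y - Y < ((q:ℝ) + 1) * p := by
    have := (div_lt_iff₀ hp).1 hfu; linarith
  have hqK : (q:ℝ) < (K:ℝ) := by
    by_contra hcon
    push_neg at hcon
    nlinarith
  have hqKn : q.toNat < K := by
    have : q < (K:ℤ) := by exact_mod_cast hqK
    omega
  have hc : ((q.toNat : ℕ) : ℝ) = (q:ℝ) := by exact_mod_cast Int.toNat_of_nonneg hq0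
  exact ⟨q.toNat, hqKn, by rw [hc]; constructor <;> [linarith; linarith]⟩

section
variable {k n : ℕ} {ε : ℝ} {F : Set ℝ}
variable (hk : 3 ≤ k) (hn : 0 < n) (hε2 : 2 * ε * (n:ℝ) = 1)
  (hF : ¬ ContainsKAP F k ε)

set_option maxHeartbeats 2000000 in
include hk hn hε2 hF in
/-- Base case: one open-interval cover with `(k-1)n` intervals of length `ρ/(kn)`. -/
lemma open_base (u ρ : ℝ) (hρ : 0 < ρ)
    (hnull : volume (F ∩ Set.Icc u (u+ρ)) = 0) :
    ∃ S : Finset ℝ, S.card ≤ (k-1)*n ∧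
      F ∩ Set.Icc u (u+ρ) ⊆ ⋃ x ∈ S, Set.Ioo x (x + ρ/((k:ℝ)*n)) := by
  classical
  set E : Set ℝ := F ∩ Set.Icc u (u+ρ) with hE
  rcases E.eq_empty_or_nonempty with hne | hne
  · exact ⟨∅, by simp, by rw [hne]; simp⟩
  -- basic positivity
  have hkR : (3:ℝ) ≤ (k:ℝ) := by exact_mod_cast hk
  have hnR : (1:ℝ) ≤ (n:ℝ) := by exact_mod_cast hn
  have hknR : (3:ℝ) ≤ (k:ℝ)*(n:ℝ) := by nlinarith
  have hkn0 : (0:ℝ) < (k:ℝ)*(n:ℝ) := by linarith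
  set δ : ℝ := ρ / ((k:ℝ)*n) with hδdef
  have hδ0 : 0 < δ := by rw [hδdef]; positivity
  have hknδ : (k:ℝ)*(n:ℝ)*δ = ρ := by rw [hδdef]; field_simp
  set w : ℝ := ((k:ℝ)*n*δ) / ((k:ℝ)*n - 1) with hwdef
  have hkn1 : (0:ℝ) < (k:ℝ)*n - 1 := by linarith
  have hw0 : 0 < w := by rw [hwdef]; positivity
  have hδw : δ < w := by
    rw [hwdef, lt_div_iff₀ hkn1]; nlinarith
  set p : ℝ := (n:ℝ) * w with hpdef
  have hp0 : 0 < p := by rw [hpdef]; positivity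
  have hkp : (k:ℝ)*p = (k:ℝ)*n*δ + w := by
    rw [hpdef, hwdef]; field_simp; ring
  have hεp : ε * p = w / 2 := by
    rw [hpdef]
    calc ε * ((n:ℝ)*w) = (2*ε*(n:ℝ)) * w / 2 := by ring
    _ = w/2 := by rw [hε2]; ring
  -- the "occupied" position sets
  set A : Set ℝ := ⋃ e ∈ E, Set.Ioo (e - δ) e with hA
  set Aw : Set ℝ := ⋃ e ∈ E, Set.Ioo (e - w) e with hAw
  have memA : ∀ y : ℝ, y ∈ A ↔ (E ∩ Set.Ioo y (y+δ)).Nonempty := by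
    intro y
    simp only [hA, Set.mem_iUnion, Set.mem_Ioo]
    constructor
    · rintro ⟨e, he, h1, h2⟩; exact ⟨e, he, h2, by linarith⟩
    · rintro ⟨e, ⟨he, h1, h2⟩⟩; exact ⟨e, he, by linarith, h1⟩
  have memAw : ∀ y : ℝ, y ∈ Aw ↔ (E ∩ Set.Ioo y (y+w)).Nonempty := by
    intro y
    simp only [hAw, Set.mem_iUnion, Set.mem_Ioo]
    constructor
    · rintro ⟨e, he, h1, h2⟩; exact ⟨e, he, h2, by linarith⟩
    · rintro ⟨e, ⟨he, h1, h2⟩⟩; exact ⟨e, he, by linarith, h1⟩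
  have hAopen : IsOpen A := isOpen_biUnion (fun e _ => isOpen_Ioo)
  have hAwopen : IsOpen Aw := isOpen_biUnion (fun e _ => isOpen_Ioo)
  -- bounds
  have hbddB : BddBelow E := BddBelow.mono Set.inter_subset_right bddBelow_Icc
  have hbddA : BddAbove E := BddAbove.mono Set.inter_subset_right bddAbove_Icc
  set iE : ℝ := sInf E with hiE
  set sE : ℝ := sSup E with hsE
  have hiEu : u ≤ iE := le_csInf hne (fun e he => he.2.1)
  have hsEu : sE ≤ u + ρ := csSup_le hne (fun e he => he.2.2)
  have hEmem : ∀ e ∈ E, iE ≤ e ∧ e ≤ sE := fun e he => ⟨csInf_le hbddB he, le_csSup hbddA he⟩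
  set Y : ℝ := iE - w with hY
  have hAwsub : Aw ⊆ Set.Ico Y (Y + (k:ℝ)*p) := by
    intro y hy
    obtain ⟨e, he, h1, h2⟩ := (memAw y).1 hy
    obtain ⟨hel, heu⟩ := hEmem e he
    constructor
    · rw [hY]; linarith
    · rw [hY, hkp]; linarith
  have hAsub : A ⊆ Set.Ioi (iE - δ) := by
    intro y hy
    obtain ⟨e, he, h1, h2⟩ := (memA y).1 hy
    obtain ⟨hel, _⟩ := hEmem e he
    simp only [Set.mem_Ioi]; linarith
  have hAsubw : A ⊆ Aw := by
    intro y hy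
    obtain ⟨e, he, h1, h2⟩ := (memA y).1 hy
    exact (memAw y).2 ⟨e, he, h1, by linarith⟩
  -- the extension interval
  have hXsub : Set.Ioo Y (iE - δ) ⊆ Aw := by
    intro y hy
    obtain ⟨hy1, hy2⟩ := hy
    have : iE < y + w := by rw [hY] at hy1; linarith
    obtain ⟨e, he, hlt⟩ := (csInf_lt_iff hbddB hne).1 this
    refine (memAw y).2 ⟨e, he, ?_, hlt⟩
    have := (hEmem e he).1
    linarith
  have hXdisj : Disjoint (Set.Ioo Y (iE - δ)) A := by
    rw [Set.disjoint_left]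
    intro y hy hyA
    exact absurd (hAsub hyA) (by simp only [Set.mem_Ioi]; push_neg; exact hy.2.le)
  -- measure estimates
  have m1 : volume A + ENNReal.ofReal (w - δ) ≤ volume Aw := by
    have hXvol : volume (Set.Ioo Y (iE - δ)) = ENNReal.ofReal (w - δ) := by
      rw [Real.volume_Ioo]; congr 1; rw [hY]; ring
    calc volume A + ENNReal.ofReal (w - δ)
        = volume (A ∪ Set.Ioo Y (iE - δ)) := by
          rw [measure_union hXdisj.symm measurableSet_Ioo, hXvol]
    _ ≤ volume Aw := measure_mono (Set.union_subset hAsubw hXsub)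
  have m2 : volume Aw ≤ ENNReal.ofReal (((k:ℝ)-1) * p) := by
    set T : ℕ → Set ℝ := fun j => Set.Ico Y (Y + p) ∩ (fun t => t + (j:ℝ)*p) ⁻¹' Aw with hT
    have hTm : ∀ j, MeasurableSet (T j) :=
      fun j => measurableSet_Ico.inter (hAwopen.measurableSet.preimage (measurable_add_const _))
    have hpt : ∀ t : ℝ, (∑ j ∈ Finset.range k, (T j).indicator (fun _ => (1:ℝ≥0∞)) t)
        ≤ (Set.Ico Y (Y+p)).indicator (fun _ => ((k-1 : ℕ) : ℝ≥0∞)) t := by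
      intro t
      by_cases ht : t ∈ Set.Ico Y (Y+p)
      · obtain ⟨j₀, hj₀k, hj₀⟩ := no_window hF (t + w/2) p hp0
        have hj₀Aw : t + (j₀:ℝ)*p ∉ Aw := by
          intro hmem
          obtain ⟨e, he, h1, h2⟩ := (memAw _).1 hmem
          refine hj₀ e he.1 ⟨?_, ?_⟩
          · have hrw : t + w/2 + (j₀:ℝ)*p - ε*p = t + (j₀:ℝ)*p := by rw [hεp]; ring
            rw [hrw]; linarith
          · have hrw : t + w/2 + (j₀:ℝ)*p + ε*p = t + (j₀:ℝ)*p + w := by rw [hεp]; ring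
            rw [hrw]; linarith
        rw [Set.indicator_of_mem ht]
        have hz : (T j₀).indicator (fun _ => (1:ℝ≥0∞)) t = 0 := by
          apply Set.indicator_of_notMem
          intro hc; exact hj₀Aw hc.2
        calc ∑ j ∈ Finset.range k, (T j).indicator (fun _ => (1:ℝ≥0∞)) t
            = ∑ j ∈ (Finset.range k).erase j₀, (T j).indicator (fun _ => (1:ℝ≥0∞)) t := by
              rw [← Finset.sum_erase_add _ _ (Finset.mem_range.2 hj₀k), hz, add_zero]
        _ ≤ ∑ _j ∈ (Finset.range k).erase j₀, (1:ℝ≥0∞) := by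
              apply Finset.sum_le_sum
              intro j _
              by_cases h : t ∈ T j <;> simp [Set.indicator_of_mem, Set.indicator_of_notMem, h]
        _ = ((k-1 : ℕ) : ℝ≥0∞) := by
              rw [Finset.sum_const, Finset.card_erase_of_mem (Finset.mem_range.2 hj₀k),
                Finset.card_range]
              simp
      · rw [Set.indicator_of_notMem ht]
        have : ∀ j ∈ Finset.range k, (T j).indicator (fun _ => (1:ℝ≥0∞)) t = 0 := by
          intro j _
          apply Set.indicator_of_notMem
          intro hc; exact ht hc.1
        rw [Finset.sum_congr rfl this]
        simp
    have key : ∀ j : ℕ, volume (Aw ∩ Set.Ico (Y + (j:ℝ)*p) (Y + (j:ℝ)*p + p)) = volume (T j) := by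
      intro j
      have hTeq : T j = (fun t => t + (j:ℝ)*p) ⁻¹' (Aw ∩ Set.Ico (Y + (j:ℝ)*p) (Y + (j:ℝ)*p + p)) := by
        ext t
        simp only [hT, Set.mem_inter_iff, Set.mem_preimage, Set.mem_Ico]
        constructor
        · rintro ⟨⟨ht1, ht2⟩, htA⟩; exact ⟨htA, by linarith, by linarith⟩
        · rintro ⟨htA, ht1, ht2⟩; exact ⟨⟨by linarith, by linarith⟩, htA⟩
      rw [hTeq, measure_preimage_add_right]
    have cover : Aw ⊆ ⋃ j ∈ Finset.range k, Aw ∩ Set.Ico (Y + (j:ℝ)*p) (Y + (j:ℝ)*p + p) := by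
      intro y hy
      obtain ⟨j, hjk, hjmem⟩ := exists_cell_Ico hp0 (hAwsub hy)
      exact Set.mem_biUnion (Finset.mem_range.2 hjk) ⟨hy, hjmem⟩
    calc volume Aw ≤ ∑ j ∈ Finset.range k,
          volume (Aw ∩ Set.Ico (Y + (j:ℝ)*p) (Y + (j:ℝ)*p + p)) :=
        (measure_mono cover).trans (measure_biUnion_finset_le _ _)
    _ = ∑ j ∈ Finset.range k, volume (T j) := Finset.sum_congr rfl (fun j _ => key j)
    _ = ∑ j ∈ Finset.range k, ∫⁻ t, (T j).indicator (fun _ => (1:ℝ≥0∞)) t := by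
        refine Finset.sum_congr rfl (fun j _ => ?_)
        rw [lintegral_indicator_const (hTm j), one_mul]
    _ = ∫⁻ t, ∑ j ∈ Finset.range k, (T j).indicator (fun _ => (1:ℝ≥0∞)) t := by
        rw [lintegral_finset_sum]
        intro j _
        exact (measurable_const.indicator (hTm j))
    _ ≤ ∫⁻ t, (Set.Ico Y (Y+p)).indicator (fun _ => ((k-1 : ℕ) : ℝ≥0∞)) t := lintegral_mono hpt
    _ = ((k-1 : ℕ) : ℝ≥0∞) * volume (Set.Ico Y (Y+p)) := lintegral_indicator_const measurableSet_Ico _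
    _ = ENNReal.ofReal (((k:ℝ)-1) * p) := by
        rw [Real.volume_Ico]
        have h1 : ((k-1 : ℕ) : ℝ≥0∞) = ENNReal.ofReal (((k-1:ℕ)):ℝ) := by
          rw [ENNReal.ofReal_natCast]
        have h2 : ((k-1:ℕ):ℝ) = (k:ℝ) - 1 := by
          have : (1:ℕ) ≤ k := by omega
          push_cast [Nat.cast_sub this]; ring
        rw [h1, h2, ← ENNReal.ofReal_mul (by linarith)]
        congr 1
        ring
  have mA : volume A < ENNReal.ofReal ((((k-1)*n : ℕ) + 1 : ℝ) * δ) := by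
    have hcast : (((k-1)*n : ℕ) : ℝ) = ((k:ℝ)-1)*(n:ℝ) := by
      have h1k : (1:ℕ) ≤ k := by omega
      push_cast [Nat.cast_sub h1k]
      ring
    set c : ℝ := ((k:ℝ)-1)*p - (w - δ) with hc
    have hc0 : 0 ≤ c := by rw [hc, hpdef]; nlinarith
    have hsum : ((k:ℝ)-1)*p = (w - δ) + c := by rw [hc]; ring
    have step3 : volume A ≤ ENNReal.ofReal c := by
      have h := m1.trans m2
      rw [hsum, ENNReal.ofReal_add (by linarith) hc0] at h
      exact (ENNReal.add_le_add_iff_right ENNReal.ofReal_ne_top).1 (by rw [add_comm (ENNReal.ofReal (w-δ))] at h; exact h)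
    have step4 : c < (((k-1)*n : ℕ) + 1 : ℝ) * δ := by
      rw [hc, hcast]
      have hpn : (n:ℝ)*δ < p := by rw [hpdef]; nlinarith
      have hexp : ((k:ℝ)-1)*p = (k:ℝ)*p - p := by ring
      have hexp2 : (((k:ℝ)-1)*(n:ℝ) + 1)*δ = (k:ℝ)*(n:ℝ)*δ - (n:ℝ)*δ + δ := by ring
      rw [hexp, hexp2, hkp]
      linarith
    calc volume A ≤ ENNReal.ofReal c := step3
    _ < ENNReal.ofReal ((((k-1)*n : ℕ) + 1 : ℝ) * δ) := by
        apply ENNReal.ofReal_lt_ofReal_iff_of_nonneg hc0 |>.2 step4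
  -- Markov / shift selection
  set N1 : ℕ := (k-1)*n with hN1
  set base : ℕ → ℝ := fun c => u - δ + (c:ℝ)*δ with hbase
  set CS : Finset ℕ := Finset.range (k*n+1) with hCS
  set pre : ℕ → Set ℝ := fun c => (fun s => base c + s) ⁻¹' A with hpre
  have hprem : ∀ c, MeasurableSet (pre c) :=
    fun c => hAopen.measurableSet.preimage (measurable_const_add _)
  set f : ℝ → ℝ≥0∞ := fun s => ∑ c ∈ CS, (pre c).indicator (fun _ => (1:ℝ≥0∞)) s with hf
  have hfm : Measurable f :=
    Finset.measurable_sum _ (fun c _ => measurable_const.indicator (hprem c))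
  have B1 : ∫⁻ s in Set.Ioo (0:ℝ) δ, f s ∂volume ≤ volume A := by
    have e1 : ∫⁻ s in Set.Ioo (0:ℝ) δ, f s ∂volume
        = ∑ c ∈ CS, volume ((pre c) ∩ Set.Ioo 0 δ) := by
      rw [hf, lintegral_finset_sum _ (fun c _ => measurable_const.indicator (hprem c))]
      refine Finset.sum_congr rfl (fun c _ => ?_)
      rw [lintegral_indicator_const (hprem c), one_mul,
        Measure.restrict_apply (hprem c)]
    have e2 : ∀ c : ℕ, volume ((pre c) ∩ Set.Ioo 0 δ)
        = volume (A ∩ Set.Ioo (base c) (base c + δ)) := by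
      intro c
      have heq : (pre c) ∩ Set.Ioo 0 δ
          = (fun s => base c + s) ⁻¹' (A ∩ Set.Ioo (base c) (base c + δ)) := by
        ext s
        simp only [hpre, Set.mem_inter_iff, Set.mem_preimage, Set.mem_Ioo]
        constructor
        · rintro ⟨hA', h1, h2⟩; exact ⟨hA', by linarith, by linarith⟩
        · rintro ⟨hA', h1, h2⟩; exact ⟨hA', by linarith, by linarith⟩
      rw [heq, measure_preimage_add]
    have e3 : ∑ c ∈ CS, volume (A ∩ Set.Ioo (base c) (base c + δ)) ≤ volume A := by
      have hdisj : (CS : Set ℕ).PairwiseDisjoint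
          (fun c => A ∩ Set.Ioo (base c) (base c + δ)) := by
        intro c1 h1 c2 h2 hne12
        apply Set.disjoint_left.2
        intro x hx1 hx2
        rcases lt_or_gt_of_ne hne12 with hlt | hlt
        · have : (c1:ℝ) + 1 ≤ (c2:ℝ) := by exact_mod_cast hlt
          have := hx1.2.2
          have := hx2.2.1
          simp only [hbase] at *
          nlinarith
        · have : (c2:ℝ) + 1 ≤ (c1:ℝ) := by exact_mod_cast hlt
          have := hx2.2.2
          have := hx1.2.1
          simp only [hbase] at *
          nlinarith
      calc ∑ c ∈ CS, volume (A ∩ Set.Ioo (base c) (base c + δ))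
          = volume (⋃ c ∈ CS, A ∩ Set.Ioo (base c) (base c + δ)) := by
            rw [measure_biUnion_finset hdisj
              (fun c _ => hAopen.measurableSet.inter measurableSet_Ioo)]
      _ ≤ volume A := by
            refine measure_mono ?_
            simp only [Set.iUnion_subset_iff]
            exact fun c _ => Set.inter_subset_left
    rw [e1, Finset.sum_congr rfl (fun c _ => e2 c)]
    exact e3
  set Bd : Set ℝ := {s | ((N1:ℝ≥0∞) + 1) ≤ f s} with hBd
  have hBdm : MeasurableSet Bd := measurableSet_le measurable_const hfm
  have B2 : volume (Set.Ioo (0:ℝ) δ ∩ Bd) < ENNReal.ofReal δ := by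
    have h1 : ((N1:ℝ≥0∞)+1) * volume (Set.Ioo (0:ℝ) δ ∩ Bd)
        ≤ ∫⁻ s in Set.Ioo (0:ℝ) δ ∩ Bd, f s ∂volume := by
      rw [← setLIntegral_const]
      exact setLIntegral_mono hfm (fun x hx => hx.2)
    have h2 : ∫⁻ s in Set.Ioo (0:ℝ) δ ∩ Bd, f s ∂volume
        ≤ ∫⁻ s in Set.Ioo (0:ℝ) δ, f s ∂volume :=
      lintegral_mono_set Set.inter_subset_left
    have h4 : volume A < ((N1:ℝ≥0∞)+1) * ENNReal.ofReal δ := by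
      have : ENNReal.ofReal ((((k-1)*n : ℕ) + 1 : ℝ) * δ) = ((N1:ℝ≥0∞)+1) * ENNReal.ofReal δ := by
        rw [ENNReal.ofReal_mul (by positivity)]
        rw [show ((((k-1)*n : ℕ) : ℝ) + 1) = ((N1+1:ℕ):ℝ) by rw [hN1]; push_cast; ring]
        rw [ENNReal.ofReal_natCast]
        push_cast
        ring
      rw [← this]
      exact mA
    have := (h1.trans (h2.trans B1)).trans_lt h4
    have hN1top : ((N1:ℝ≥0∞)+1) ≠ ⊤ := by simp
    have hN10 : ((N1:ℝ≥0∞)+1) ≠ 0 := by simp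
    exact lt_of_mul_lt_mul_left' this
  set G : Set ℝ := Set.Ioo (0:ℝ) δ \ Bd with hG
  have hGvol : volume G ≠ 0 := by
    intro h0
    have hsplit : volume (Set.Ioo (0:ℝ) δ)
        ≤ volume G + volume (Set.Ioo (0:ℝ) δ ∩ Bd) := by
      refine (measure_mono ?_).trans (measure_union_le _ _)
      intro x hx
      by_cases hxB : x ∈ Bd
      · exact Or.inr ⟨hx, hxB⟩
      · exact Or.inl ⟨hx, hxB⟩
    rw [h0, zero_add, Real.volume_Ioo, sub_zero] at hsplit
    exact absurd (hsplit.trans_lt B2) (lt_irrefl _)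
  set Bg : Set ℝ := ⋃ c ∈ CS, (fun s => base c + s) ⁻¹' E with hBg
  have hBgnull : volume Bg = 0 := by
    obtain ⟨Gm, hGm1, hGm2, hGm3⟩ := exists_measurable_superset_of_null hnull
    have hsub : Bg ⊆ ⋃ c ∈ CS, (fun s => base c + s) ⁻¹' Gm := by
      refine Set.iUnion₂_mono (fun c _ => ?_)
      exact Set.preimage_mono hGm1
    refine measure_mono_null hsub ?_
    refine le_antisymm ?_ zero_le
    calc volume (⋃ c ∈ CS, (fun s => base c + s) ⁻¹' Gm)
        ≤ ∑ c ∈ CS, volume ((fun s => base c + s) ⁻¹' Gm) :=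
          measure_biUnion_finset_le _ _
    _ = 0 := by
        refine Finset.sum_eq_zero (fun c _ => ?_)
        rw [measure_preimage_add]
        exact hGm3
  have hGBg : (G \ Bg).Nonempty := by
    apply nonempty_of_measure_ne_zero (μ := volume)
    rw [measure_diff_null hBgnull]
    exact hGvol
  obtain ⟨s₀, hs₀G, hs₀Bg⟩ := hGBg
  have hs₀Ioo : s₀ ∈ Set.Ioo (0:ℝ) δ := hs₀G.1
  have hs₀f : f s₀ = (((CS.filter (fun c => base c + s₀ ∈ A)).card : ℕ) : ℝ≥0∞) := by
    simp only [hf]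
    have : ∀ c ∈ CS, (pre c).indicator (fun _ => (1:ℝ≥0∞)) s₀
        = if base c + s₀ ∈ A then 1 else 0 := by
      intro c _
      simp [hpre, Set.indicator_apply]
    rw [Finset.sum_congr rfl this, Finset.sum_boole]
  have hcard : (CS.filter (fun c => base c + s₀ ∈ A)).card ≤ N1 := by
    by_contra hcon
    push_neg at hcon
    apply hs₀G.2
    show ((N1:ℝ≥0∞) + 1) ≤ f s₀
    rw [hs₀f]
    have h5 : N1 + 1 ≤ (CS.filter (fun c => base c + s₀ ∈ A)).card := hcon
    calc ((N1:ℝ≥0∞) + 1) = ((N1 + 1 : ℕ) : ℝ≥0∞) := by push_cast; ring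
    _ ≤ _ := by exact_mod_cast h5
  refine ⟨(CS.filter (fun c => base c + s₀ ∈ A)).image (fun c => base c + s₀),
    le_trans Finset.card_image_le hcard, ?_⟩
  intro e he
  have heI : e ∈ Set.Icc u (u+ρ) := he.2
  have hegrid : ∀ c ∈ CS, base c + s₀ ≠ e := by
    intro c hc hcon
    exact hs₀Bg (Set.mem_biUnion hc (by simp only [Set.mem_preimage]; rw [hcon]; exact he))
  set v : ℝ := e - (u - δ + s₀) with hv
  have hv0 : 0 < v := by
    have := heI.1
    have := hs₀Ioo.2
    rw [hv]; linarith
  have hvK : v < ((k*n+1 : ℕ):ℝ)*δ := by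
    have h6 := heI.2
    have h7 := hs₀Ioo.1
    have : e - u ≤ ρ := by linarith
    rw [hv]
    push_cast
    nlinarith [hknδ]
  set q : ℤ := ⌊v/δ⌋ with hq
  have hq0 : 0 ≤ q := Int.floor_nonneg.2 (div_nonneg hv0.le hδ0.le)
  have hfl : (q:ℝ) ≤ v/δ := Int.floor_le _
  have hfu : v/δ < q + 1 := Int.lt_floor_add_one _
  have h1 : (q:ℝ) * δ ≤ v := by
    have := (le_div_iff₀ hδ0).1 hfl; linarith
  have h2 : v < ((q:ℝ) + 1) * δ := by
    have := (div_lt_iff₀ hδ0).1 hfu; linarith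
  have hqK : (q:ℝ) < ((k*n+1 : ℕ):ℝ) := by
    by_contra hcon
    push_neg at hcon
    nlinarith
  have hqKn : q.toNat < k*n+1 := by
    have : q < ((k*n+1 : ℕ):ℤ) := by exact_mod_cast hqK
    omega
  set c0 : ℕ := q.toNat with hc0
  have hc0CS : c0 ∈ CS := Finset.mem_range.2 hqKn
  have hcast0 : ((c0:ℕ):ℝ) = (q:ℝ) := by exact_mod_cast Int.toNat_of_nonneg hq0
  have hvne : v ≠ (c0:ℝ)*δ := by
    intro hcon
    apply hegrid c0 hc0CS
    rw [hbase]
    simp only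
    rw [hv] at hcon
    linarith [hcon]
  have hestrict : e ∈ Set.Ioo (base c0 + s₀) (base c0 + s₀ + δ) := by
    constructor
    · rw [hbase]
      simp only
      rw [hcast0]
      have : (q:ℝ)*δ < v := lt_of_le_of_ne h1 (by rw [← hcast0]; exact fun hcc => hvne hcc.symm)
      rw [hv] at this
      linarith
    · rw [hbase]
      simp only
      rw [hcast0]
      rw [hv] at h2
      linarith
  have hbc0A : base c0 + s₀ ∈ A := (memA _).2 ⟨e, he, hestrict⟩
  apply Set.mem_biUnion (x := base c0 + s₀)
  · exact Finset.mem_image.2 ⟨c0, Finset.mem_filter.2 ⟨hc0CS, hbc0A⟩, rfl⟩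
  · exact hestrict
end

section
variable {k n : ℕ} {ε : ℝ} {F : Set ℝ}
variable (hk : 3 ≤ k) (hn : 0 < n) (hε2 : 2 * ε * (n:ℝ) = 1)
  (hF : ¬ ContainsKAP F k ε)

include hk hn hε2 hF in
/-- One level of subdivision: `F ∩ [u, u+ρ]` is covered by at most `(k-1)n` closed
cells of length `ρ/(kn)`. -/
lemma cell_decomp (u ρ : ℝ) (hρ : 0 < ρ) :
    ∃ cells : Finset ℝ, cells.card ≤ (k-1)*n ∧
      F ∩ Set.Icc u (u+ρ) ⊆ ⋃ x ∈ cells, Set.Icc x (x + ρ/((k:ℝ)*n)) := by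
  classical
  have hkn : 0 < k * n := by positivity
  have hknR : (0:ℝ) < (k:ℝ)*(n:ℝ) := by
    have : (0:ℝ) < (k:ℝ) := by exact_mod_cast (by omega : 0 < k)
    have : (0:ℝ) < (n:ℝ) := by exact_mod_cast hn
    positivity
  set δ : ℝ := ρ / ((k:ℝ)*n) with hδdef
  have hδ : δ = ρ / ((k*n : ℕ):ℝ) := by push_cast; rfl
  have hδ0 : 0 < δ := by rw [hδdef]; positivity
  have hεnδ : ε * ((n:ℝ) * δ) = δ/2 := by
    have : ε * (n:ℝ) = 1/2 := by linarith
    calc ε * ((n:ℝ)*δ) = (ε * (n:ℝ)) * δ := by ring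
    _ = δ/2 := by rw [this]; ring
  -- for each column i < n, pick the empty cell
  have H : ∀ i, i < n → ∃ j < k, ∀ x ∈ F,
      x ∉ Set.Icc (u + (i + j*n)*δ) (u + (i + j*n)*δ + δ) := by
    intro i _
    obtain ⟨j, hj, hj2⟩ := no_window hF (u + i*δ + δ/2) ((n:ℝ)*δ) (by positivity)
    refine ⟨j, hj, fun x hx => ?_⟩
    have := hj2 x hx
    have e1 : u + i*δ + δ/2 + (j:ℝ) * ((n:ℝ)*δ) - ε * ((n:ℝ)*δ) = u + ((i:ℝ) + (j:ℝ)*(n:ℝ))*δ := by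
      rw [hεnδ]; ring
    have e2 : u + i*δ + δ/2 + (j:ℝ) * ((n:ℝ)*δ) + ε * ((n:ℝ)*δ) = u + ((i:ℝ) + (j:ℝ)*(n:ℝ))*δ + δ := by
      rw [hεnδ]; ring
    rw [e1, e2] at this
    intro hmem
    exact this (by push_cast at hmem ⊢; exact hmem)
  have H' : ∃ bad : ℕ → ℕ, ∀ i < n, bad i < k ∧ ∀ x ∈ F,
      x ∉ Set.Icc (u + (i + bad i*n)*δ) (u + (i + bad i*n)*δ + δ) := by
    choose f hf1 hf2 using H
    exact ⟨fun i => if h : i < n then f i h else 0,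
      fun i hi => by simp only [dif_pos hi]; exact ⟨hf1 i hi, hf2 i hi⟩⟩
  obtain ⟨bad, hbad⟩ := H'
  refine ⟨(Finset.range n).biUnion
      (fun i => ((Finset.range k).filter (fun j => j ≠ bad i)).image
        (fun j : ℕ => u + ((i:ℝ) + (j:ℝ)*(n:ℝ))*δ)), ?_, ?_⟩
  · calc _ ≤ ∑ i ∈ Finset.range n,
        (((Finset.range k).filter (fun j => j ≠ bad i)).image
          (fun j : ℕ => u + ((i:ℝ) + (j:ℝ)*(n:ℝ))*δ)).card := Finset.card_biUnion_le
    _ ≤ ∑ i ∈ Finset.range n, (k-1) := by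
        apply Finset.sum_le_sum
        intro i hi
        calc _ ≤ ((Finset.range k).filter (fun j => j ≠ bad i)).card :=
              Finset.card_image_le
        _ ≤ ((Finset.range k).erase (bad i)).card := by
              apply Finset.card_le_card
              intro j hj
              simp only [Finset.mem_filter, Finset.mem_range] at hj
              exact Finset.mem_erase.2 ⟨hj.2, Finset.mem_range.2 hj.1⟩
        _ = k - 1 := by
              rw [Finset.card_erase_of_mem (Finset.mem_range.2 (hbad i (Finset.mem_range.1 hi)).1)]
              simp
    _ = (k-1)*n := by rw [Finset.sum_const]; simp [Nat.mul_comm]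
  · rintro e ⟨heF, heI⟩
    obtain ⟨t, ht, htmem⟩ := exists_cell hkn hδ hρ heI
    set i := t % n with hi
    set j := t / n with hj
    have hin : i < n := Nat.mod_lt _ hn
    have hjk : j < k := by
      rw [hj]
      exact Nat.div_lt_of_lt_mul (by rw [Nat.mul_comm] at ht; exact ht)
    have htij : t = i + j * n := by
      rw [hi, hj, Nat.add_comm]
      exact (Nat.div_add_mod' t n).symm
    have hcast : ((t:ℕ):ℝ) = (i:ℝ) + (j:ℝ)*(n:ℝ) := by
      rw [htij]; push_cast; ring
    rw [hcast] at htmem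
    have hjbad : j ≠ bad i := by
      intro hcon
      apply (hbad i hin).2 e heF
      rw [← hcon]
      exact_mod_cast htmem
    apply Set.mem_biUnion (x := u + ((i:ℝ) + (j:ℝ)*(n:ℝ))*δ)
    · apply Finset.mem_biUnion.2
      exact ⟨i, Finset.mem_range.2 hin,
        Finset.mem_image.2 ⟨j, Finset.mem_filter.2 ⟨Finset.mem_range.2 hjk, hjbad⟩, rfl⟩⟩
    · exact htmem


include hk hn hε2 hF in
lemma closed_cover : ∀ m : ℕ, ∀ u ρ : ℝ, 0 < ρ →
    ∃ S : Finset ℝ, S.card ≤ ((k-1)*n)^m ∧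
      F ∩ Set.Icc u (u+ρ) ⊆ ⋃ x ∈ S, Set.Icc x (x + ρ/((k:ℝ)*n)^m) := by
  classical
  intro m
  induction m with
  | zero =>
    intro u ρ hρ
    refine ⟨{u}, by simp, ?_⟩
    intro e he
    simp only [pow_zero, div_one, Finset.mem_singleton, Set.mem_iUnion]
    exact ⟨u, by simpa using he.2⟩
  | succ m ih =>
    intro u ρ hρ
    have hknR : (0:ℝ) < (k:ℝ)*(n:ℝ) := by
      have h1 : (0:ℝ) < (k:ℝ) := by exact_mod_cast (by omega : 0 < k)
      have h2 : (0:ℝ) < (n:ℝ) := by exact_mod_cast hn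
      positivity
    set δ : ℝ := ρ / ((k:ℝ)*n) with hδdef
    have hδ0 : 0 < δ := by rw [hδdef]; positivity
    obtain ⟨cells, hcard, hcover⟩ := cell_decomp hk hn hε2 hF u ρ hρ
    have Hx : ∀ x ∈ cells, ∃ Sx : Finset ℝ, Sx.card ≤ ((k-1)*n)^m ∧
        F ∩ Set.Icc x (x+δ) ⊆ ⋃ y ∈ Sx, Set.Icc y (y + δ/((k:ℝ)*n)^m) :=
      fun x _ => ih x δ hδ0
    choose! g hg1 hg2 using Hx
    refine ⟨cells.biUnion g, ?_, ?_⟩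
    · calc _ ≤ ∑ x ∈ cells, (g x).card := Finset.card_biUnion_le
      _ ≤ ∑ _x ∈ cells, ((k-1)*n)^m := Finset.sum_le_sum (fun x hx => hg1 x hx)
      _ = cells.card * ((k-1)*n)^m := by rw [Finset.sum_const]; ring
      _ ≤ ((k-1)*n) * ((k-1)*n)^m := Nat.mul_le_mul_right _ hcard
      _ = ((k-1)*n)^(m+1) := by rw [pow_succ]; ring
    · intro e he
      have := hcover he
      simp only [Set.mem_iUnion] at this
      obtain ⟨x, hx, hex⟩ := this
      have : e ∈ ⋃ y ∈ g x, Set.Icc y (y + δ/((k:ℝ)*n)^m) := hg2 x hx ⟨he.1, hex⟩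
      simp only [Set.mem_iUnion] at this ⊢
      obtain ⟨y, hy, hey⟩ := this
      refine ⟨y, Finset.mem_biUnion.2 ⟨x, hx, hy⟩, ?_⟩
      have : δ/((k:ℝ)*n)^m = ρ/((k:ℝ)*n)^(m+1) := by
        rw [hδdef, div_div, ← pow_succ']
      rwa [this] at hey


include hk hn hε2 hF in
lemma E_null (u ρ : ℝ) (hρ : 0 < ρ) : volume (F ∩ Set.Icc u (u+ρ)) = 0 := by
  by_contra h0
  have hkR : (3:ℝ) ≤ (k:ℝ) := by exact_mod_cast hk
  have hnR : (1:ℝ) ≤ (n:ℝ) := by exact_mod_cast hn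
  have hkn0 : (0:ℝ) < (k:ℝ)*(n:ℝ) := by nlinarith
  set v : ℝ≥0∞ := volume (F ∩ Set.Icc u (u+ρ)) with hv
  have hvfin : v ≤ ENNReal.ofReal ρ := by
    calc v ≤ volume (Set.Icc u (u+ρ)) := measure_mono Set.inter_subset_right
    _ = ENNReal.ofReal ρ := by rw [Real.volume_Icc]; congr 1; ring
  have hvne : v ≠ ⊤ := by
    intro hcon
    rw [hcon] at hvfin
    exact absurd hvfin (by simp)
  have hvpos : 0 < v.toReal := ENNReal.toReal_pos h0 hvne
  set q : ℝ := (((k-1)*n : ℕ) : ℝ) / ((k:ℝ)*(n:ℝ)) with hq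
  have hcast : (((k-1)*n : ℕ) : ℝ) = ((k:ℝ)-1)*(n:ℝ) := by
    have h1k : (1:ℕ) ≤ k := by omega
    push_cast [Nat.cast_sub h1k]; ring
  have hq0 : 0 ≤ q := by
    rw [hq]; positivity
  have hq1 : q < 1 := by
    rw [hq, div_lt_one hkn0, hcast]
    nlinarith
  obtain ⟨m, hm⟩ := exists_pow_lt_of_lt_one (by positivity : (0:ℝ) < v.toReal / ρ) hq1
  obtain ⟨S, hcard, hcover⟩ := closed_cover hk hn hε2 hF m u ρ hρ
  have hbound : v ≤ ENNReal.ofReal (ρ * q^m) := by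
    calc v ≤ volume (⋃ x ∈ S, Set.Icc x (x + ρ/((k:ℝ)*n)^m)) := measure_mono hcover
    _ ≤ ∑ x ∈ S, volume (Set.Icc x (x + ρ/((k:ℝ)*n)^m)) := measure_biUnion_finset_le _ _
    _ = ∑ _x ∈ S, ENNReal.ofReal (ρ/((k:ℝ)*n)^m) := by
        refine Finset.sum_congr rfl (fun x _ => ?_)
        rw [Real.volume_Icc]; congr 1; ring
    _ = (S.card : ℝ≥0∞) * ENNReal.ofReal (ρ/((k:ℝ)*n)^m) := by
        rw [Finset.sum_const, nsmul_eq_mul]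
    _ ≤ ((((k-1)*n)^m : ℕ) : ℝ≥0∞) * ENNReal.ofReal (ρ/((k:ℝ)*n)^m) := by
        apply mul_le_mul_left
        exact_mod_cast hcard
    _ = ENNReal.ofReal ((((k-1)*n)^m : ℕ) * (ρ/((k:ℝ)*n)^m)) := by
        rw [ENNReal.ofReal_mul (by positivity)]
        congr 1
        rw [ENNReal.ofReal_natCast]
    _ = ENNReal.ofReal (ρ * q^m) := by
        congr 1
        rw [hq, div_pow]
        push_cast
        field_simp
  have hlt : ρ * q^m < v.toReal := by
    have h := (lt_div_iff₀ hρ).1 hm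
    linarith
  have : v ≤ ENNReal.ofReal (ρ * q^m) := hbound
  have hcontra : v < v := by
    calc v ≤ ENNReal.ofReal (ρ * q^m) := hbound
    _ < ENNReal.ofReal (v.toReal) := by
        apply (ENNReal.ofReal_lt_ofReal_iff hvpos).2 hlt
    _ = v := ENNReal.ofReal_toReal hvne
  exact absurd hcontra (lt_irrefl _)


include hk hn hε2 hF in
lemma open_cover : ∀ m : ℕ, ∀ u ρ : ℝ, 0 < ρ →
    ∃ S : Finset ℝ, S.card ≤ ((k-1)*n)^(m+1) ∧
      F ∩ Set.Icc u (u+ρ) ⊆ ⋃ x ∈ S, Set.Ioo x (x + ρ/((k:ℝ)*n)^(m+1)) := by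
  classical
  intro m
  induction m with
  | zero =>
    intro u ρ hρ
    obtain ⟨S, h1, h2⟩ := open_base hk hn hε2 hF u ρ hρ (E_null hk hn hε2 hF u ρ hρ)
    exact ⟨S, by simpa using h1, by simpa using h2⟩
  | succ m ih =>
    intro u ρ hρ
    have hknR : (0:ℝ) < (k:ℝ)*(n:ℝ) := by
      have h1 : (0:ℝ) < (k:ℝ) := by exact_mod_cast (by omega : 0 < k)
      have h2 : (0:ℝ) < (n:ℝ) := by exact_mod_cast hn
      positivity
    set δ : ℝ := ρ / ((k:ℝ)*n) with hδdef
    have hδ0 : 0 < δ := by rw [hδdef]; positivity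
    obtain ⟨cells, hcard, hcover⟩ := cell_decomp hk hn hε2 hF u ρ hρ
    have Hx : ∀ x ∈ cells, ∃ Sx : Finset ℝ, Sx.card ≤ ((k-1)*n)^(m+1) ∧
        F ∩ Set.Icc x (x+δ) ⊆ ⋃ y ∈ Sx, Set.Ioo y (y + δ/((k:ℝ)*n)^(m+1)) :=
      fun x _ => ih x δ hδ0
    choose! g hg1 hg2 using Hx
    refine ⟨cells.biUnion g, ?_, ?_⟩
    · calc _ ≤ ∑ x ∈ cells, (g x).card := Finset.card_biUnion_le
      _ ≤ ∑ _x ∈ cells, ((k-1)*n)^(m+1) := Finset.sum_le_sum (fun x hx => hg1 x hx)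
      _ = cells.card * ((k-1)*n)^(m+1) := by rw [Finset.sum_const]; ring
      _ ≤ ((k-1)*n) * ((k-1)*n)^(m+1) := Nat.mul_le_mul_right _ hcard
      _ = ((k-1)*n)^(m+2) := by rw [pow_succ]; ring
    · intro e he
      have := hcover he
      simp only [Set.mem_iUnion] at this
      obtain ⟨x, hx, hex⟩ := this
      have : e ∈ ⋃ y ∈ g x, Set.Ioo y (y + δ/((k:ℝ)*n)^(m+1)) := hg2 x hx ⟨he.1, hex⟩
      simp only [Set.mem_iUnion] at this ⊢
      obtain ⟨y, hy, hey⟩ := this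
      refine ⟨y, Finset.mem_biUnion.2 ⟨x, hx, hy⟩, ?_⟩
      have : δ/((k:ℝ)*n)^(m+1) = ρ/((k:ℝ)*n)^(m+2) := by
        rw [hδdef, div_div, ← pow_succ']
      rwa [this] at hey
end



theorem stmt_2 (k : ℕ) (hk : 3 ≤ k) (ε : ℝ) (hε : ε ∈ Set.Ioo (0 : ℝ) 1)
    (n : ℕ) (hn : 0 < n) (hεn : 1 / (2 * ε) = (n : ℝ))
    (F : Set ℝ) (hF : ¬ ContainsKAP F k ε)
    (a R : ℝ) (hR : 0 < R) (m : ℕ) (hm : 0 < m) :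
    (∃ t : Fin (((k - 1) * n) ^ m) → ℝ,
        Set.Icc a (a + R) ∩ F ⊆ ⋃ i, Set.Icc (t i) (t i + (2 * ε / k) ^ m * R)) ∧
      ∀ r : ℝ, (2 * ε / k) ^ m * R ≤ r →
        (coverN (Set.Icc a (a + R) ∩ F) r : ℝ) ≤ (((k : ℝ) - 1) / (2 * ε)) ^ m := by
  classical
  have hε0 : 0 < ε := hε.1
  have hε2 : 2 * ε * (n:ℝ) = 1 := by
    have h2ε : (0:ℝ) < 2*ε := by linarith
    field_simp at hεn
    linarith
  have hkR : (0:ℝ) < (k:ℝ) := by exact_mod_cast (by omega : 0 < k)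
  have hnR : (0:ℝ) < (n:ℝ) := by exact_mod_cast hn
  set N : ℕ := ((k-1)*n)^m with hN
  set L : ℝ := (2*ε/k)^m * R with hL
  have hdiv : 2*ε/(k:ℝ) = 1/((k:ℝ)*(n:ℝ)) := by
    rw [div_eq_div_iff hkR.ne' (by positivity : ((k:ℝ)*(n:ℝ)) ≠ 0)]
    nlinarith
  have hLeq : L = R / ((k:ℝ)*(n:ℝ))^m := by
    rw [hL, hdiv, div_pow, one_pow]
    ring
  have hL0 : 0 < L := by
    rw [hLeq]; positivity
  obtain ⟨m', rfl⟩ : ∃ m', m = m' + 1 := ⟨m - 1, by omega⟩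
  obtain ⟨S, hScard, hScover⟩ := open_cover hk hn hε2 hF m' a R hR
  have hScover' : Set.Icc a (a + R) ∩ F ⊆ ⋃ x ∈ S, Set.Ioo x (x + L) := by
    rw [Set.inter_comm, hLeq]
    exact hScover
  -- the function enumerating S
  set t : Fin N → ℝ := fun i => S.toList.getD i.val 0 with ht
  have hmemt : ∀ x ∈ S, ∃ i : Fin N, t i = x := by
    intro x hx
    have hx' : x ∈ S.toList := Finset.mem_toList.2 hx
    obtain ⟨i, hi, he⟩ := List.mem_iff_getElem.1 hx'
    have hlen : S.toList.length = S.card := Finset.length_toList S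
    have hiN : i < N := lt_of_lt_of_le (by rw [← hlen]; exact hi) hScard
    exact ⟨⟨i, hiN⟩, by rw [ht]; simp only; rw [List.getD_eq_getElem _ _ hi]; exact he⟩
  have hcov2 : Set.Icc a (a + R) ∩ F ⊆ ⋃ i, Set.Ioo (t i) (t i + L) := by
    intro e he
    obtain ⟨x, hxS, hex⟩ := by
      have := hScover' he
      simpa only [Set.mem_iUnion] using this
    obtain ⟨i, hi⟩ := hmemt x hxS
    exact Set.mem_iUnion.2 ⟨i, by rw [hi]; exact hex⟩
  constructor
  · refine ⟨t, fun e he => ?_⟩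
    obtain ⟨i, hi⟩ := Set.mem_iUnion.1 (hcov2 he)
    exact Set.mem_iUnion.2 ⟨i, Set.Ioo_subset_Icc_self hi⟩
  · intro r hr
    have hNmem : N ∈ {n : ℕ | ∃ U : Fin n → Set ℝ,
        (∀ i, IsOpen (U i) ∧ EMetric.diam (U i) ≤ ENNReal.ofReal r) ∧
        Set.Icc a (a + R) ∩ F ⊆ ⋃ i, U i} := by
      refine ⟨fun i => Set.Ioo (t i) (t i + L), fun i => ⟨isOpen_Ioo, ?_⟩, hcov2⟩
      show Metric.ediam (Set.Ioo (t i) (t i + L)) ≤ _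
      rw [Real.ediam_Ioo]
      apply ENNReal.ofReal_le_ofReal
      linarith
    have hle : coverN (Set.Icc a (a + R) ∩ F) r ≤ N := Nat.sInf_le hNmem
    have hcast : ((N:ℕ):ℝ) = (((k : ℝ) - 1) / (2 * ε)) ^ (m'+1) := by
      have h1 : ((k:ℝ) - 1)/(2*ε) = ((k:ℝ)-1) * (n:ℝ) := by
        rw [div_eq_mul_one_div, hεn]
      have h2 : (((k-1)*n : ℕ) : ℝ) = ((k:ℝ)-1)*(n:ℝ) := by
        have h1k : (1:ℕ) ≤ k := by omega
        push_cast [Nat.cast_sub h1k]; ring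
      rw [h1, hN]
      push_cast
      congr 2
      rw [Nat.cast_sub (by omega : (1:ℕ) ≤ k)]
      push_cast
      ring
    calc (coverN (Set.Icc a (a + R) ∩ F) r : ℝ) ≤ (N:ℝ) := by exact_mod_cast hle
    _ = _ := hcast
end

section
/- Let k ≥ 3 be an integer and ε ∈ (0,1) be such that 1/(2ε) is a positive integer. Suppose F ⊆ ℝ does not contain any (k,ε)-AP. Let I be a closed interval of length R > 0, and partition I into the k/(2ε) consecutive closed subintervals I_1, …, I_{k/(2ε)} each of length 2εR/k (enumerated from left to right). Then at most (k−1)/(2ε) of the subintervals I_i intersect F; equivalently, for each residue class j modulo 1/(2ε), at least one of the k intervals I_i with i ≡ j (mod 1/(2ε)) is disjoint from F. -/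
open Classical in
theorem stmt_3 (k : ℕ) (hk : 3 ≤ k) (ε : ℝ) (hε : ε ∈ Set.Ioo (0 : ℝ) 1)
    (n : ℕ) (hn : 0 < n) (hεn : 1 / (2 * ε) = (n : ℝ))
    (F : Set ℝ) (hF : ¬ ContainsKAP F k ε)
    (a R : ℝ) (hR : 0 < R)
    -- the `i`-th subinterval of `I = [a, a+R]`, of length `2εR/k`, for `i = 1, …, k·n`
    (I : ℕ → Set ℝ)
    (hI : ∀ i, I i = Set.Icc (a + ((i : ℝ) - 1) * (2 * ε * R / k))
      (a + (i : ℝ) * (2 * ε * R / k))) :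
    ((Finset.Icc 1 (k * n)).filter (fun i => (I i ∩ F).Nonempty)).card ≤ (k - 1) * n ∧
      ∀ j < n, ∃ i ∈ Finset.Icc 1 (k * n), i % n = j ∧ I i ∩ F = ∅ := by
  obtain ⟨hε0, hε1⟩ := hε
  have hk0 : (0:ℝ) < k := by
    have : (3:ℝ) ≤ k := by exact_mod_cast hk
    linarith
  set w : ℝ := 2 * ε * R / k with hw_def
  have hw : 0 < w := by positivity
  have hεn' : ε * n = 1/2 := by
    have h2 : (2:ℝ) * ε ≠ 0 := by positivity
    field_simp at hεn
    linarith
  have key : ∀ j < n, ∃ i ∈ Finset.Icc 1 (k * n), i % n = j ∧ I i ∩ F = ∅ := by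
    intro j hj
    by_contra h
    push_neg at h
    obtain ⟨m, hm1, hmn, hmj⟩ : ∃ m, 1 ≤ m ∧ m ≤ n ∧ m % n = j := by
      rcases Nat.eq_zero_or_pos j with h0 | h0
      · exact ⟨n, hn, le_refl n, by simp [h0]⟩
      · exact ⟨j, h0, le_of_lt hj, Nat.mod_eq_of_lt hj⟩
    have hne : ∀ t, t < k → (I (m + t * n) ∩ F).Nonempty := by
      intro t ht
      have hmem : m + t * n ∈ Finset.Icc 1 (k * n) := by
        simp only [Finset.mem_Icc]
        constructor
        · omega
        · have h1 : (t + 1) * n ≤ k * n := Nat.mul_le_mul_right n (by omega)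
          have h2 : (t + 1) * n = t * n + n := by ring
          omega
      have hmod : (m + t * n) % n = j := by
        rw [Nat.add_mul_mod_self_right, hmj]
      exact h _ hmem hmod
    let b : ℕ → ℝ := fun t => if ht : t < k then (hne t ht).some else 0
    have hb : ∀ t, (ht : t < k) → b t ∈ I (m + t * n) ∩ F := by
      intro t ht
      simp only [b, dif_pos ht]
      exact (hne t ht).some_mem
    apply hF
    refine ⟨b, fun t ht => (hb t ht).2, a + (m : ℝ) * w - w / 2, (n : ℝ) * w, by positivity, ?_⟩
    intro t ht
    have hmem := (hb t ht).1
    rw [hI] at hmem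
    obtain ⟨h1, h2⟩ := hmem
    have hcast : ((m + t * n : ℕ) : ℝ) = (m : ℝ) + (t : ℝ) * n := by push_cast; ring
    rw [hcast] at h1 h2
    have hεΔ : ε * ((n : ℝ) * w) = w / 2 := by
      rw [← mul_assoc, hεn']; ring
    rw [hεΔ, abs_le]
    constructor <;> nlinarith [h1, h2]
  refine ⟨?_, key⟩
  choose i hi1 hi2 hi3 using key
  set S := (Finset.Icc 1 (k * n)).filter (fun i => (I i ∩ F).Nonempty) with hS
  have hsub : S ⊆ Finset.Icc 1 (k * n) := Finset.filter_subset _ _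
  have hTn : n ≤ (Finset.Icc 1 (k * n) \ S).card := by
    have : (Finset.range n).card ≤ (Finset.Icc 1 (k * n) \ S).card := by
      apply Finset.card_le_card_of_injOn (fun j => if h : j < n then i j h else 0)
      · intro j hj
        rw [Finset.mem_coe, Finset.mem_range] at hj
        simp only [Finset.mem_coe, dif_pos hj, Finset.mem_sdiff]
        refine ⟨hi1 j hj, ?_⟩
        simp only [hS, Finset.mem_filter, not_and]
        intro _
        rw [hi3 j hj]
        simp
      · intro j1 hj1 j2 hj2 heq
        rw [Finset.mem_coe, Finset.mem_range] at hj1 hj2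
        simp only [dif_pos hj1, dif_pos hj2] at heq
        have e1 := hi2 j1 hj1
        have e2 := hi2 j2 hj2
        rw [heq] at e1
        rw [e1] at e2
        omega
    simpa using this
  have hcard : (Finset.Icc 1 (k * n) \ S).card = k * n - S.card := by
    rw [Finset.card_sdiff_of_subset hsub, Nat.card_Icc]
    omega
  have hSle : S.card ≤ k * n := (Finset.card_le_card hsub).trans (by rw [Nat.card_Icc]; omega)
  rw [hcard] at hTn
  have hkn : (k - 1) * n = k * n - n := Nat.sub_one_mul k n
  omega
end

section
/- Let k ≥ 3 be an integer and ε > 0. Suppose F ⊆ ℝ contains no k-term ε-almost arithmetic progression in the sense of Lafont–McReynolds (i.e., no points a_0, …, a_{k−1} ∈ F satisfy |(a_{i+1} − a_i)/(a_{j+1} − a_j) − 1| < ε for all i, j ∈ {0, …, k−2}). Then for every ε' with 0 < ε' < ε/(4 + 2ε), F does not contain any (k,ε')-AP, and consequently the Hausdorff dimension of F satisfies dim_H F ≤ 1 + log(1 − 1/k) / log(k·⌈1/(2ε')⌉). -/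
/-- A set `F ⊆ ℝ` contains a `k`-term `ε`-almost arithmetic progression in the sense of
Lafont–McReynolds. -/
def ContainsLM (F : Set ℝ) (k : ℕ) (ε : ℝ) : Prop :=
  ∃ a : ℕ → ℝ, (∀ i < k, a i ∈ F) ∧
    ∀ i j : ℕ, i + 1 < k → j + 1 < k →
      |(a (i + 1) - a i) / (a (j + 1) - a j) - 1| < ε

lemma kap_to_lm (k : ℕ) (ε ε' : ℝ) (hε : 0 < ε) (hε' : 0 < ε')
    (h : ε' < ε / (4 + 2 * ε)) (F : Set ℝ) (hF : ContainsKAP F k ε') :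
    ContainsLM F k ε := by
  have hden : (0:ℝ) < 4 + 2 * ε := by linarith
  have h4 : ε' * (4 + 2 * ε) < ε := by
    rw [← lt_div_iff₀ hden]; exact h
  have h2 : ε' < 1 / 2 := by nlinarith
  have key : 4 * ε' < ε * (1 - 2 * ε') := by nlinarith
  obtain ⟨b, hbF, a, Δ, hΔ, hb⟩ := hF
  refine ⟨b, hbF, fun i j hi hj => ?_⟩
  have hlow : ∀ m, m + 1 < k → Δ * (1 - 2 * ε') ≤ b (m+1) - b m ∧
      b (m+1) - b m ≤ Δ * (1 + 2 * ε') := by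
    intro m hm
    have h1 := hb m (by omega)
    have h2' := hb (m+1) hm
    rw [abs_le] at h1 h2'
    push_cast at h2'
    constructor <;> nlinarith [h1.1, h1.2, h2'.1, h2'.2]
  obtain ⟨hi1, hi2⟩ := hlow i hi
  obtain ⟨hj1, hj2⟩ := hlow j hj
  have hdjpos : 0 < b (j+1) - b j := by nlinarith
  rw [abs_lt]
  constructor
  · have h5 : (1 - ε) * (b (j+1) - b j) < b (i+1) - b i := by
      nlinarith [mul_pos hΔ hε']
    have := (lt_div_iff₀ hdjpos).2 h5
    linarith
  · have h5 : b (i+1) - b i < (1 + ε) * (b (j+1) - b j) := by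
      nlinarith [mul_pos hΔ hε']
    have := (div_lt_iff₀ hdjpos).2 h5
    linarith

lemma step_lemma_s6 (k M : ℕ) (hk : 3 ≤ k) (hM : 1 ≤ M) (ε' : ℝ) (hε' : 0 < ε')
    (hMε : 1 ≤ 2 * ε' * M) (F : Set ℝ) (hno : ¬ ContainsKAP F k ε')
    (c ℓ : ℝ) (hℓ : 0 < ℓ) :
    ∃ T : Finset ℝ, T.card ≤ (k-1)*M ∧
      F ∩ Set.Ico c (c+ℓ) ⊆ ⋃ x ∈ T, Set.Ico x (x + ℓ/((k*M : ℕ) : ℝ)) := by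
  have hNpos : 0 < k * M := Nat.mul_pos (by omega) hM
  have hNR : (0:ℝ) < ((k*M : ℕ) : ℝ) := by exact_mod_cast hNpos
  set δ : ℝ := ℓ / ((k*M : ℕ) : ℝ) with hδdef
  have hδ : 0 < δ := div_pos hℓ hNR
  -- key: for each residue r < M, some block interval misses F
  have key : ∀ r : ℕ, ∃ i : ℕ, r < M → i < k ∧
      F ∩ Set.Ico (c + ((i*M+r : ℕ) : ℝ)*δ) (c + ((i*M+r : ℕ) : ℝ)*δ + δ) = ∅ := by
    intro r
    by_cases hr : r < M
    swap
    · exact ⟨0, fun h => absurd h hr⟩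
    by_contra hcon
    push_neg at hcon
    -- hcon : ∀ i, ¬ (r < M → i < k ∧ ... = ∅)
    have hne : ∀ i, ∃ x : ℝ, i < k →
        x ∈ F ∩ Set.Ico (c + ((i*M+r : ℕ) : ℝ)*δ) (c + ((i*M+r : ℕ) : ℝ)*δ + δ) := by
      intro i
      by_cases hi : i < k
      · rcases (hcon i).2 hi with ⟨x, hx⟩
        exact ⟨x, fun _ => hx⟩
      · exact ⟨0, fun h => absurd h hi⟩
    choose b hb using hne
    apply hno
    refine ⟨b, fun i hi => (hb i hi).1, c + r*δ + δ/2, M*δ, by positivity, fun i hi => ?_⟩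
    obtain ⟨h1, h2⟩ := (hb i hi).2
    rw [abs_le]
    push_cast at h1 h2 ⊢
    constructor <;> nlinarith [mul_pos hδ hε', (by positivity : (0:ℝ) < δ)]
  choose f hf using key
  set B : Finset ℕ := (Finset.range M).image (fun r => f r * M + r) with hBdef
  have hBsub : B ⊆ Finset.range (k*M) := by
    intro t ht
    rw [hBdef, Finset.mem_image] at ht
    obtain ⟨r, hr, rfl⟩ := ht
    rw [Finset.mem_range] at hr ⊢
    have := (hf r hr).1
    calc f r * M + r ≤ (k-1) * M + r := by
          exact Nat.add_le_add_right (Nat.mul_le_mul_right M (by omega)) r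
      _ < k * M := by
          have : (k-1)*M + M ≤ k*M := by
            have : (k-1)*M + 1*M ≤ k*M := by
              rw [← Nat.add_mul]
              exact Nat.mul_le_mul_right M (by omega)
            simpa using this
          omega
  have hBcard : B.card = M := by
    rw [hBdef]
    rw [Finset.card_image_of_injOn]
    · exact Finset.card_range M
    · intro r hr s hs hrs
      rw [Finset.mem_coe, Finset.mem_range] at hr hs
      have h1 : (f r * M + r) % M = r := by
        rw [mul_comm, Nat.mul_add_mod]
        exact Nat.mod_eq_of_lt hr
      have h2 : (f s * M + s) % M = s := by
        rw [mul_comm, Nat.mul_add_mod]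
        exact Nat.mod_eq_of_lt hs
      simp only at hrs
      rw [← h1, ← h2, hrs]
  refine ⟨(Finset.range (k*M) \ B).image (fun t : ℕ => c + (t : ℝ) * δ), ?_, ?_⟩
  · calc ((Finset.range (k*M) \ B).image (fun t : ℕ => c + (t : ℝ) * δ)).card
        ≤ (Finset.range (k*M) \ B).card := Finset.card_image_le
      _ = k*M - M := by rw [Finset.card_sdiff_of_subset hBsub, Finset.card_range, hBcard]
      _ = (k-1)*M := by
          have : k*M = (k-1)*M + M := by
            conv_lhs => rw [show k = (k-1)+1 by omega]
            ring
          omega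
  · rintro y ⟨hyF, hyc, hyc'⟩
    set t : ℕ := ⌊(y - c)/δ⌋₊ with htdef
    have h0 : 0 ≤ (y - c)/δ := div_nonneg (by linarith) hδ.le
    have ht1 : (t : ℝ) ≤ (y - c)/δ := Nat.floor_le h0
    have ht2 : (y - c)/δ < t + 1 := Nat.lt_floor_add_one _
    have htN : t < k*M := by
      rw [htdef, Nat.floor_lt h0]
      rw [div_lt_iff₀ hδ, hδdef]
      field_simp
      linarith
    have hy1 : c + (t : ℝ) * δ ≤ y := by
      have := (le_div_iff₀ hδ).1 ht1
      linarith
    have hy2 : y < c + (t : ℝ) * δ + δ := by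
      have := (div_lt_iff₀ hδ).1 ht2
      linarith
    have htB : t ∉ B := by
      intro hmem
      rw [hBdef, Finset.mem_image] at hmem
      obtain ⟨r, hr, hrt⟩ := hmem
      rw [Finset.mem_range] at hr
      have hemp := (hf r hr).2
      have : y ∈ F ∩ Set.Ico (c + ((f r * M + r : ℕ) : ℝ)*δ)
          (c + ((f r * M + r : ℕ) : ℝ)*δ + δ) := by
        rw [hrt]
        exact ⟨hyF, hy1, hy2⟩
      rw [hemp] at this
      exact this
    rw [Set.mem_iUnion₂]
    refine ⟨c + (t : ℝ) * δ, ?_, hy1, ?_⟩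
    · exact Finset.mem_image_of_mem _ (Finset.mem_sdiff.2 ⟨Finset.mem_range.2 htN, htB⟩)
    · exact hy2

open MeasureTheory

lemma cover_lemma (k M : ℕ) (hk : 3 ≤ k) (hM : 1 ≤ M) (ε' : ℝ) (hε' : 0 < ε')
    (hMε : 1 ≤ 2 * ε' * M) (F : Set ℝ) (hno : ¬ ContainsKAP F k ε') (c : ℝ) (n : ℕ) :
    ∃ T : Finset ℝ, T.card ≤ ((k-1)*M)^n ∧
      F ∩ Set.Ico c (c+1) ⊆ ⋃ x ∈ T, Set.Ico x (x + (1/((k*M : ℕ) : ℝ))^n) := by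
  have hNR : (0:ℝ) < ((k*M : ℕ) : ℝ) := by
    have : 0 < k * M := Nat.mul_pos (by omega) hM
    exact_mod_cast this
  induction n with
  | zero =>
    exact ⟨{c}, by simp, by simp⟩
  | succ n ih =>
    obtain ⟨T, hTcard, hTcov⟩ := ih
    have hLpos : (0:ℝ) < (1/((k*M : ℕ) : ℝ))^n := by positivity
    have hstep := fun x : ℝ => step_lemma_s6 k M hk hM ε' hε' hMε F hno x _ hLpos
    choose g hg1 hg2 using hstep
    refine ⟨T.biUnion g, ?_, ?_⟩
    · calc (T.biUnion g).card ≤ ∑ x ∈ T, (g x).card := Finset.card_biUnion_le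
        _ ≤ ∑ _x ∈ T, (k-1)*M := Finset.sum_le_sum fun x _ => hg1 x
        _ = T.card * ((k-1)*M) := by rw [Finset.sum_const, smul_eq_mul]
        _ ≤ ((k-1)*M)^n * ((k-1)*M) := Nat.mul_le_mul_right _ hTcard
        _ = ((k-1)*M)^(n+1) := by ring
    · intro y hy
      obtain ⟨x, hxT, hyx⟩ := Set.mem_iUnion₂.1 (hTcov hy)
      have : y ∈ F ∩ Set.Ico x (x + (1/((k*M : ℕ) : ℝ))^n) := ⟨hy.1, hyx⟩
      have := hg2 x this
      rw [Set.mem_iUnion₂] at this ⊢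
      obtain ⟨x', hx', hyx'⟩ := this
      refine ⟨x', Finset.mem_biUnion.2 ⟨x, hxT, hx'⟩, ?_⟩
      have heq : (1/((k*M : ℕ) : ℝ))^n / ((k*M : ℕ) : ℝ) = (1/((k*M : ℕ) : ℝ))^(n+1) := by
        field_simp
        rw [pow_succ, mul_left_comm, mul_one_div_cancel hNR.ne', mul_one]
      rwa [heq] at hyx'

lemma measure_zero_lemma (k M : ℕ) (hk : 3 ≤ k) (hM : 1 ≤ M) (ε' : ℝ) (hε' : 0 < ε')
    (hMε : 1 ≤ 2 * ε' * M) (F : Set ℝ) (hno : ¬ ContainsKAP F k ε')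
    (t : ℝ) (ht : Real.log (((k-1)*M : ℕ) : ℝ) / Real.log ((k*M : ℕ) : ℝ) < t) :
    μH[t] F = 0 := by
  have hN3 : 3 ≤ k * M := le_trans hk (Nat.le_mul_of_pos_right k hM)
  have hNR : (1:ℝ) < ((k*M : ℕ) : ℝ) := by exact_mod_cast lt_of_lt_of_le (by norm_num) hN3
  have hNpos : (0:ℝ) < ((k*M : ℕ) : ℝ) := by linarith
  have hKM1 : 1 ≤ (k-1)*M := Nat.one_le_iff_ne_zero.2 (Nat.mul_ne_zero (by omega) (by omega))
  have hKMR : (0:ℝ) < (((k-1)*M : ℕ) : ℝ) := by exact_mod_cast hKM1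
  have hlogN : 0 < Real.log ((k*M : ℕ) : ℝ) := Real.log_pos hNR
  have ht0 : 0 ≤ t := le_of_lt (lt_of_le_of_lt (div_nonneg (Real.log_nonneg (by exact_mod_cast hKM1)) hlogN.le) ht)
  -- the key real inequality
  have hρ : (((k-1)*M : ℕ) : ℝ) * (1/((k*M : ℕ) : ℝ)) ^ t < 1 := by
    have h1 : Real.log (((k-1)*M : ℕ) : ℝ) < t * Real.log ((k*M : ℕ) : ℝ) := by
      rw [div_lt_iff₀ hlogN] at ht; linarith
    have h2 : (((k-1)*M : ℕ) : ℝ) < ((k*M : ℕ) : ℝ) ^ t := by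
      rw [Real.rpow_def_of_pos hNpos t]
      calc (((k-1)*M : ℕ) : ℝ) = Real.exp (Real.log (((k-1)*M : ℕ) : ℝ)) :=
            (Real.exp_log hKMR).symm
        _ < Real.exp (Real.log ((k*M : ℕ) : ℝ) * t) := Real.exp_lt_exp.2 (by linarith)
    have h3 : (0:ℝ) < ((k*M : ℕ) : ℝ) ^ t := Real.rpow_pos_of_pos hNpos t
    rw [one_div, Real.inv_rpow hNpos.le, mul_comm]
    rw [inv_mul_lt_iff₀ h3]
    linarith
  set ρ : ℝ := (((k-1)*M : ℕ) : ℝ) * (1/((k*M : ℕ) : ℝ)) ^ t with hρdef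
  have hρ0 : 0 ≤ ρ := by positivity
  -- measure of F ∩ [c, c+1) is zero
  have hpiece : ∀ c : ℝ, μH[t] (F ∩ Set.Ico c (c+1)) = 0 := by
    intro c
    choose cov hcard hcov using cover_lemma k M hk hM ε' hε' hMε F hno c
    have hmain : μH[t] (F ∩ Set.Ico c (c+1)) ≤
        Filter.liminf (fun n => ∑ x : (cov n : Finset ℝ),
          EMetric.diam (Set.Ico (x:ℝ) ((x:ℝ) + (1/((k*M : ℕ) : ℝ))^n)) ^ t) Filter.atTop := by
      apply Measure.hausdorffMeasure_le_liminf_sum t _ (fun n => ENNReal.ofReal ((1/((k*M : ℕ) : ℝ))^n))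
      · have h1 : Filter.Tendsto (fun n : ℕ => (1/((k*M : ℕ) : ℝ))^n) Filter.atTop (nhds 0) := by
          apply tendsto_pow_atTop_nhds_zero_of_lt_one (by positivity)
          rw [div_lt_one hNpos]; linarith
        have := ENNReal.tendsto_ofReal h1
        simpa using this
      · filter_upwards with n i
        rw [Real.ediam_Ico]
        simp
      · filter_upwards with n
        intro y hy
        obtain ⟨x, hx, hyx⟩ := Set.mem_iUnion₂.1 (hcov n hy)
        exact Set.mem_iUnion.2 ⟨⟨x, hx⟩, hyx⟩
    have hbound : ∀ n : ℕ, (∑ x : (cov n : Finset ℝ),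
        EMetric.diam (Set.Ico (x:ℝ) ((x:ℝ) + (1/((k*M : ℕ) : ℝ))^n)) ^ t) ≤
        ENNReal.ofReal (ρ ^ n) := by
      intro n
      have hdiam : ∀ x : (cov n : Finset ℝ),
          EMetric.diam (Set.Ico (x:ℝ) ((x:ℝ) + (1/((k*M : ℕ) : ℝ))^n)) ^ t =
          ENNReal.ofReal (((1/((k*M : ℕ) : ℝ))^n) ^ t) := by
        intro x
        rw [show EMetric.diam = Metric.ediam from rfl, Real.ediam_Ico]
        rw [add_sub_cancel_left]
        exact ENNReal.ofReal_rpow_of_pos (by positivity)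
      calc (∑ x : (cov n : Finset ℝ), EMetric.diam (Set.Ico (x:ℝ) ((x:ℝ) + (1/((k*M : ℕ) : ℝ))^n)) ^ t)
          = (cov n).card * ENNReal.ofReal (((1/((k*M : ℕ) : ℝ))^n) ^ t) := by
            rw [Finset.sum_congr rfl (fun x _ => hdiam x)]
            simp [Finset.card_univ]
        _ ≤ (((k-1)*M)^n : ℕ) * ENNReal.ofReal (((1/((k*M : ℕ) : ℝ))^n) ^ t) := by
            gcongr
            exact_mod_cast hcard n
        _ = ENNReal.ofReal ((((k-1)*M : ℕ)^n : ℝ) * ((1/((k*M : ℕ) : ℝ))^n) ^ t) := by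
            rw [ENNReal.ofReal_mul (by positivity)]
            congr 1
            rw [← ENNReal.ofReal_natCast (((k-1)*M)^n)]
            congr 1
            push_cast
            ring
        _ = ENNReal.ofReal (ρ ^ n) := by
            congr 1
            have hswap : (((1:ℝ)/((k*M : ℕ) : ℝ))^n) ^ t = (((1:ℝ)/((k*M : ℕ) : ℝ))^t) ^ n := by
              rw [← Real.rpow_natCast (1/((k*M : ℕ) : ℝ)) n, ← Real.rpow_mul (by positivity),
                mul_comm (n : ℝ) t, Real.rpow_mul (by positivity), Real.rpow_natCast]
            rw [hρdef, mul_pow, hswap]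
    have hzero : Filter.Tendsto (fun n : ℕ => ENNReal.ofReal (ρ ^ n)) Filter.atTop (nhds 0) := by
      have h1 : Filter.Tendsto (fun n : ℕ => ρ ^ n) Filter.atTop (nhds 0) :=
        tendsto_pow_atTop_nhds_zero_of_lt_one hρ0 hρ
      have := ENNReal.tendsto_ofReal h1
      simpa using this
    have : Filter.liminf (fun n => ∑ x : (cov n : Finset ℝ),
        EMetric.diam (Set.Ico (x:ℝ) ((x:ℝ) + (1/((k*M : ℕ) : ℝ))^n)) ^ t) Filter.atTop ≤
        Filter.liminf (fun n : ℕ => ENNReal.ofReal (ρ ^ n)) Filter.atTop :=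
      Filter.liminf_le_liminf (Filter.Eventually.of_forall hbound)
    rw [hzero.liminf_eq] at this
    exact le_antisymm (hmain.trans this) zero_le
  -- cover ℝ by countably many unit intervals
  have hcover : F ⊆ ⋃ c : ℤ, (F ∩ Set.Ico (c : ℝ) ((c : ℝ)+1)) := by
    intro y hy
    exact Set.mem_iUnion.2 ⟨⌊y⌋, hy, Int.floor_le y, by exact_mod_cast Int.lt_floor_add_one y⟩
  exact le_antisymm (le_trans (measure_mono hcover)
    (le_of_eq (measure_iUnion_null fun c => hpiece (c : ℝ)))) zero_le
theorem stmt_6 (k : ℕ) (hk : 3 ≤ k) (ε : ℝ) (hε : 0 < ε)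
    (F : Set ℝ) (hF : ¬ ContainsLM F k ε) :
    ∀ ε' : ℝ, 0 < ε' → ε' < ε / (4 + 2 * ε) →
      ¬ ContainsKAP F k ε' ∧
        dimH F ≤ ENNReal.ofReal
          (1 + Real.log (1 - 1 / k) / Real.log (k * ⌈1 / (2 * ε')⌉₊)) := by
  intro ε' hε'0 hε'lt
  have hno : ¬ ContainsKAP F k ε' := fun h => hF (kap_to_lm k ε ε' hε hε'0 hε'lt F h)
  refine ⟨hno, ?_⟩
  set M := ⌈1/(2*ε')⌉₊ with hMdef
  have hM : 1 ≤ M := by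
    rw [hMdef]
    exact Nat.one_le_iff_ne_zero.2 (Nat.ceil_pos.2 (by positivity)).ne'
  have hMε : 1 ≤ 2*ε'*M := by
    have h1 : 1/(2*ε') ≤ (M:ℝ) := by rw [hMdef]; exact Nat.le_ceil _
    have h2 : (0:ℝ) < 2*ε' := by linarith
    calc (1:ℝ) = 2*ε' * (1/(2*ε')) := by field_simp
      _ ≤ 2*ε'*M := by gcongr
  have hk1 : (1:ℝ) < k := by exact_mod_cast (by omega : 1 < k)
  have hkpos : (0:ℝ) < k := by linarith
  have hMR : (1:ℝ) ≤ M := by exact_mod_cast hM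
  have hlogN : 0 < Real.log ((k:ℝ)*M) := Real.log_pos (by nlinarith)
  have hKM1 : (1:ℝ) ≤ (((k-1)*M : ℕ) : ℝ) := by
    exact_mod_cast Nat.one_le_iff_ne_zero.2 (Nat.mul_ne_zero (by omega) (by omega))
  have hcast2 : (((k*M : ℕ)) : ℝ) = (k:ℝ)*M := by push_cast; ring
  have heq : 1 + Real.log (1 - 1/(k:ℝ)) / Real.log ((k:ℝ)*(M:ℝ)) =
      Real.log (((k-1)*M : ℕ) : ℝ) / Real.log ((k*M : ℕ) : ℝ) := by
    have hcast1 : (((k-1)*M : ℕ) : ℝ) = ((k:ℝ)-1)*(M:ℝ) := by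
      push_cast [Nat.cast_sub (by omega : 1 ≤ k)]; ring
    rw [hcast1, hcast2]
    have h1 : (1:ℝ) - 1/k = ((k:ℝ)-1)/k := by field_simp
    rw [h1, Real.log_div (by linarith) (by linarith),
        Real.log_mul (by linarith) (by linarith),
        Real.log_mul (by linarith) (by linarith)]
    have hne : Real.log (k:ℝ) + Real.log (M:ℝ) ≠ 0 := by
      rw [← Real.log_mul (by linarith) (by linarith)]
      exact hlogN.ne'
    field_simp
    ring
  rw [heq]
  have hlogN' : 0 < Real.log ((k*M : ℕ) : ℝ) := by rw [hcast2]; exact hlogN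
  have hs0 : 0 ≤ Real.log (((k-1)*M : ℕ) : ℝ) / Real.log ((k*M : ℕ) : ℝ) :=
    div_nonneg (Real.log_nonneg hKM1) hlogN'.le
  apply dimH_le
  intro d' hd'
  by_contra hcon
  push_neg at hcon
  have hlt : Real.log (((k-1)*M : ℕ) : ℝ) / Real.log ((k*M : ℕ) : ℝ) < (d' : ℝ) := by
    rw [← ENNReal.ofReal_coe_nnreal] at hcon
    exact (ENNReal.ofReal_lt_ofReal_iff_of_nonneg hs0).1 hcon
  have hzero := measure_zero_lemma k M hk hM ε' hε'0 hMε F hno (d' : ℝ) hlt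
  rw [hzero] at hd'
  simp at hd'
end

section
/- Fix an integer k ≥ 3 and a real ε with 0 < ε < (k−2)/4. Let I ⊆ ℝ be a closed interval of length |I| and let J ⊆ I be an open interval of length |J| satisfying |I|·(1 + 2ε)/(k − 1 − 2ε) < |J| < |I|. If b_0, …, b_{k−1} is a (k,ε)-AP contained in I \ J, then the entire set {b_0, …, b_{k−1}} lies to one side of J: either every b_i is ≤ the left endpoint of J, or every b_i is ≥ the right endpoint of J. -/
lemma adj_switch (P : ℕ → Prop) : ∀ n, P 0 → ¬ P n → ∃ m < n, P m ∧ ¬ P (m+1) := by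
  intro n
  induction n with
  | zero => intro h hn; exact absurd h hn
  | succ n ih =>
    intro h0 hn
    by_cases hpn : P n
    · exact ⟨n, Nat.lt_succ_self n, hpn, hn⟩
    · obtain ⟨m, hm, h⟩ := ih h0 hpn
      exact ⟨m, hm.trans (Nat.lt_succ_self n), h⟩

theorem stmt_7 (k : ℕ) (hk : 3 ≤ k) (ε : ℝ) (hε1 : 0 < ε) (hε2 : ε < ((k : ℝ) - 2) / 4)
    -- `I = [u, u + L]` is a closed interval of length `L`; `J = (p, q)` is an open
    -- interval contained in `I` with `L(1+2ε)/(k-1-2ε) < |J| < L`.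
    (u L p q : ℝ) (hJI : Set.Ioo p q ⊆ Set.Icc u (u + L))
    (hJlower : L * (1 + 2 * ε) / ((k : ℝ) - 1 - 2 * ε) < q - p)
    (hJupper : q - p < L)
    -- `b` is a `(k, ε)`-AP contained in `I \ J`
    (b : ℕ → ℝ) (hb : IsKAP k ε b)
    (hbIJ : ∀ i < k, b i ∈ Set.Icc u (u + L) \ Set.Ioo p q) :
    (∀ i < k, b i ≤ p) ∨ (∀ i < k, q ≤ b i) := by
  obtain ⟨a, Δ, hΔ, hAP⟩ := hb
  have hk3 : (3:ℝ) ≤ (k:ℝ) := by exact_mod_cast hk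
  have hkpos : 0 < (k:ℝ) - 1 - 2*ε := by linarith
  -- each point is to one side of the gap
  have hside : ∀ i < k, b i ≤ p ∨ q ≤ b i := by
    intro i hi
    obtain ⟨-, hnot⟩ := hbIJ i hi
    rcases le_or_gt (b i) p with h | h
    · exact Or.inl h
    rcases le_or_gt q (b i) with h' | h'
    · exact Or.inr h'
    exact absurd ⟨h, h'⟩ hnot
  -- bound on Δ : Δ * (k - 1 - 2ε) ≤ L
  have h0 := hAP 0 (by omega)
  have hlast := hAP (k-1) (by omega)
  norm_num at h0
  rw [abs_le] at h0 hlast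
  have hcast : ((k-1 : ℕ) : ℝ) = (k:ℝ) - 1 := by
    push_cast [Nat.cast_sub (by omega : 1 ≤ k)]; ring
  rw [hcast] at hlast
  have hb0 := (hbIJ 0 (by omega)).1
  have hbl := (hbIJ (k-1) (by omega)).1
  simp only [Set.mem_Icc] at hb0 hbl
  have hΔL : Δ * ((k:ℝ) - 1 - 2*ε) ≤ L := by linarith [hb0.1, hbl.2, h0.1, h0.2, hlast.1, hlast.2]
  -- by contradiction
  by_contra hcon
  push_neg at hcon
  obtain ⟨⟨i, hik, hip⟩, ⟨j, hjk, hjq⟩⟩ := hcon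
  have hiq : q ≤ b i := (hside i hik).resolve_left (by linarith)
  have hjp : b j ≤ p := (hside j hjk).resolve_right (by linarith)
  -- find adjacent pair crossing the gap (with m+1 < k), giving |b(m+1) - b m| ≥ q - p
  have key : ∃ m, m + 1 < k ∧ q - p ≤ |b (m+1) - b m| := by
    rcases hside 0 (by omega) with h0p | h0q
    · obtain ⟨m, hm, hmp, hmq⟩ := adj_switch (fun m => b m ≤ p) i h0p (by push_neg; linarith)
      refine ⟨m, by omega, ?_⟩
      have := (hside (m+1) (by omega)).resolve_left hmq
      rw [abs_of_nonneg (by linarith)]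
      linarith
    · obtain ⟨m, hm, hmq, hmp⟩ := adj_switch (fun m => q ≤ b m) j h0q (by push_neg; linarith)
      refine ⟨m, by omega, ?_⟩
      have := (hside (m+1) (by omega)).resolve_right hmp
      rw [abs_sub_comm, abs_of_nonneg (by linarith)]
      linarith
  obtain ⟨m, hmk, hgap⟩ := key
  -- adjacent points differ by at most Δ(1+2ε)
  have hm1 := hAP m (by omega)
  have hm2 := hAP (m+1) hmk
  rw [abs_le] at hm1 hm2
  push_cast at hm2
  have habs : |b (m+1) - b m| ≤ Δ * (1 + 2*ε) := by
    rw [abs_le]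
    constructor <;> linarith [hm1.1, hm1.2, hm2.1, hm2.2]
  rw [div_lt_iff₀ hkpos] at hJlower
  nlinarith [mul_le_mul_of_nonneg_left hΔL (by positivity : (0:ℝ) ≤ 1 + 2*ε),
    mul_le_mul_of_nonneg_right (hgap.trans habs) hkpos.le]
end

section
/- Fix an integer k ≥ 3 and a real ε with 0 < ε < 1 and ε < (k−2)/4, and fix c with 0 < c < (k − 2 − 4ε)/(2k − 2 − 4ε). Define nested compact sets F_0 = [0,1] and F_{m+1} = c·F_m ∪ (c·F_m + 1 − c) for m ≥ 0, and let F = ⋂_{m≥0} F_m (equivalently, F is the attractor of the iterated function system {x ↦ cx, x ↦ cx + 1 − c}). Then F does not contain any (k,ε)-AP. -/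
private lemma flip_aux {P : ℕ → Prop} {q p : ℕ} (hqp : q < p) (hq : P q) (hp : ¬ P p) :
    ∃ i, q ≤ i ∧ i + 1 ≤ p ∧ P i ∧ ¬ P (i + 1) := by
  by_contra h
  push_neg at h
  apply hp
  have key : ∀ n, q ≤ n → n ≤ p → P n := by
    intro n hn
    induction n, hn using Nat.le_induction with
    | base => exact fun _ => hq
    | succ n hn ih =>
      intro hnp
      exact h n hn hnp (ih (le_trans (Nat.le_succ n) hnp))
  exact key p hqp.le le_rfl

set_option maxHeartbeats 800000 in
theorem stmt_9 (k : ℕ) (hk : 3 ≤ k) (ε : ℝ) (hε1 : 0 < ε) (hε2 : ε < 1)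
    (hε3 : ε < ((k : ℝ) - 2) / 4)
    (c : ℝ) (hc1 : 0 < c) (hc2 : c < ((k : ℝ) - 2 - 4 * ε) / (2 * k - 2 - 4 * ε))
    (Fseq : ℕ → Set ℝ)
    (h0 : Fseq 0 = Set.Icc (0 : ℝ) 1)
    (hsucc : ∀ m, Fseq (m + 1) =
      (fun x => c * x) '' Fseq m ∪ (fun x => c * x + 1 - c) '' Fseq m) :
    ¬ ContainsKAP (⋂ m, Fseq m) k ε := by
  have hk3 : (3 : ℝ) ≤ (k : ℝ) := by exact_mod_cast hk
  have hε3' : 4 * ε < (k : ℝ) - 2 := by linarith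
  have hK : 0 < (k : ℝ) - 1 - 2 * ε := by linarith
  have hB : 0 < 2 * (k : ℝ) - 2 - 4 * ε := by linarith
  have hc2' : c * (2 * (k : ℝ) - 2 - 4 * ε) < (k : ℝ) - 2 - 4 * ε :=
    (lt_div_iff₀ hB).mp hc2
  have hc12 : c < 1 / 2 := by nlinarith
  -- All levels sit inside [0,1]
  have hcIcc : ∀ m, Fseq m ⊆ Set.Icc (0 : ℝ) 1 := by
    intro m
    induction m with
    | zero => rw [h0]
    | succ m ih =>
      rw [hsucc]
      rintro x (⟨y, hy, h⟩ | ⟨y, hy, h⟩)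
      · have h' : c * y = x := h
        have hy' := ih hy
        constructor
        · nlinarith [hy'.1, hy'.2]
        · nlinarith [hy'.1, hy'.2]
      · have h' : c * y + 1 - c = x := h
        have hy' := ih hy
        constructor
        · nlinarith [hy'.1, hy'.2]
        · nlinarith [hy'.1, hy'.2]
  -- A (k,ε)-AP in [0,1] has small step
  have span : ∀ (a Δ : ℝ) (b : ℕ → ℝ), 0 < Δ →
      (∀ i < k, |b i - (a + i * Δ)| ≤ ε * Δ) →
      (∀ i < k, b i ∈ Set.Icc (0 : ℝ) 1) → ((k : ℝ) - 1 - 2 * ε) * Δ ≤ 1 := by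
    intro a Δ b hΔ hap hb
    have h0k : 0 < k := by omega
    have hkk : k - 1 < k := by omega
    have h1 := hap 0 h0k
    have h2 := hap (k - 1) hkk
    have hb0 := hb 0 h0k
    have hbk := hb (k - 1) hkk
    have hcast : ((k - 1 : ℕ) : ℝ) = (k : ℝ) - 1 := by
      push_cast [Nat.cast_sub (by omega : 1 ≤ k)]; ring
    rw [hcast] at h2
    rw [abs_le] at h1 h2
    norm_num at h1
    have e1 := h1.1
    have e2 := h2.2
    have := hb0.2
    have := hbk.1
    nlinarith [hb0.1, hb0.2, hbk.1, hbk.2, h1.1, h1.2, h2.1, h2.2]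
  -- Main induction
  have main : ∀ m (a Δ : ℝ) (b : ℕ → ℝ), 0 < Δ →
      (∀ i < k, |b i - (a + i * Δ)| ≤ ε * Δ) →
      (∀ i < k, b i ∈ Fseq m) → ((k : ℝ) - 1 - 2 * ε) * Δ ≤ c ^ m := by
    intro m
    induction m with
    | zero =>
      intro a Δ b hΔ hap hb
      have hb' : ∀ i < k, b i ∈ Set.Icc (0 : ℝ) 1 := by
        intro i hi; have := hb i hi; rwa [h0] at this
      simpa using span a Δ b hΔ hap hb'
    | succ m ih =>
      intro a Δ b hΔ hap hb
      have hbIcc : ∀ i < k, b i ∈ Set.Icc (0 : ℝ) 1 := fun i hi => hcIcc _ (hb i hi)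
      have hside : ∀ i < k, b i ≤ c ∨ 1 - c ≤ b i := by
        intro i hi
        have hmem := hb i hi
        rw [hsucc] at hmem
        rcases hmem with ⟨y, hy, h⟩ | ⟨y, hy, h⟩
        · have h' : c * y = b i := h
          have hy' := hcIcc m hy
          left; nlinarith [hy'.1, hy'.2]
        · have h' : c * y + 1 - c = b i := h
          have hy' := hcIcc m hy
          right; nlinarith [hy'.1, hy'.2]
      have hspan := span a Δ b hΔ hap hbIcc
      have hsame : (∀ i < k, b i ≤ c) ∨ (∀ i < k, 1 - c ≤ b i) := by
        by_contra hcon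
        push_neg at hcon
        obtain ⟨⟨p, hp, hp'⟩, ⟨q, hq, hq'⟩⟩ := hcon
        have hpR : 1 - c ≤ b p := (hside p hp).resolve_left (by linarith)
        have hqL : b q ≤ c := (hside q hq).resolve_right (by linarith)
        have hcross : 1 - 2 * c ≤ (1 + 2 * ε) * Δ := by
          rcases lt_trichotomy p q with h1 | h1 | h1
          · obtain ⟨i, hip, hiq, hPi, hPi1⟩ :=
              flip_aux (P := fun j => 1 - c ≤ b j) h1 hpR (show ¬ (1 - c ≤ b q) by linarith)
            have hik : i < k := by omega
            have hik1 : i + 1 < k := by omega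
            have hL : b (i + 1) ≤ c := (hside _ hik1).resolve_right hPi1
            have a1 := hap i hik
            have a2 := hap (i + 1) hik1
            rw [abs_le] at a1 a2
            push_cast at a1 a2
            linarith [a1.1, a1.2, a2.1, a2.2]
          · exfalso; rw [h1] at hpR; linarith
          · obtain ⟨i, hiq, hip, hPi, hPi1⟩ :=
              flip_aux (P := fun j => b j ≤ c) h1 hqL (show ¬ (b p ≤ c) by linarith)
            have hik : i < k := by omega
            have hik1 : i + 1 < k := by omega
            have hR : 1 - c ≤ b (i + 1) := (hside _ hik1).resolve_left hPi1
            have a1 := hap i hik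
            have a2 := hap (i + 1) hik1
            rw [abs_le] at a1 a2
            push_cast at a1 a2
            linarith [a1.1, a1.2, a2.1, a2.2]
        have m1 := mul_le_mul_of_nonneg_right hcross hK.le
        have m2 := mul_le_mul_of_nonneg_left hspan (by linarith : (0:ℝ) ≤ 1 + 2 * ε)
        nlinarith [m1, m2, hc2']
      have hstep : ((k : ℝ) - 1 - 2 * ε) * (Δ / c) ≤ c ^ m := by
        rcases hsame with hall | hall
        · have hb' : ∀ i < k, b i / c ∈ Fseq m := by
            intro i hi
            have hmem := hb i hi
            rw [hsucc] at hmem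
            rcases hmem with ⟨y, hy, h⟩ | ⟨y, hy, h⟩
            · have h' : c * y = b i := h
              have : b i / c = y := by rw [← h', mul_div_cancel_left₀ y hc1.ne']
              rw [this]; exact hy
            · have h' : c * y + 1 - c = b i := h
              have hy' := hcIcc m hy
              exfalso
              have := hall i hi
              nlinarith [hy'.1]
          have hap' : ∀ i < k, |b i / c - (a / c + i * (Δ / c))| ≤ ε * (Δ / c) := by
            intro i hi
            have h := hap i hi
            have e : b i / c - (a / c + i * (Δ / c)) = (b i - (a + i * Δ)) / c := by
              field_simp
            rw [e, abs_div, abs_of_pos hc1, show ε * (Δ / c) = (ε * Δ) / c by ring]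
            exact div_le_div_of_nonneg_right h hc1.le |>.trans_eq rfl
          exact ih (a / c) (Δ / c) (fun i => b i / c) (div_pos hΔ hc1) hap' hb'
        · have hb' : ∀ i < k, (b i - 1 + c) / c ∈ Fseq m := by
            intro i hi
            have hmem := hb i hi
            rw [hsucc] at hmem
            rcases hmem with ⟨y, hy, h⟩ | ⟨y, hy, h⟩
            · have h' : c * y = b i := h
              have hy' := hcIcc m hy
              exfalso
              have := hall i hi
              nlinarith [hy'.2]
            · have h' : c * y + 1 - c = b i := h
              have h2 : b i - 1 + c = c * y := by linarith
              rw [h2, mul_div_cancel_left₀ y hc1.ne']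
              exact hy
          have hap' : ∀ i < k,
              |(b i - 1 + c) / c - ((a - 1 + c) / c + i * (Δ / c))| ≤ ε * (Δ / c) := by
            intro i hi
            have h := hap i hi
            have e : (b i - 1 + c) / c - ((a - 1 + c) / c + i * (Δ / c))
                = (b i - (a + i * Δ)) / c := by field_simp; ring
            rw [e, abs_div, abs_of_pos hc1, show ε * (Δ / c) = (ε * Δ) / c by ring]
            exact div_le_div_of_nonneg_right h hc1.le
          exact ih ((a - 1 + c) / c) (Δ / c) (fun i => (b i - 1 + c) / c)
            (div_pos hΔ hc1) hap' hb'
      have : ((k : ℝ) - 1 - 2 * ε) * Δ = (((k : ℝ) - 1 - 2 * ε) * (Δ / c)) * c := by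
        field_simp
      rw [pow_succ, this]
      exact mul_le_mul_of_nonneg_right hstep hc1.le
  rintro ⟨b, hbF, a, Δ, hΔ, hap⟩
  have hbm : ∀ m, ∀ i < k, b i ∈ Fseq m := fun m i hi => Set.mem_iInter.mp (hbF i hi) m
  obtain ⟨m, hm⟩ := exists_pow_lt_of_lt_one (mul_pos hK hΔ) (by linarith : c < 1)
  exact absurd (main m a Δ b hΔ hap (hbm m)) (not_le.mpr hm)
end

section
/- Let d ≥ 1 and 1 ≤ m ≤ d be integers, let k ≥ 2 be an integer, and let ε ∈ (0, 1/√d). Suppose F ⊆ ℝ^d is such that there exists an orthonormal family e = {e_1, …, e_m} of vectors in ℝ^d for which F does not contain any (k,ε,e)-AP. Then the Hausdorff dimension of F satisfies dim_H F ≤ d + log(1 − 1/k^m) / log(k·⌈√d/(2ε)⌉), where ⌈x⌉ denotes the smallest integer greater than or equal to x. -/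
open Metric EMetric Set Filter MeasureTheory Topology

/-- A set `F ⊆ ℝ^d` contains a `(k, ε, e)`-AP, where `e = (e 1, …, e m)` is a family of
vectors in `ℝ^d`: there exist `t ∈ ℝ^d` and `Δ > 0` such that every point
`t + Δ (x 1 • e 1 + ⋯ + x m • e m)` with `x i ∈ {0, …, k-1}` is within distance `ε Δ`
of some point of `F`. -/
def ContainsKAPd {d m : ℕ} (F : Set (EuclideanSpace ℝ (Fin d)))
    (k : ℕ) (ε : ℝ) (e : Fin m → EuclideanSpace ℝ (Fin d)) : Prop :=
  ∃ (t : EuclideanSpace ℝ (Fin d)) (Δ : ℝ), 0 < Δ ∧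
    ∀ x : Fin m → ℕ, (∀ i, x i < k) →
      ∃ y ∈ F, ‖t + Δ • (∑ i, (x i : ℝ) • e i) - y‖ ≤ ε * Δ


namespace AP10

def cube {d : ℕ} (a : Fin d → ℝ) (r : ℝ) : Set (EuclideanSpace ℝ (Fin d)) :=
  {p | ∀ i, a i ≤ p i ∧ p i < a i + r}

theorem sum_single_apply {d m : ℕ} (hmd : m ≤ d) (x : Fin m → ℕ) (i : Fin d) :
    (∑ j, (x j : ℝ) • EuclideanSpace.single (Fin.castLE hmd j) (1:ℝ)) i
      = if h : (i:ℕ) < m then (x ⟨i, h⟩ : ℝ) else 0 := by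
  rw [WithLp.ofLp_sum, Finset.sum_apply]
  simp only [PiLp.smul_apply, EuclideanSpace.single_apply, smul_eq_mul, mul_ite, mul_one, mul_zero]
  by_cases h : (i:ℕ) < m
  · rw [dif_pos h, Finset.sum_eq_single (⟨i, h⟩ : Fin m)]
    · simp [Fin.ext_iff]
    · intro j _ hj
      rw [if_neg]
      intro he
      exact hj (Fin.ext (by simpa [Fin.ext_iff] using he.symm))
    · simp
  · rw [dif_neg h]
    apply Finset.sum_eq_zero
    intro j _
    rw [if_neg]
    intro he
    exact h (by rw [he, Fin.coe_castLE]; exact j.2)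

theorem norm_le_sqrt_mul {d : ℕ} (z : EuclideanSpace ℝ (Fin d)) (c : ℝ) (hc : 0 ≤ c)
    (h : ∀ i, |z i| ≤ c) : ‖z‖ ≤ Real.sqrt d * c := by
  rw [EuclideanSpace.norm_eq]
  have hsum : ∑ i, ‖z i‖ ^ 2 ≤ (d : ℝ) * c ^ 2 := by
    calc ∑ i, ‖z i‖ ^ 2 ≤ ∑ _i : Fin d, c ^ 2 := by
          apply Finset.sum_le_sum
          intro i _
          exact pow_le_pow_left₀ (norm_nonneg _) (by simpa [Real.norm_eq_abs] using h i) 2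
      _ = (d : ℝ) * c ^ 2 := by simp [Finset.sum_const, mul_comm]
  calc Real.sqrt (∑ i, ‖z i‖ ^ 2) ≤ Real.sqrt ((d:ℝ) * c ^ 2) := Real.sqrt_le_sqrt hsum
    _ = Real.sqrt d * c := by
        rw [Real.sqrt_mul (Nat.cast_nonneg d), Real.sqrt_sq hc]

/-- subdivision of a cube into `N^d` subcubes -/
theorem cube_subset_iUnion {d N : ℕ} (hN : 0 < N) (a : Fin d → ℝ) {r : ℝ} (hr : 0 < r) :
    cube a r ⊆ ⋃ v : Fin d → Fin N, cube (fun i => a i + (v i : ℝ) * (r / N)) (r / N) := by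
  intro p hp
  have hN' : (0:ℝ) < N := by exact_mod_cast hN
  have hu : (0:ℝ) < r / N := div_pos hr hN'
  have hv : ∀ i, ⌊(p i - a i) / (r / N)⌋₊ < N := by
    intro i
    have h1 : 0 ≤ (p i - a i) / (r / N) := div_nonneg (by linarith [(hp i).1]) hu.le
    rw [Nat.floor_lt h1, div_lt_iff₀ hu]
    have h3 : (N:ℝ) * (r / N) = r := by field_simp
    rw [h3]
    linarith [(hp i).2]
  refine mem_iUnion.2 ⟨fun i => ⟨⌊(p i - a i) / (r / N)⌋₊, hv i⟩, fun i => ?_⟩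
  have h1 : 0 ≤ (p i - a i) / (r / N) := div_nonneg (by linarith [(hp i).1]) hu.le
  constructor
  · have h2 : (⌊(p i - a i) / (r / N)⌋₊ : ℝ) * (r / N) ≤ p i - a i := by
      rw [← le_div_iff₀ hu]; exact Nat.floor_le h1
    simp only
    linarith
  · have h2 : p i - a i < ((⌊(p i - a i) / (r / N)⌋₊ : ℝ) + 1) * (r / N) := by
      rw [← div_lt_iff₀ hu]; exact_mod_cast Nat.lt_floor_add_one ((p i - a i) / (r / N))
    simp only
    linarith [h2]

def rep {d m k Q : ℕ} (hmd : m ≤ d)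
    (q : Fin m → Fin Q) (w : Fin (d-m) → Fin (k*Q)) (x : Fin m → Fin k) :
    Fin d → Fin (k*Q) :=
  fun i => if h : (i:ℕ) < m then
    ⟨(q ⟨i,h⟩ : ℕ) + Q * (x ⟨i,h⟩ : ℕ), by
      have h1 : (q ⟨i,h⟩ : ℕ) < Q := (q _).2
      have h2 : (x ⟨i,h⟩ : ℕ) + 1 ≤ k := (x _).2
      calc (q ⟨i,h⟩ : ℕ) + Q * (x ⟨i,h⟩ : ℕ) < Q * ((x ⟨i,h⟩ : ℕ) + 1) := by
            rw [Nat.mul_add, Nat.mul_one]; omega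
        _ ≤ Q * k := Nat.mul_le_mul_left Q h2
        _ = k * Q := Nat.mul_comm Q k⟩
  else ⟨(w ⟨i.1 - m, by have := i.2; omega⟩ : ℕ), (w _).2⟩


theorem rep_val {d m k Q : ℕ} (hmd : m ≤ d)
    (q : Fin m → Fin Q) (w : Fin (d-m) → Fin (k*Q)) (x : Fin m → Fin k) (i : Fin d)
    (h : (i:ℕ) < m) : (rep hmd q w x i : ℕ) = (q ⟨i,h⟩ : ℕ) + Q * (x ⟨i,h⟩ : ℕ) := by
  simp [rep, h]

theorem rep_val' {d m k Q : ℕ} (hmd : m ≤ d)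
    (q : Fin m → Fin Q) (w : Fin (d-m) → Fin (k*Q)) (x : Fin m → Fin k) (i : Fin d)
    (h : ¬ (i:ℕ) < m) :
    (rep hmd q w x i : ℕ) = (w ⟨i.1 - m, by have := i.2; omega⟩ : ℕ) := by
  simp [rep, h]

set_option maxHeartbeats 2000000 in
theorem step {d m k Q : ℕ} (hmd : m ≤ d) (hm1 : 1 ≤ m) (hk : 2 ≤ k) (hQ : 1 ≤ Q)
    {ε : ℝ} (hε : 0 < ε) (hQε : Real.sqrt d ≤ 2 * ε * Q)
    (G : Set (EuclideanSpace ℝ (Fin d)))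
    (hG : ¬ ContainsKAPd G k ε (fun j : Fin m => EuclideanSpace.single (Fin.castLE hmd j) 1))
    (a : Fin d → ℝ) (r : ℝ) (hr : 0 < r) :
    ∃ S : Finset (Fin d → Fin (k*Q)), S.card ≤ (k*Q)^d - Q^m * (k*Q)^(d-m) ∧
      G ∩ cube a r ⊆
        ⋃ v ∈ S, cube (fun i => a i + (v i : ℝ) * (r/(k*Q))) (r/(k*Q)) := by
  classical
  have hN : 0 < k * Q := by positivity
  have hN' : (0:ℝ) < (k*Q : ℕ) := by exact_mod_cast hN
  set u : ℝ := r / (k*Q : ℕ) with hu_def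
  have hu : 0 < u := div_pos hr hN'
  set S : Finset (Fin d → Fin (k*Q)) :=
    Finset.univ.filter
      (fun v => (G ∩ cube (fun i => a i + (v i : ℝ) * u) u).Nonempty) with hS_def
  refine ⟨S, ?_, ?_⟩
  · -- cardinality bound
    set B : Finset (Fin d → Fin (k*Q)) :=
      Finset.univ.filter
        (fun v => ¬ (G ∩ cube (fun i => a i + (v i : ℝ) * u) u).Nonempty) with hB_def
    have hSB : S.card + B.card = (k*Q)^d := by
      rw [hS_def, hB_def, Finset.card_filter_add_card_filter_not]
      simp [Finset.card_univ]
    -- in every class there is an empty subcube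
    have key : ∀ qw : (Fin m → Fin Q) × (Fin (d-m) → Fin (k*Q)),
        ∃ x : Fin m → Fin k, rep hmd qw.1 qw.2 x ∈ B := by
      rintro ⟨q, w⟩
      by_contra hcon
      push_neg at hcon
      have hne : ∀ x : Fin m → Fin k,
          (G ∩ cube (fun i => a i + ((rep hmd q w x i : ℕ) : ℝ) * u) u).Nonempty := by
        intro x
        have := hcon x
        rw [hB_def, Finset.mem_filter] at this
        by_contra hemp
        exact this ⟨Finset.mem_univ _, hemp⟩
      choose y hyG hyc using fun x => (hne x)
      apply hG
      have hk0 : 0 < k := by omega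
      set x0 : Fin m → Fin k := fun _ => ⟨0, hk0⟩ with hx0_def
      set t0 : EuclideanSpace ℝ (Fin d) :=
        WithLp.toLp 2 (fun i => a i + ((rep hmd q w x0 i : ℕ) : ℝ) * u + u/2) with ht0_def
      refine ⟨t0, Q * u, by positivity, ?_⟩
      intro xh hxh
      set x : Fin m → Fin k := fun j => ⟨xh j, hxh j⟩ with hx_def
      refine ⟨y x, hyG x, ?_⟩
      set v : EuclideanSpace ℝ (Fin d) :=
        ∑ j, (xh j : ℝ) • EuclideanSpace.single (Fin.castLE hmd j) 1 with hv_def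
      have hcoord : ∀ i : Fin d, |(t0 + (Q * u) • v - y x) i| ≤ u/2 := by
        intro i
        have happ : (t0 + (Q * u) • v - y x) i = t0 i + (Q * u) * v i - y x i := by
          simp [PiLp.add_apply, PiLp.sub_apply, PiLp.smul_apply]
        have ht0i : t0 i = a i + ((rep hmd q w x0 i : ℕ) : ℝ) * u + u/2 := rfl
        have hvi : v i = if h : (i:ℕ) < m then (xh ⟨i, h⟩ : ℝ) else 0 := by
          rw [hv_def]; exact sum_single_apply hmd xh i
        have hyci : a i + ((rep hmd q w x i : ℕ) : ℝ) * u ≤ y x i ∧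
            y x i < a i + ((rep hmd q w x i : ℕ) : ℝ) * u + u := (hyc x) i
        rw [happ, ht0i, hvi]
        by_cases h : (i:ℕ) < m
        · rw [dif_pos h]
          rw [rep_val hmd q w x i h] at hyci
          rw [rep_val hmd q w x0 i h]
          have h0 : ((x0 ⟨i, h⟩ : ℕ) : ℝ) = 0 := by rw [hx0_def]; simp
          have hxv : ((x ⟨i, h⟩ : ℕ) : ℝ) = ((xh ⟨i, h⟩ : ℕ) : ℝ) := by rw [hx_def]
          rw [abs_le]
          push_cast [h0, hxv] at hyci ⊢
          constructor <;> nlinarith [hyci.1, hyci.2]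
        · rw [dif_neg h]
          rw [rep_val' hmd q w x i h] at hyci
          rw [rep_val' hmd q w x0 i h]
          rw [abs_le]
          push_cast at hyci ⊢
          constructor <;> nlinarith [hyci.1, hyci.2]
      calc ‖t0 + (Q * u) • v - y x‖ ≤ Real.sqrt d * (u/2) :=
            norm_le_sqrt_mul _ _ (by positivity) hcoord
        _ ≤ (2 * ε * Q) * (u/2) := mul_le_mul_of_nonneg_right hQε (by positivity)
        _ = ε * (Q * u) := by ring
    choose xsel hxsel using key
    set f : ((Fin m → Fin Q) × (Fin (d-m) → Fin (k*Q))) → (Fin d → Fin (k*Q)) :=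
      fun qw => rep hmd qw.1 qw.2 (xsel qw) with hf_def
    have hinj : Function.Injective f := by
      rintro ⟨q, w⟩ ⟨q', w'⟩ hfe
      have hq : q = q' := by
        funext j
        have hjd : (j : ℕ) < d := lt_of_lt_of_le j.2 hmd
        have := congrFun hfe ⟨j, hjd⟩
        have hval := congrArg Fin.val this
        rw [hf_def] at hval
        simp only at hval
        rw [rep_val hmd _ _ _ _ (by simpa using j.2), rep_val hmd _ _ _ _ (by simpa using j.2)]
          at hval
        have h1 : (q ⟨(⟨j, hjd⟩ : Fin d), by simpa using j.2⟩ : ℕ)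
            = (q' ⟨(⟨j, hjd⟩ : Fin d), by simpa using j.2⟩ : ℕ) := by
          have := congrArg (· % Q) hval
          simpa [Nat.add_mul_mod_self_left, Nat.mod_eq_of_lt (q _).2,
            Nat.mod_eq_of_lt (q' _).2] using this
        have hjj : (⟨(⟨j, hjd⟩ : Fin d).1, by simpa using j.2⟩ : Fin m) = j := by
          apply Fin.ext; rfl
        rw [hjj] at h1
        exact Fin.ext h1
      have hw : w = w' := by
        funext j
        have hjd : m + (j : ℕ) < d := by have := j.2; omega
        have := congrFun hfe ⟨m + j, hjd⟩
        have hval := congrArg Fin.val this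
        rw [hf_def] at hval
        simp only at hval
        rw [rep_val' hmd _ _ _ _ (Nat.not_lt.2 (Nat.le_add_right m j)),
          rep_val' hmd _ _ _ _ (Nat.not_lt.2 (Nat.le_add_right m j))] at hval
        have hjj : (⟨(⟨m + j, hjd⟩ : Fin d).1 - m, by have := j.2; omega⟩ : Fin (d-m)) = j := by
          apply Fin.ext; simp
        rw [hjj] at hval
        exact Fin.ext hval
      simp [Prod.ext_iff, hq, hw]
    have hmaps : ∀ qw ∈ (Finset.univ : Finset ((Fin m → Fin Q) × (Fin (d-m) → Fin (k*Q)))),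
        f qw ∈ B := fun qw _ => hxsel qw
    have hcard := Finset.card_le_card_of_injOn f hmaps (hinj.injOn)
    have hcard2 : Q^m * (k*Q)^(d-m) ≤ B.card := by
      calc Q^m * (k*Q)^(d-m)
          = Fintype.card ((Fin m → Fin Q) × (Fin (d-m) → Fin (k*Q))) := by simp
        _ = (Finset.univ : Finset ((Fin m → Fin Q) × (Fin (d-m) → Fin (k*Q)))).card := by
            simp [Finset.card_univ]
        _ ≤ B.card := hcard
    omega
  · -- covering
    rintro p ⟨hpG, hpc⟩
    have := cube_subset_iUnion hN a hr hpc
    rw [mem_iUnion] at this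
    obtain ⟨v, hv⟩ := this
    refine mem_iUnion₂.2 ⟨v, ?_, by simpa [hu_def] using hv⟩
    rw [hS_def, Finset.mem_filter]
    exact ⟨Finset.mem_univ _, ⟨p, hpG, by simpa [hu_def] using hv⟩⟩


theorem iterate {d m k Q : ℕ} (hmd : m ≤ d) (hm1 : 1 ≤ m) (hk : 2 ≤ k) (hQ : 1 ≤ Q)
    {ε : ℝ} (hε : 0 < ε) (hQε : Real.sqrt d ≤ 2 * ε * Q)
    (G : Set (EuclideanSpace ℝ (Fin d)))
    (hG : ¬ ContainsKAPd G k ε (fun j : Fin m => EuclideanSpace.single (Fin.castLE hmd j) 1))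
    (a : Fin d → ℝ) {r : ℝ} (hr : 0 < r) (n : ℕ) :
    ∃ S : Finset (Fin d → ℝ),
      S.card ≤ ((k*Q)^d - Q^m * (k*Q)^(d-m))^n ∧
      G ∩ cube a r ⊆ ⋃ c ∈ S, cube c (r / ((k*Q : ℕ) : ℝ)^n) := by
  classical
  have hN' : (0:ℝ) < ((k*Q : ℕ) : ℝ) := by positivity
  induction n with
  | zero =>
    refine ⟨{a}, by simp, ?_⟩
    simp only [pow_zero, div_one, Finset.mem_singleton, iUnion_iUnion_eq_left]
    exact inter_subset_right
  | succ n ih =>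
    obtain ⟨S, hcard, hcov⟩ := ih
    have hrn : 0 < r / ((k*Q : ℕ) : ℝ)^n := by positivity
    choose T hTcard hTcov using fun c : Fin d → ℝ =>
      step hmd hm1 hk hQ hε hQε G hG c (r / ((k*Q : ℕ) : ℝ)^n) hrn
    refine ⟨S.biUnion (fun c => (T c).image
        (fun v => fun i => c i + (v i : ℝ) * ((r / ((k*Q : ℕ) : ℝ)^n) / ((k*Q : ℕ) : ℝ)))),
      ?_, ?_⟩
    · calc (S.biUnion _).card ≤ ∑ c ∈ S, ((T c).image _).card := Finset.card_biUnion_le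
        _ ≤ ∑ _c ∈ S, ((k*Q)^d - Q^m * (k*Q)^(d-m)) := by
            apply Finset.sum_le_sum
            intro c _
            exact le_trans (Finset.card_image_le) (hTcard c)
        _ = S.card * ((k*Q)^d - Q^m * (k*Q)^(d-m)) := by
            rw [Finset.sum_const, smul_eq_mul]
        _ ≤ ((k*Q)^d - Q^m * (k*Q)^(d-m))^n * ((k*Q)^d - Q^m * (k*Q)^(d-m)) :=
            Nat.mul_le_mul_right _ hcard
        _ = ((k*Q)^d - Q^m * (k*Q)^(d-m))^(n+1) := (pow_succ _ n).symm
    · intro p hp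
      obtain ⟨hpG, hpc0⟩ := hp
      have := hcov ⟨hpG, hpc0⟩
      rw [mem_iUnion₂] at this
      obtain ⟨c, hcS, hpc⟩ := this
      have := hTcov c ⟨hpG, hpc⟩
      rw [mem_iUnion₂] at this
      obtain ⟨v, hvT, hpv⟩ := this
      rw [mem_iUnion₂]
      refine ⟨_, Finset.mem_biUnion.2 ⟨c, hcS, Finset.mem_image.2 ⟨v, hvT, rfl⟩⟩, ?_⟩
      have harith : (r / ((k*Q : ℕ) : ℝ)^n) / ((k*Q : ℕ) : ℝ) = r / ((k*Q : ℕ) : ℝ)^(n+1) := by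
        rw [div_div, pow_succ]
      rw [← harith]
      convert hpv using 2 <;> (push_cast; ring)

theorem cube_ediam {d : ℕ} (a : Fin d → ℝ) {u : ℝ} (hu : 0 ≤ u) :
    EMetric.diam (cube a u) ≤ ENNReal.ofReal (Real.sqrt d * u) := by
  apply EMetric.diam_le
  intro x hx y hy
  rw [edist_dist]
  apply ENNReal.ofReal_le_ofReal
  rw [dist_eq_norm]
  apply norm_le_sqrt_mul _ _ hu
  intro i
  have h1 := hx i
  have h2 := hy i
  have : (x - y) i = x i - y i := by simp [PiLp.sub_apply]
  rw [this, abs_le]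
  constructor <;> linarith [h1.1, h1.2, h2.1, h2.2]

theorem key_real {d : ℕ} (M N : ℕ) (hN : 0 < N) (hd : 1 ≤ d) (s : ℝ) (n : ℕ) :
    ((M:ℝ))^n * (Real.sqrt d * (1/(N:ℝ)^n))^s
      = (Real.sqrt d)^s * ((M:ℝ) / (N:ℝ)^s)^n := by
  have hN' : (0:ℝ) < N := by exact_mod_cast hN
  have hd' : (0:ℝ) < Real.sqrt d := Real.sqrt_pos.2 (by exact_mod_cast hd)
  have h1 : ((N:ℝ)^n)^s = ((N:ℝ)^s)^n := by
    rw [← Real.rpow_natCast ((N:ℝ)) n, ← Real.rpow_mul hN'.le, mul_comm,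
      Real.rpow_mul hN'.le, Real.rpow_natCast]
  rw [Real.mul_rpow hd'.le (by positivity), one_div, Real.inv_rpow (by positivity), h1]
  have hNs : (0:ℝ) < ((N:ℝ)^s)^n := by positivity
  field_simp
  rw [← mul_pow, mul_div_cancel₀ _ (ne_of_gt (by positivity : (0:ℝ) < (N:ℝ)^s))]

theorem measure_zero_of_covers {d : ℕ} (hd : 1 ≤ d) (M N : ℕ) (hN : 2 ≤ N)
    (E : Set (EuclideanSpace ℝ (Fin d)))
    (S : ℕ → Finset (Fin d → ℝ))
    (hcard : ∀ n, (S n).card ≤ M^n)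
    (hcov : ∀ n, E ⊆ ⋃ c ∈ S n, cube c ((1:ℝ) / (N:ℝ)^n))
    {s : ℝ} (hs0 : 0 < s) (hs : (M:ℝ) < (N:ℝ) ^ s) :
    μH[s] E = 0 := by
  have hN' : (0:ℝ) < N := by positivity
  have hd' : (0:ℝ) < Real.sqrt d := Real.sqrt_pos.2 (by exact_mod_cast hd)
  -- the radii
  have hrt : Tendsto (fun n : ℕ => Real.sqrt d * ((1:ℝ) / (N:ℝ)^n)) atTop (𝓝 0) := by
    have h1 : Tendsto (fun n : ℕ => ((1:ℝ) / (N:ℝ))^n) atTop (𝓝 0) := by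
      apply tendsto_pow_atTop_nhds_zero_of_lt_one (by positivity)
      rw [div_lt_one hN']
      exact_mod_cast by omega
    have h2 : (fun n : ℕ => Real.sqrt d * ((1:ℝ) / (N:ℝ)^n))
        = fun n => Real.sqrt d * ((1:ℝ)/(N:ℝ))^n := by
      funext n; rw [div_pow, one_pow]
    rw [h2]
    simpa using h1.const_mul (Real.sqrt d)
  have hr0 : Tendsto (fun n : ℕ => ENNReal.ofReal (Real.sqrt d * ((1:ℝ) / (N:ℝ)^n)))
      atTop (𝓝 0) := by
    have := (ENNReal.continuous_ofReal.tendsto 0).comp hrt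
    simpa only [ENNReal.ofReal_zero, Function.comp_def] using this
  have hmain := Measure.hausdorffMeasure_le_liminf_sum s E
    (fun n => ENNReal.ofReal (Real.sqrt d * ((1:ℝ) / (N:ℝ)^n))) hr0
    (fun n (c : ↥(S n)) => cube (c : Fin d → ℝ) ((1:ℝ) / (N:ℝ)^n))
    (Eventually.of_forall fun n i => cube_ediam _ (by positivity))
    (Eventually.of_forall fun n => by
      intro p hp
      have := hcov n hp
      rw [mem_iUnion₂] at this
      obtain ⟨c, hc, hpc⟩ := this
      exact mem_iUnion.2 ⟨⟨c, hc⟩, hpc⟩)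
  refine le_antisymm (le_trans hmain ?_) zero_le
  -- bound each sum
  have hbound : ∀ n : ℕ, (∑ i : ↥(S n), EMetric.diam
        (cube (i : Fin d → ℝ) ((1:ℝ) / (N:ℝ)^n)) ^ s)
      ≤ ENNReal.ofReal ((Real.sqrt d)^s * ((M:ℝ) / (N:ℝ)^s)^n) := by
    intro n
    have h1 : ∀ i : ↥(S n), EMetric.diam (cube (i : Fin d → ℝ) ((1:ℝ) / (N:ℝ)^n)) ^ s
        ≤ ENNReal.ofReal (Real.sqrt d * ((1:ℝ) / (N:ℝ)^n)) ^ s := fun i =>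
      ENNReal.rpow_le_rpow (cube_ediam _ (by positivity)) hs0.le
    calc (∑ i : ↥(S n), EMetric.diam (cube (i : Fin d → ℝ) ((1:ℝ) / (N:ℝ)^n)) ^ s)
        ≤ ∑ _i : ↥(S n), ENNReal.ofReal (Real.sqrt d * ((1:ℝ) / (N:ℝ)^n)) ^ s :=
          Finset.sum_le_sum (fun i _ => h1 i)
      _ = (Fintype.card ↥(S n)) * ENNReal.ofReal (Real.sqrt d * ((1:ℝ) / (N:ℝ)^n)) ^ s := by
          rw [Finset.sum_const, nsmul_eq_mul, Finset.card_univ]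
      _ ≤ (M^n : ℕ) * ENNReal.ofReal (Real.sqrt d * ((1:ℝ) / (N:ℝ)^n)) ^ s := by
          apply mul_le_mul_left
          exact_mod_cast by simpa [Fintype.card_coe] using hcard n
      _ = ENNReal.ofReal ((Real.sqrt d)^s * ((M:ℝ) / (N:ℝ)^s)^n) := by
          rw [← key_real M N (by omega) hd s n]
          rw [ENNReal.ofReal_rpow_of_pos (by positivity), ← ENNReal.ofReal_natCast (M^n),
            ← ENNReal.ofReal_mul (by positivity)]
          push_cast
          ring_nf
  have hg : Tendsto (fun n : ℕ => ENNReal.ofReal ((Real.sqrt d)^s * ((M:ℝ) / (N:ℝ)^s)^n))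
      atTop (𝓝 0) := by
    have hρ : Tendsto (fun n : ℕ => (Real.sqrt d)^s * ((M:ℝ) / (N:ℝ)^s)^n) atTop (𝓝 0) := by
      have h1 : Tendsto (fun n : ℕ => ((M:ℝ) / (N:ℝ)^s)^n) atTop (𝓝 0) := by
        apply tendsto_pow_atTop_nhds_zero_of_lt_one (by positivity)
        rw [div_lt_one (by positivity)]
        exact hs
      simpa using h1.const_mul ((Real.sqrt d)^s)
    have := (ENNReal.continuous_ofReal.tendsto 0).comp hρ
    simpa only [ENNReal.ofReal_zero, Function.comp_def] using this
  calc liminf (fun n : ℕ => ∑ i : ↥(S n), EMetric.diam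
        (cube (i : Fin d → ℝ) ((1:ℝ) / (N:ℝ)^n)) ^ s) atTop
      ≤ liminf (fun n : ℕ => ENNReal.ofReal ((Real.sqrt d)^s * ((M:ℝ) / (N:ℝ)^s)^n)) atTop :=
        liminf_le_liminf (Eventually.of_forall hbound)
    _ = 0 := hg.liminf_eq
theorem transfer {d m : ℕ} (hmd : m ≤ d) (k : ℕ) (ε : ℝ)
    (F : Set (EuclideanSpace ℝ (Fin d)))
    (e : Fin m → EuclideanSpace ℝ (Fin d)) (he : Orthonormal ℝ e)
    (hF : ¬ ContainsKAPd F k ε e) :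
    ∃ G : Set (EuclideanSpace ℝ (Fin d)), dimH G = dimH F ∧
      ¬ ContainsKAPd G k ε (fun j : Fin m => EuclideanSpace.single (Fin.castLE hmd j) 1) := by
  classical
  set v : Fin d → EuclideanSpace ℝ (Fin d) :=
    fun i => if h : (i:ℕ) < m then e ⟨i, h⟩ else 0 with hv_def
  set sm : Set (Fin d) := {i : Fin d | (i:ℕ) < m} with hsm_def
  have hrestrict : sm.restrict v = e ∘ (fun i : ↥sm => (⟨i.1.1, i.2⟩ : Fin m)) := by
    funext i
    simp only [Set.restrict_apply, hv_def, Function.comp_apply]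
    exact dif_pos i.2
  have hv : Orthonormal ℝ (sm.restrict v) := by
    rw [hrestrict]
    apply he.comp
    intro i j hij
    apply Subtype.ext
    apply Fin.ext
    simpa [Fin.ext_iff] using hij
  have hcard : Module.finrank ℝ (EuclideanSpace ℝ (Fin d)) = Fintype.card (Fin d) := by
    simp [finrank_euclideanSpace_fin]
  obtain ⟨b, hb⟩ := hv.exists_orthonormalBasis_extension_of_card_eq hcard
  have hbe : ∀ j : Fin m, b (Fin.castLE hmd j) = e j := by
    intro j
    have hmem : (Fin.castLE hmd j) ∈ sm := by
      rw [hsm_def]; exact j.2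
    rw [hb _ hmem, hv_def]
    simp only [dif_pos (show ((Fin.castLE hmd j : Fin d) : ℕ) < m from j.2)]
    congr 1
  refine ⟨⇑b.repr '' F, (b.repr.isometry).dimH_image F, ?_⟩
  rintro ⟨t, Δ, hΔ, hAP⟩
  apply hF
  refine ⟨b.repr.symm t, Δ, hΔ, ?_⟩
  intro x hx
  obtain ⟨y, hyG, hnorm⟩ := hAP x hx
  obtain ⟨y', hy'F, rfl⟩ := hyG
  refine ⟨y', hy'F, ?_⟩
  have hiso : ‖b.repr.symm t + Δ • (∑ i, (x i : ℝ) • e i) - y'‖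
      = ‖b.repr (b.repr.symm t + Δ • (∑ i, (x i : ℝ) • e i) - y')‖ :=
    (b.repr.norm_map _).symm
  rw [hiso]
  have hmap : b.repr (b.repr.symm t + Δ • (∑ i, (x i : ℝ) • e i) - y')
      = t + Δ • (∑ i, (x i : ℝ) • EuclideanSpace.single (Fin.castLE hmd i) 1) - b.repr y' := by
    rw [map_sub, map_add, b.repr.apply_symm_apply, _root_.map_smul, map_sum]
    have hterm : ∀ j : Fin m, b.repr ((x j : ℝ) • e j)
        = (x j : ℝ) • EuclideanSpace.single (Fin.castLE hmd j) 1 := fun j => by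
      rw [_root_.map_smul, ← hbe j, b.repr_self]
    simp_rw [hterm]
  rw [hmap]
  exact hnorm

end AP10

theorem stmt_10 (d m : ℕ) (hd : 1 ≤ d) (hm1 : 1 ≤ m) (hmd : m ≤ d)
    (k : ℕ) (hk : 2 ≤ k) (ε : ℝ) (hε1 : 0 < ε) (hε2 : ε < 1 / Real.sqrt d)
    (F : Set (EuclideanSpace ℝ (Fin d)))
    (e : Fin m → EuclideanSpace ℝ (Fin d)) (he : Orthonormal ℝ e)
    (hF : ¬ ContainsKAPd F k ε e) :
    dimH F ≤ ENNReal.ofReal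
      ((d : ℝ) + Real.log (1 - 1 / (k : ℝ) ^ m) /
        Real.log (k * ⌈Real.sqrt d / (2 * ε)⌉₊)) := by
  classical
  obtain ⟨G, hGdim, hG⟩ := AP10.transfer hmd k ε F e he hF
  set Q : ℕ := ⌈Real.sqrt d / (2 * ε)⌉₊ with hQ_def
  have hd0 : (0:ℝ) < Real.sqrt d := Real.sqrt_pos.2 (by exact_mod_cast hd)
  have hQpos : 1 ≤ Q := by
    rw [hQ_def]
    exact Nat.one_le_iff_ne_zero.2 (Nat.pos_iff_ne_zero.1 (Nat.ceil_pos.2 (by positivity)))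
  have hQε : Real.sqrt d ≤ 2 * ε * Q := by
    have h1 : Real.sqrt d / (2*ε) ≤ (Q:ℝ) := Nat.le_ceil _
    calc Real.sqrt d = (Real.sqrt d / (2*ε)) * (2*ε) := by field_simp
      _ ≤ (Q:ℝ) * (2*ε) := mul_le_mul_of_nonneg_right h1 (by positivity)
      _ = 2 * ε * Q := by ring
  set N : ℕ := k * Q with hN_def
  set M : ℕ := N^d - Q^m * N^(d-m) with hM_def
  have hN2 : 2 ≤ N := by
    calc 2 ≤ k := hk
      _ = k * 1 := (mul_one k).symm
      _ ≤ k * Q := Nat.mul_le_mul_left k hQpos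
  have hQltN : Q < N := by
    calc Q = 1 * Q := (one_mul Q).symm
      _ < k * Q := Nat.mul_lt_mul_of_lt_of_le (by omega) le_rfl (by omega)
  have hMle : Q^m * N^(d-m) ≤ N^d := by
    have h1 : Q^m ≤ N^m := Nat.pow_le_pow_left hQltN.le m
    calc Q^m * N^(d-m) ≤ N^m * N^(d-m) := Nat.mul_le_mul_right _ h1
      _ = N^d := by rw [← pow_add]; congr 1; omega
  have hMpos : 0 < M := by
    rw [hM_def]
    have h1 : Q^m < N^m := Nat.pow_lt_pow_left hQltN (by omega)
    have h2 : Q^m * N^(d-m) < N^m * N^(d-m) :=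
      Nat.mul_lt_mul_of_lt_of_le h1 le_rfl (Nat.pow_pos (by omega))
    have h3 : N^m * N^(d-m) = N^d := by rw [← pow_add]; congr 1; omega
    omega
  have hkm2 : (2:ℝ) ≤ (k:ℝ)^m := by
    have : (2:ℕ) ≤ k^m := le_trans hk (Nat.le_self_pow (by omega) k)
    exact_mod_cast this
  have h1km : 0 < 1 - 1/(k:ℝ)^m := by
    have h2 : 1/(k:ℝ)^m ≤ 1/2 := one_div_le_one_div_of_le two_pos hkm2
    linarith
  have hMreal : (M:ℝ) = (N:ℝ)^d * (1 - 1/(k:ℝ)^m) := by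
    have hcast : (M:ℝ) = (N:ℝ)^d - (Q:ℝ)^m * (N:ℝ)^(d-m) := by
      rw [hM_def]
      push_cast [Nat.cast_sub hMle]
      ring
    rw [hcast]
    have hNm : (N:ℝ)^m = (k:ℝ)^m * (Q:ℝ)^m := by
      rw [hN_def]; push_cast; rw [mul_pow]
    have hsplit : (N:ℝ)^d = (N:ℝ)^m * (N:ℝ)^(d-m) := by
      rw [← pow_add]; congr 1; omega
    rw [hsplit, hNm]
    have hk0 : (k:ℝ)^m ≠ 0 := by positivity
    field_simp
  have hlogN : 0 < Real.log (N:ℝ) := Real.log_pos (by exact_mod_cast hN2)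
  set t₀ : ℝ := (d:ℝ) + Real.log (1 - 1/(k:ℝ)^m) / Real.log (N:ℝ) with ht₀_def
  have hlogM : Real.log (M:ℝ) = t₀ * Real.log (N:ℝ) := by
    rw [hMreal, Real.log_mul (by positivity) (ne_of_gt h1km), Real.log_pow, ht₀_def]
    field_simp
  have ht₀nn : 0 ≤ t₀ := by
    have h1 : 0 ≤ Real.log (M:ℝ) := Real.log_nonneg (by exact_mod_cast hMpos)
    nlinarith [hlogN]
  have hgoal : ENNReal.ofReal
      ((d : ℝ) + Real.log (1 - 1 / (k : ℝ) ^ m) /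
        Real.log (k * ⌈Real.sqrt d / (2 * ε)⌉₊)) = ENNReal.ofReal t₀ := by
    congr 1
    rw [ht₀_def, hN_def, hQ_def]
    push_cast
    ring
  rw [← hGdim, hgoal]
  apply dimH_le
  intro s' hs'
  by_contra hcon
  push_neg at hcon
  have hst : t₀ < (s':ℝ) := by
    rw [← ENNReal.ofReal_coe_nnreal] at hcon
    exact (ENNReal.ofReal_lt_ofReal_iff_of_nonneg ht₀nn).1 hcon
  have hs'0 : 0 < (s':ℝ) := lt_of_le_of_lt ht₀nn hst
  have hMN : (M:ℝ) < (N:ℝ)^(s':ℝ) := by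
    have h1 : Real.log (M:ℝ) < (s':ℝ) * Real.log (N:ℝ) := by
      rw [hlogM]
      exact mul_lt_mul_of_pos_right hst hlogN
    calc (M:ℝ) = Real.exp (Real.log (M:ℝ)) :=
          (Real.exp_log (by exact_mod_cast hMpos)).symm
      _ < Real.exp ((s':ℝ) * Real.log (N:ℝ)) := Real.exp_lt_exp.2 h1
      _ = (N:ℝ)^(s':ℝ) := by
          rw [Real.rpow_def_of_pos (by exact_mod_cast (by omega : 0 < N)), mul_comm]
  have hmu : μH[(s':ℝ)] G = 0 := by
    have hcover : G ⊆ ⋃ z : Fin d → ℤ, (G ∩ AP10.cube (fun i => (z i : ℝ)) 1) := by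
      intro p hp
      refine mem_iUnion.2 ⟨fun i => ⌊p i⌋, hp, fun i => ⟨Int.floor_le _, ?_⟩⟩
      simpa using Int.lt_floor_add_one (p i)
    apply measure_mono_null hcover
    apply measure_iUnion_null
    intro z
    choose S hcard hcov using fun n =>
      AP10.iterate hmd hm1 hk hQpos hε1 hQε G hG (fun i => ((z i : ℤ) : ℝ)) one_pos n
    apply AP10.measure_zero_of_covers hd M N hN2 _ S
    · intro n
      simpa [hM_def, hN_def] using hcard n
    · intro n
      simpa [hN_def] using hcov n
    · exact hs'0
    · exact hMN
  rw [hs'] at hmu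
  exact absurd hmu (by simp)
end

section
/- Let d ≥ 1 and 1 ≤ m ≤ d be integers, let k ≥ 2 be an integer, and let ε ∈ (0, 1/√d) be such that √d/(2ε) is a positive integer. Let e = {e_1, …, e_m} be the first m standard basis vectors of ℝ^d, and suppose F ⊆ ℝ^d does not contain any (k,ε,e)-AP. Let Q be a closed axis-parallel cube of side length R > 0, subdivided into the (k√d/(2ε))^d congruent closed subcubes of side length 2εR/(k√d). Then at most (k√d/(2ε))^d · (1 − 1/k^m) of these subcubes intersect F. -/
lemma sum_single_coord_lt {m d : ℕ} (hmd : m ≤ d) (x : Fin m → ℕ)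
    (j : Fin d) (h : (j : ℕ) < m) :
    (∑ i, (x i : ℝ) • EuclideanSpace.single (Fin.castLE hmd i) (1 : ℝ)) j
      = (x ⟨j, h⟩ : ℝ) := by
  rw [WithLp.ofLp_sum, Finset.sum_apply]
  simp only [PiLp.smul_apply, EuclideanSpace.single_apply, smul_eq_mul, mul_ite, mul_one, mul_zero]
  rw [Finset.sum_eq_single (⟨(j : ℕ), h⟩ : Fin m)]
  · simp
  · intro i _ hi
    rw [if_neg]
    intro hc
    apply hi
    apply Fin.ext
    have : ((Fin.castLE hmd i : Fin d) : ℕ) = (j : ℕ) := by rw [← hc]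
    simpa using this
  · intro hj; exact absurd (Finset.mem_univ _) hj

lemma sum_single_coord_ge {m d : ℕ} (hmd : m ≤ d) (x : Fin m → ℕ)
    (j : Fin d) (h : ¬ (j : ℕ) < m) :
    (∑ i, (x i : ℝ) • EuclideanSpace.single (Fin.castLE hmd i) (1 : ℝ)) j = 0 := by
  rw [WithLp.ofLp_sum, Finset.sum_apply]
  simp only [PiLp.smul_apply, EuclideanSpace.single_apply, smul_eq_mul, mul_ite, mul_one, mul_zero]
  apply Finset.sum_eq_zero
  intro i _
  rw [if_neg]
  intro hc
  apply h
  have : ((Fin.castLE hmd i : Fin d) : ℕ) = (j : ℕ) := by rw [← hc]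
  simp at this; omega

lemma card_subtype_ge (d m : ℕ) (hmd : m ≤ d) :
    Fintype.card {j : Fin d // m ≤ (j : ℕ)} = d - m := by
  have e : {j : Fin d // m ≤ (j : ℕ)} ≃ Fin (d - m) :=
    { toFun := fun j => ⟨(j.1 : ℕ) - m, by have h1 := j.1.2; have h2 := j.2; omega⟩
      invFun := fun i => ⟨⟨(i : ℕ) + m, by have := i.2; omega⟩, by simp⟩
      left_inv := fun j => Subtype.ext (Fin.ext (by have := j.2; simp; omega))
      right_inv := fun i => Fin.ext (by simp) }
  rw [Fintype.card_congr e, Fintype.card_fin]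

set_option maxHeartbeats 1000000 in
theorem stmt_12 (d m : ℕ) (hd : 1 ≤ d) (hm1 : 1 ≤ m) (hmd : m ≤ d)
    (k : ℕ) (hk : 2 ≤ k) (ε : ℝ) (hε1 : 0 < ε) (hε2 : ε < 1 / Real.sqrt d)
    (n : ℕ) (hn : 0 < n) (hεn : Real.sqrt d / (2 * ε) = (n : ℝ))
    -- `e` consists of the first `m` standard basis vectors of `ℝ^d`
    (e : Fin m → EuclideanSpace ℝ (Fin d))
    (he : ∀ i : Fin m, e i = EuclideanSpace.single (Fin.castLE hmd i) (1 : ℝ))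
    (F : Set (EuclideanSpace ℝ (Fin d))) (hF : ¬ ContainsKAPd F k ε e)
    -- the cube `Q` of side length `R` with corner `a`, and its subdivision into
    -- `(k√d/(2ε))^d = (kn)^d` congruent subcubes of side length `2εR/(k√d) = R/(kn)`
    (a : EuclideanSpace ℝ (Fin d)) (R : ℝ) (hR : 0 < R)
    (Sub : (Fin d → Fin (k * n)) → Set (EuclideanSpace ℝ (Fin d)))
    (hSub : ∀ z, Sub z = {x | ∀ j : Fin d,
      x j ∈ Set.Icc (a j + (z j : ℝ) * (2 * ε * R / (k * Real.sqrt d)))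
        (a j + ((z j : ℝ) + 1) * (2 * ε * R / (k * Real.sqrt d)))}) :
    (Nat.card {z : Fin d → Fin (k * n) // (Sub z ∩ F).Nonempty} : ℝ) ≤
      ((k : ℝ) * Real.sqrt d / (2 * ε)) ^ d * (1 - 1 / (k : ℝ) ^ m) := by
  classical
  have hd0 : (0:ℝ) < Real.sqrt d := Real.sqrt_pos.mpr (by exact_mod_cast hd)
  have hk0 : 0 < k := by omega
  have hkR : (0:ℝ) < (k:ℝ) := by exact_mod_cast hk0
  have hnR : (0:ℝ) < (n:ℝ) := by exact_mod_cast hn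
  have hsd : Real.sqrt d = 2 * ε * n := by
    field_simp at hεn; linarith
  set s : ℝ := 2 * ε * R / ((k:ℝ) * Real.sqrt d) with hs_def
  have hs0 : 0 < s := by rw [hs_def]; positivity
  -- Main geometric step: every "group" contains a subcube disjoint from F.
  have main : ∀ w : Fin d → Fin (k*n), (∀ j : Fin d, (j : ℕ) < m → (w j : ℕ) < n) →
      ∃ z : Fin d → Fin (k*n),
        (∀ j : Fin d, (j : ℕ) < m → (z j : ℕ) % n = (w j : ℕ)) ∧
        (∀ j : Fin d, ¬ (j : ℕ) < m → z j = w j) ∧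
        ¬ (Sub z ∩ F).Nonempty := by
    intro w hw
    by_contra hcon
    push_neg at hcon
    apply hF
    set t : EuclideanSpace ℝ (Fin d) := WithLp.toLp 2 (fun j => a j + ((w j : ℝ) + 1/2) * s) with ht_def
    have htj : ∀ j : Fin d, t j = a j + ((w j : ℝ) + 1/2) * s := by
      intro j; simp only [ht_def, PiLp.toLp_apply]
    refine ⟨t, (n:ℝ) * s, mul_pos hnR hs0, ?_⟩
    intro x hx
    have hzb : ∀ j : Fin d, ∀ h : (j:ℕ) < m, (w j : ℕ) + n * x ⟨j, h⟩ < k * n := by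
      intro j h
      have h1 := hw j h
      have h2 : x ⟨j, h⟩ + 1 ≤ k := hx ⟨j, h⟩
      have e1 : n * (x ⟨j, h⟩ + 1) ≤ n * k := Nat.mul_le_mul_left _ h2
      rw [Nat.mul_add, Nat.mul_one] at e1
      have : k * n = n * k := Nat.mul_comm _ _
      linarith
    set zx : Fin d → Fin (k*n) :=
      fun j => if h : (j:ℕ) < m then ⟨(w j : ℕ) + n * x ⟨j, h⟩, hzb j h⟩ else w j with hzx_def
    have hz1 : ∀ j : Fin d, ∀ h : (j:ℕ) < m, (zx j : ℕ) = (w j : ℕ) + n * x ⟨j, h⟩ := by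
      intro j h
      simp only [hzx_def, dif_pos h]
    have hz2 : ∀ j : Fin d, ¬ (j:ℕ) < m → zx j = w j := by
      intro j h
      simp only [hzx_def, dif_neg h]
    obtain ⟨y, hyS, hyF⟩ := hcon zx
      (fun j h => by
        rw [hz1 j h, Nat.add_mul_mod_self_left, Nat.mod_eq_of_lt (hw j h)])
      (fun j hj => hz2 j (not_lt.mpr hj))
    refine ⟨y, hyF, ?_⟩
    rw [hSub] at hyS
    have hy : ∀ j : Fin d, y j ∈ Set.Icc (a j + (zx j : ℝ) * s) (a j + ((zx j : ℝ) + 1) * s) := hyS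
    set v : EuclideanSpace ℝ (Fin d) := ∑ i, (x i : ℝ) • e i with hv_def
    have hvj : ∀ j : Fin d, v j = if h : (j:ℕ) < m then ((x ⟨j, h⟩ : ℕ) : ℝ) else 0 := by
      intro j
      by_cases h : (j:ℕ) < m
      · rw [dif_pos h, hv_def]
        simp only [he]
        exact sum_single_coord_lt hmd x j h
      · rw [dif_neg h, hv_def]
        simp only [he]
        exact sum_single_coord_ge hmd x j h
    have hcoord : ∀ j : Fin d,
        |t j + ((n:ℝ) * s) * v j - y j| ≤ s / 2 := by
      intro j
      rw [htj j]
      have hyj := hy j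
      rw [Set.mem_Icc] at hyj
      by_cases h : (j:ℕ) < m
      · have h1 : (zx j : ℝ) = (w j : ℝ) + (n : ℝ) * ((x ⟨j, h⟩ : ℕ) : ℝ) := by
          rw [hz1 j h]; push_cast; ring
        rw [hvj j, dif_pos h]
        rw [h1] at hyj
        rw [abs_le]
        constructor <;> nlinarith [hyj.1, hyj.2]
      · rw [hvj j, dif_neg h]
        rw [hz2 j h] at hyj
        rw [abs_le]
        constructor <;> nlinarith [hyj.1, hyj.2]
    have happly : ∀ j : Fin d,
        (t + ((n:ℝ) * s) • v - y) j = t j + ((n:ℝ) * s) * v j - y j := by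
      intro j; simp
    rw [EuclideanSpace.norm_eq]
    have hb : ∀ j : Fin d,
        ‖(t + ((n:ℝ) * s) • v - y) j‖ ^ 2 ≤ (s/2) ^ 2 := by
      intro j
      rw [happly j, Real.norm_eq_abs]
      exact pow_le_pow_left₀ (abs_nonneg _) (hcoord j) 2
    calc Real.sqrt (∑ j, ‖(t + ((n:ℝ) * s) • v - y) j‖ ^ 2)
        ≤ Real.sqrt (∑ _j : Fin d, (s/2) ^ 2) :=
          Real.sqrt_le_sqrt (Finset.sum_le_sum fun j _ => hb j)
      _ = Real.sqrt ((d:ℝ) * (s/2) ^ 2) := by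
          rw [Finset.sum_const, Finset.card_univ, Fintype.card_fin, nsmul_eq_mul]
      _ = Real.sqrt d * (s/2) := by
          rw [Real.sqrt_mul (by positivity), Real.sqrt_sq (by positivity)]
      _ = ε * ((n:ℝ) * s) := by rw [hsd]; ring
  -- Counting step.
  have hnN : n ≤ k * n := Nat.le_mul_of_pos_left n hk0
  set wf : ((Fin m → Fin n) × ({j : Fin d // m ≤ (j : ℕ)} → Fin (k*n))) → (Fin d → Fin (k*n)) :=
    fun p j => if h : (j:ℕ) < m then ⟨(p.1 ⟨j, h⟩ : ℕ), lt_of_lt_of_le (p.1 ⟨j, h⟩).2 hnN⟩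
      else p.2 ⟨j, le_of_not_gt h⟩ with hwf_def
  have hwf1 : ∀ p, ∀ j : Fin d, ∀ h : (j:ℕ) < m, (wf p j : ℕ) = (p.1 ⟨j, h⟩ : ℕ) := by
    intro p j h; simp only [hwf_def, dif_pos h]
  have hwf2 : ∀ p, ∀ j : Fin d, ∀ h : ¬ (j:ℕ) < m, wf p j = p.2 ⟨j, le_of_not_gt h⟩ := by
    intro p j h; simp only [hwf_def, dif_neg h]
  have hwfb : ∀ p, ∀ j : Fin d, (j:ℕ) < m → (wf p j : ℕ) < n := by
    intro p j h; rw [hwf1 p j h]; exact (p.1 ⟨j, h⟩).2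
  set g : ((Fin m → Fin n) × ({j : Fin d // m ≤ (j : ℕ)} → Fin (k*n)))
      → {z : Fin d → Fin (k*n) // ¬ (Sub z ∩ F).Nonempty} :=
    fun p => ⟨(main (wf p) (hwfb p)).choose, (main (wf p) (hwfb p)).choose_spec.2.2⟩ with hg_def
  have hginj : Function.Injective g := by
    intro p q hpq
    have hz : (main (wf p) (hwfb p)).choose = (main (wf q) (hwfb q)).choose := by
      have := congrArg Subtype.val hpq
      simpa [hg_def] using this
    have hp1 := (main (wf p) (hwfb p)).choose_spec.1
    have hp2 := (main (wf p) (hwfb p)).choose_spec.2.1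
    have hq1 := (main (wf q) (hwfb q)).choose_spec.1
    have hq2 := (main (wf q) (hwfb q)).choose_spec.2.1
    have hwfe : wf p = wf q := by
      funext j
      by_cases h : (j:ℕ) < m
      · apply Fin.ext
        rw [← hp1 j h, ← hq1 j h, hz]
      · rw [← hp2 j h, ← hq2 j h, hz]
    obtain ⟨p1, p2⟩ := p
    obtain ⟨q1, q2⟩ := q
    have e1 : p1 = q1 := by
      funext i
      have hji : ((Fin.castLE hmd i : Fin d) : ℕ) < m := by simpa using i.2
      have hidx : (⟨((Fin.castLE hmd i : Fin d) : ℕ), hji⟩ : Fin m) = i := Fin.ext (by simp)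
      apply Fin.ext
      have h1 := hwf1 (p1, p2) (Fin.castLE hmd i) hji
      have h2 := hwf1 (q1, q2) (Fin.castLE hmd i) hji
      rw [hidx] at h1 h2
      exact h1.symm.trans ((congrArg Fin.val (congrFun hwfe (Fin.castLE hmd i))).trans h2)
    have e2 : p2 = q2 := by
      funext jj
      have hnl : ¬ ((jj.1 : ℕ) < m) := not_lt.mpr jj.2
      have h1 := hwf2 (p1, p2) jj.1 hnl
      have h2 := hwf2 (q1, q2) jj.1 hnl
      have hidx : (⟨jj.1, le_of_not_gt hnl⟩ : {j : Fin d // m ≤ (j : ℕ)}) = jj :=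
        Subtype.ext rfl
      rw [hidx] at h1 h2
      exact h1.symm.trans ((congrFun hwfe jj.1).trans h2)
    rw [e1, e2]
  have hcard1 : Fintype.card ((Fin m → Fin n) × ({j : Fin d // m ≤ (j : ℕ)} → Fin (k*n)))
      ≤ Fintype.card {z : Fin d → Fin (k*n) // ¬ (Sub z ∩ F).Nonempty} :=
    Fintype.card_le_of_injective g hginj
  have hcard2 : Fintype.card {z : Fin d → Fin (k*n) // ¬ (Sub z ∩ F).Nonempty}
      = (k*n)^d - Fintype.card {z : Fin d → Fin (k*n) // (Sub z ∩ F).Nonempty} := by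
    rw [Fintype.card_subtype_compl]
    congr 1
    rw [Fintype.card_fun, Fintype.card_fin, Fintype.card_fin]
  have hcard3 : Fintype.card {z : Fin d → Fin (k*n) // (Sub z ∩ F).Nonempty} ≤ (k*n)^d := by
    calc Fintype.card {z : Fin d → Fin (k*n) // (Sub z ∩ F).Nonempty}
        ≤ Fintype.card (Fin d → Fin (k*n)) := Fintype.card_subtype_le _
      _ = (k*n)^d := by rw [Fintype.card_fun, Fintype.card_fin, Fintype.card_fin]
  have hcardD : Fintype.card ((Fin m → Fin n) × ({j : Fin d // m ≤ (j : ℕ)} → Fin (k*n)))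
      = n^m * (k*n)^(d-m) := by
    rw [Fintype.card_prod, Fintype.card_fun, Fintype.card_fun, Fintype.card_fin,
      Fintype.card_fin, Fintype.card_fin, card_subtype_ge d m hmd]
  have hmain : Fintype.card {z : Fin d → Fin (k*n) // (Sub z ∩ F).Nonempty}
      + n^m * (k*n)^(d-m) ≤ (k*n)^d := by omega
  have hfinal : (Nat.card {z : Fin d → Fin (k*n) // (Sub z ∩ F).Nonempty} : ℝ)
      ≤ ((k:ℝ)*(n:ℝ))^d - (n:ℝ)^m * ((k:ℝ)*(n:ℝ))^(d-m) := by
    rw [Nat.card_eq_fintype_card]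
    have := (Nat.cast_le (α := ℝ)).mpr hmain
    push_cast at this
    linarith
  have hbase : (k:ℝ) * Real.sqrt d / (2*ε) = (k:ℝ) * (n:ℝ) := by
    rw [hsd]; field_simp
  rw [hbase]
  have hkm : (k:ℝ)^m ≠ 0 := by positivity
  have hexp : ((k:ℝ)*(n:ℝ))^d * (1 - 1/(k:ℝ)^m)
      = ((k:ℝ)*(n:ℝ))^d - (n:ℝ)^m * ((k:ℝ)*(n:ℝ))^(d-m) := by
    rw [mul_sub, mul_one]
    congr 1
    have hdm : d = m + (d - m) := by omega
    calc ((k:ℝ)*(n:ℝ))^d * (1/(k:ℝ)^m)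
        = ((k:ℝ)*(n:ℝ))^m * ((k:ℝ)*(n:ℝ))^(d-m) / (k:ℝ)^m := by
          rw [← pow_add, ← hdm]; ring
      _ = (n:ℝ)^m * ((k:ℝ)*(n:ℝ))^(d-m) := by
          rw [mul_pow]; field_simp
  rw [hexp]
  exact hfinal
end
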